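/- arXiv:1702.00431 — 10 statements merged into one kernel-verified Lean document; each statement's English description precedes it below -/
import Mathlib

section
/- Let n be a positive integer and let b_1, …, b_n be positive integers such that at least one of them is greater than 1. Let t_1 ≤ t_2 ≤ … ≤ t_n and t be positive real numbers such that t ≥ (1/2)·(t_1 + … + t_{n-1}) + t_n. Then t·(b_1·…·b_n) ≥ t_1·b_1 + t_2·b_2 + … + t_n·b_n. -/
/-- Let `b₁, …, bₙ` be positive integers, at least one of them greater
than `1`. Let `t₁ ≤ … ≤ tₙ` and `t` be positive reals with
`t ≥ ½(t₁ + … + t_{n-1}) + tₙ`. Then `t·(b₁⋯bₙ) ≥ t₁b₁ + … + tₙbₙ`.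
Here the `n` indices are modelled by `Fin (n + 1)` (so `n + 1 ≥ 1` indices). -/
theorem stmt0 (n : ℕ) (b : Fin (n + 1) → ℕ) (hb : ∀ i, 0 < b i)
    (hb1 : ∃ i, 1 < b i)
    (t : Fin (n + 1) → ℝ) (ht : ∀ i, 0 < t i) (hmono : Monotone t)
    (T : ℝ) (hT : 0 < T)
    (hineq : (1 / 2) * (∑ i : Fin n, t i.castSucc) + t (Fin.last n) ≤ T) :
    ∑ i : Fin (n + 1), t i * (b i : ℝ) ≤ T * ∏ i : Fin (n + 1), (b i : ℝ) := by
  obtain ⟨j, hj⟩ := hb1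
  set B : ℝ := ∏ i : Fin (n + 1), (b i : ℝ) with hBdef
  have hBpos : 0 < B := Finset.prod_pos (fun i _ => by exact_mod_cast hb i)
  -- key: 2 * b i ≤ ∏ b for i ≠ j
  have key : ∀ i : Fin (n + 1), i ≠ j → (2 : ℕ) * b i ≤ ∏ k, b k := by
    intro i hij
    rw [← Finset.mul_prod_erase Finset.univ b (Finset.mem_univ i)]
    have h2 : 2 ≤ ∏ k ∈ Finset.univ.erase i, b k := by
      calc (2 : ℕ) ≤ b j := hj
        _ ≤ ∏ k ∈ Finset.univ.erase i, b k :=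
          Finset.single_le_prod' (fun k _ => hb k)
            (Finset.mem_erase.mpr ⟨Ne.symm hij, Finset.mem_univ j⟩)
    calc 2 * b i = b i * 2 := mul_comm _ _
      _ ≤ b i * ∏ k ∈ Finset.univ.erase i, b k := Nat.mul_le_mul_left _ h2
  have keyR : ∀ i : Fin (n + 1), i ≠ j → (b i : ℝ) ≤ B / 2 := by
    intro i hij
    have := key i hij
    have : ((2 * b i : ℕ) : ℝ) ≤ ((∏ k, b k : ℕ) : ℝ) := by exact_mod_cast this
    rw [Nat.cast_prod] at this
    push_cast at this
    linarith
  have hjR : (b j : ℝ) ≤ B := by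
    have h := Finset.single_le_prod' (f := b) (fun k _ => hb k) (Finset.mem_univ j)
    have : ((b j : ℕ) : ℝ) ≤ ((∏ k, b k : ℕ) : ℝ) := by exact_mod_cast h
    rwa [Nat.cast_prod] at this
  -- split sums
  have hsplit : ∑ i ∈ Finset.univ.erase j, t i * (b i : ℝ) + t j * (b j : ℝ)
      = ∑ i : Fin (n + 1), t i * (b i : ℝ) :=
    Finset.sum_erase_add _ _ (Finset.mem_univ j)
  have hsplitT : ∑ i ∈ Finset.univ.erase j, t i + t j = ∑ i : Fin (n + 1), t i :=
    Finset.sum_erase_add _ _ (Finset.mem_univ j)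
  have hS : ∑ i : Fin (n + 1), t i = ∑ i : Fin n, t i.castSucc + t (Fin.last n) :=
    Fin.sum_univ_castSucc t
  have hjl : t j ≤ t (Fin.last n) := hmono (Fin.le_last j)
  have hbd : ∑ i ∈ Finset.univ.erase j, t i * (b i : ℝ)
      ≤ ∑ i ∈ Finset.univ.erase j, t i * (B / 2) := by
    apply Finset.sum_le_sum
    intro i hi
    exact mul_le_mul_of_nonneg_left (keyR i (Finset.mem_erase.mp hi).1) (ht i).le
  have hbd2 : t j * (b j : ℝ) ≤ t j * B :=
    mul_le_mul_of_nonneg_left hjR (ht j).le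
  have hsum : ∑ i ∈ Finset.univ.erase j, t i * (B / 2)
      = (∑ i ∈ Finset.univ.erase j, t i) * (B / 2) := by
    rw [Finset.sum_mul]
  set S := ∑ i : Fin (n + 1), t i with hSdef
  have hE : ∑ i ∈ Finset.univ.erase j, t i = S - t j := by linarith
  calc ∑ i : Fin (n + 1), t i * (b i : ℝ)
      = ∑ i ∈ Finset.univ.erase j, t i * (b i : ℝ) + t j * (b j : ℝ) := hsplit.symm
    _ ≤ (S - t j) * (B / 2) + t j * B := by
        rw [← hE, ← hsum]; linarith
    _ ≤ T * B := by nlinarith [hBpos, hjl, hineq, hS]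
end

section
/- Let α : V → ℕ be a WP-weight system on a set V with exactly three elements, such that the associated coprimality graph is connected and no vertex of V is weak. Then lcm_{v ∈ V} α(v) ≥ (∑_{v ∈ V} α(v)) − 1; moreover lcm_{v ∈ V} α(v) ≥ ∑_{v ∈ V} α(v) unless the multiset of values {α(v) : v ∈ V} equals {6, 10, 15}. -/
/-- A WP-weight system: every weight is at least `2`, and any three weights at
distinct vertices are (setwise) coprime. -/
def WPSystem {V : Type} (α : V → ℕ) : Prop :=
  (∀ v, 2 ≤ α v) ∧
    ∀ v₁ v₂ v₃ : V, v₁ ≠ v₂ → v₁ ≠ v₃ → v₂ ≠ v₃ →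
      Nat.gcd (Nat.gcd (α v₁) (α v₂)) (α v₃) = 1

/-- The coprimality graph of a weight system: distinct vertices are adjacent iff
their weights are not coprime. -/
def coprimeGraph {V : Type} (α : V → ℕ) : SimpleGraph V where
  Adj v w := v ≠ w ∧ 1 < Nat.gcd (α v) (α w)
  symm := ⟨fun v w h => ⟨h.1.symm, by rw [Nat.gcd_comm]; exact h.2⟩⟩
  loopless := ⟨fun v h => h.1 rfl⟩

/-- A vertex `v` is weak if it is adjacent to some vertex `w` with `α v ∣ α w`. -/
def IsWeak {V : Type} (α : V → ℕ) (v : V) : Prop :=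
  ∃ w, w ≠ v ∧ 1 < Nat.gcd (α v) (α w) ∧ α v ∣ α w

theorem wp_boundz (x y z : ℕ) (hx : 2 ≤ x) (hy : 2 ≤ y) (hxy : x ≠ y)
    (h : x*y*z < x*y + y*z + z*x) : z ≤ 5 := by
  by_contra hz
  push_neg at hz
  have hz6 : 6 ≤ z := hz
  have h5 : 6*x + 6*y ≤ 5*(x*y) := by
    rcases Nat.lt_or_ge x 3 with h' | h'
    · have : x = 2 := by omega
      subst this; omega
    · rcases Nat.lt_or_ge y 3 with h'' | h''
      · have : y = 2 := by omega
        subst this; omega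
      · nlinarith
  nlinarith [Nat.mul_le_mul_left z h5, Nat.mul_le_mul_right (x*y) hz6]

theorem wp_classify (x y z : ℕ) (hx : 2 ≤ x) (hy : 2 ≤ y) (hz : 2 ≤ z)
    (hxy : x ≠ y) (hxz : x ≠ z) (hyz : y ≠ z)
    (h : x*y*z < x*y + y*z + z*x) :
    (x = 2 ∧ y = 3 ∧ z = 4) ∨ (x = 2 ∧ y = 4 ∧ z = 3) ∨ (x = 3 ∧ y = 2 ∧ z = 4) ∨
    (x = 3 ∧ y = 4 ∧ z = 2) ∨ (x = 4 ∧ y = 2 ∧ z = 3) ∨ (x = 4 ∧ y = 3 ∧ z = 2) ∨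
    (x = 2 ∧ y = 3 ∧ z = 5) ∨ (x = 2 ∧ y = 5 ∧ z = 3) ∨ (x = 3 ∧ y = 2 ∧ z = 5) ∨
    (x = 3 ∧ y = 5 ∧ z = 2) ∨ (x = 5 ∧ y = 2 ∧ z = 3) ∨ (x = 5 ∧ y = 3 ∧ z = 2) := by
  have bx : x ≤ 5 := by
    apply wp_boundz y z x hy hz hyz
    linarith [h, show y*z*x = x*y*z from by ring, show y*z + z*x + x*y = x*y + y*z + z*x from by ring]
  have by' : y ≤ 5 := by
    apply wp_boundz x z y hx hz hxz
    linarith [h, show x*z*y = x*y*z from by ring, show x*z + z*y + y*x = x*y + y*z + z*x from by ring]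
  have bz : z ≤ 5 := wp_boundz x y z hx hy hxy h
  have hx4 : x = 2 ∨ x = 3 ∨ x = 4 ∨ x = 5 := by omega
  have hy4 : y = 2 ∨ y = 3 ∨ y = 4 ∨ y = 5 := by omega
  have hz4 : z = 2 ∨ z = 3 ∨ z = 4 ∨ z = 5 := by omega
  clear bx by' bz hx hy hz
  rcases hx4 with rfl|rfl|rfl|rfl <;> rcases hy4 with rfl|rfl|rfl|rfl <;>
    rcases hz4 with rfl|rfl|rfl|rfl <;> revert h hxy hxz hyz <;> decide

/-- In the `(2,3,5)` case the weights are forced to be `15, 10, 6`. -/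
theorem wp_235 (a b c L : ℕ) (h2 : a * 2 = L) (h3 : b * 3 = L) (h5 : c * 5 = L)
    (hco : ∀ m : ℕ, m ∣ a → m ∣ b → m ∣ c → m = 1) : a = 15 ∧ b = 10 ∧ c = 6 := by
  have hd2 : 2 ∣ L := ⟨a, by omega⟩
  have hd3 : 3 ∣ L := ⟨b, by omega⟩
  have hd5 : 5 ∣ L := ⟨c, by omega⟩
  have hd6 : 6 ∣ L := Nat.Coprime.mul_dvd_of_dvd_of_dvd (by norm_num) hd2 hd3
  have hd30 : 30 ∣ L := Nat.Coprime.mul_dvd_of_dvd_of_dvd (by norm_num) hd6 hd5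
  obtain ⟨k, hk⟩ := hd30
  have hk1 : k = 1 := hco k ⟨15, by omega⟩ ⟨10, by omega⟩ ⟨6, by omega⟩
  omega

/-- The arithmetic core of the statement. -/
theorem wp_core (a b c : ℕ) (ha : 2 ≤ a) (hb : 2 ≤ b) (hc : 2 ≤ c)
    (hco : ∀ m : ℕ, m ∣ a → m ∣ b → m ∣ c → m = 1)
    (hab : ¬ a ∣ b) (hba : ¬ b ∣ a) (hac : ¬ a ∣ c) (hca : ¬ c ∣ a)
    (hbc : ¬ b ∣ c) (hcb : ¬ c ∣ b) :
    a + b + c - 1 ≤ Nat.lcm a (Nat.lcm b c) ∧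
      (Nat.lcm a (Nat.lcm b c) < a + b + c → ({a, b, c} : Multiset ℕ) = {6, 10, 15}) := by
  set L := Nat.lcm a (Nat.lcm b c) with hLdef
  have haL : a ∣ L := Nat.dvd_lcm_left _ _
  have hbL : b ∣ L := (Nat.dvd_lcm_left b c).trans (Nat.dvd_lcm_right a _)
  have hcL : c ∣ L := (Nat.dvd_lcm_right b c).trans (Nat.dvd_lcm_right a _)
  have hL0 : 0 < L := Nat.pos_of_ne_zero
    (Nat.lcm_ne_zero (by omega) (Nat.lcm_ne_zero (by omega) (by omega)))
  obtain ⟨x, hx⟩ := haL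
  obtain ⟨y, hy⟩ := hbL
  obtain ⟨z, hz⟩ := hcL
  have hx2 : 2 ≤ x := by
    rcases Nat.lt_or_ge x 2 with h | h
    · interval_cases x
      · omega
      · refine absurd ⟨y, ?_⟩ hba
        have hLa : L = a := by omega
        rw [← hLa]; exact hy
    · exact h
  have hy2 : 2 ≤ y := by
    rcases Nat.lt_or_ge y 2 with h | h
    · interval_cases y
      · omega
      · refine absurd ⟨x, ?_⟩ hab
        have hLb : L = b := by omega
        rw [← hLb]; exact hx
    · exact h
  have hz2 : 2 ≤ z := by
    rcases Nat.lt_or_ge z 2 with h | h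
    · interval_cases z
      · omega
      · refine absurd ⟨x, ?_⟩ hac
        have hLc : L = c := by omega
        rw [← hLc]; exact hx
    · exact h
  have hxy : x ≠ y := by
    intro h; subst h
    exact hab (by have : a = b := by nlinarith [hx, hy]
                  exact this ▸ dvd_rfl)
  have hxz : x ≠ z := by
    intro h; subst h
    exact hac (by have : a = c := by nlinarith [hx, hz]
                  exact this ▸ dvd_rfl)
  have hyz : y ≠ z := by
    intro h; subst h
    exact hbc (by have : b = c := by nlinarith [hy, hz]
                  exact this ▸ dvd_rfl)
  by_cases hsum : a + b + c ≤ L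
  · exact ⟨by omega, fun h => absurd hsum (by omega)⟩
  · push_neg at hsum
    have key : x*y*z < x*y + y*z + z*x := by
      have h1 : L * (x*y*z) < L * (x*y + y*z + z*x) := by
        calc L * (x*y*z) < (a+b+c) * (x*y*z) :=
              (Nat.mul_lt_mul_right (by positivity)).mpr hsum
          _ = (a*x)*(y*z) + (b*y)*(x*z) + (c*z)*(x*y) := by ring
          _ = L*(y*z) + L*(x*z) + L*(x*y) := by rw [← hx, ← hy, ← hz]
          _ = L * (x*y + y*z + z*x) := by ring
      exact Nat.lt_of_mul_lt_mul_left h1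
    have hxL : a * x = L := hx.symm
    have hyL : b * y = L := hy.symm
    have hzL : c * z = L := hz.symm
    rcases wp_classify x y z hx2 hy2 hz2 hxy hxz hyz key with
      ⟨rfl, rfl, rfl⟩ | ⟨rfl, rfl, rfl⟩ | ⟨rfl, rfl, rfl⟩ | ⟨rfl, rfl, rfl⟩ |
      ⟨rfl, rfl, rfl⟩ | ⟨rfl, rfl, rfl⟩ | ⟨rfl, rfl, rfl⟩ | ⟨rfl, rfl, rfl⟩ |
      ⟨rfl, rfl, rfl⟩ | ⟨rfl, rfl, rfl⟩ | ⟨rfl, rfl, rfl⟩ | ⟨rfl, rfl, rfl⟩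
    -- (2,3,4) type cases: a contradiction with non-divisibility
    · exact absurd ⟨2, by omega⟩ hca
    · exact absurd ⟨2, by omega⟩ hba
    · exact absurd ⟨2, by omega⟩ hcb
    · exact absurd ⟨2, by omega⟩ hbc
    · exact absurd ⟨2, by omega⟩ hab
    · exact absurd ⟨2, by omega⟩ hac
    -- (2,3,5) type cases
    · obtain ⟨ha', hb', hc'⟩ := wp_235 a b c L hxL hyL hzL hco
      subst ha'; subst hb'; subst hc'
      exact ⟨by omega, fun _ => by decide⟩
    · obtain ⟨ha', hc', hb'⟩ := wp_235 a c b L hxL hzL hyL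
        (fun m h1 h2 h3 => hco m h1 h3 h2)
      subst ha'; subst hb'; subst hc'
      exact ⟨by omega, fun _ => by decide⟩
    · obtain ⟨hb', ha', hc'⟩ := wp_235 b a c L hyL hxL hzL
        (fun m h1 h2 h3 => hco m h2 h1 h3)
      subst ha'; subst hb'; subst hc'
      exact ⟨by omega, fun _ => by decide⟩
    · obtain ⟨hc', ha', hb'⟩ := wp_235 c a b L hzL hxL hyL
        (fun m h1 h2 h3 => hco m h2 h3 h1)
      subst ha'; subst hb'; subst hc'
      exact ⟨by omega, fun _ => by decide⟩
    · obtain ⟨hb', hc', ha'⟩ := wp_235 b c a L hyL hzL hxL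
        (fun m h1 h2 h3 => hco m h3 h1 h2)
      subst ha'; subst hb'; subst hc'
      exact ⟨by omega, fun _ => by decide⟩
    · obtain ⟨hc', hb', ha'⟩ := wp_235 c b a L hzL hyL hxL
        (fun m h1 h2 h3 => hco m h3 h2 h1)
      subst ha'; subst hb'; subst hc'
      exact ⟨by omega, fun _ => by decide⟩

/-- a WP-weight system on a three-element set, with connected
coprimality graph and no weak vertex, satisfies `lcm ≥ Σ − 1`; moreover
`lcm ≥ Σ` unless the multiset of weights is `{6, 10, 15}`. -/
theorem stmt3 {V : Type} [Fintype V] [DecidableEq V] (α : V → ℕ)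
    (hcard : Fintype.card V = 3)
    (hWP : WPSystem α)
    (hconn : (coprimeGraph α).Connected)
    (hweak : ∀ v : V, ¬ IsWeak α v) :
    (∑ v : V, α v) - 1 ≤ Finset.univ.lcm α ∧
      (Finset.univ.val.map α ≠ ({6, 10, 15} : Multiset ℕ) →
        ∑ v : V, α v ≤ Finset.univ.lcm α) := by
  have e : V ≃ Fin 3 := Fintype.equivFinOfCardEq hcard
  set v0 := e.symm 0 with hv0
  set v1 := e.symm 1 with hv1
  set v2 := e.symm 2 with hv2
  have d01 : v0 ≠ v1 := fun h => absurd (e.symm.injective h) (by decide)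
  have d02 : v0 ≠ v2 := fun h => absurd (e.symm.injective h) (by decide)
  have d12 : v1 ≠ v2 := fun h => absurd (e.symm.injective h) (by decide)
  have huniv : (Finset.univ : Finset V) = {v0, v1, v2} := by
    symm
    apply Finset.eq_univ_of_card
    rw [Finset.card_insert_of_notMem (by simp [d01, d02]),
      Finset.card_insert_of_notMem (by simp [d12]), Finset.card_singleton, hcard]
  have hnd : ∀ v w : V, v ≠ w → ¬ α v ∣ α w := by
    intro v w hvw hdvd
    refine hweak v ⟨w, hvw.symm, ?_, hdvd⟩
    rw [Nat.gcd_eq_left hdvd]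
    have := hWP.1 v
    omega
  have hco : ∀ m : ℕ, m ∣ α v0 → m ∣ α v1 → m ∣ α v2 → m = 1 := by
    intro m h1 h2 h3
    have hgcd := hWP.2 v0 v1 v2 d01 d02 d12
    exact Nat.dvd_one.mp (hgcd ▸ Nat.dvd_gcd (Nat.dvd_gcd h1 h2) h3)
  obtain ⟨H1, H2⟩ := wp_core (α v0) (α v1) (α v2) (hWP.1 v0) (hWP.1 v1) (hWP.1 v2) hco
    (hnd v0 v1 d01) (hnd v1 v0 d01.symm) (hnd v0 v2 d02) (hnd v2 v0 d02.symm)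
    (hnd v1 v2 d12) (hnd v2 v1 d12.symm)
  have hsum : ∑ v : V, α v = α v0 + (α v1 + α v2) := by
    rw [huniv, Finset.sum_insert (by simp [d01, d02]),
      Finset.sum_insert (by simp [d12]), Finset.sum_singleton]
  have hlcm : Finset.univ.lcm α = Nat.lcm (α v0) (Nat.lcm (α v1) (α v2)) := by
    rw [huniv, Finset.lcm_insert, Finset.lcm_insert, Finset.lcm_singleton,
      lcm_eq_nat_lcm, lcm_eq_nat_lcm, normalize_eq]
  have hms : Finset.univ.val.map α = {α v0, α v1, α v2} := by
    rw [huniv]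
    rw [show ({v0, v1, v2} : Finset V).val = (v0 ::ₘ v1 ::ₘ {v2} : Multiset V) by
      rw [Finset.insert_val_of_notMem (by simp [d01, d02]),
        Finset.insert_val_of_notMem (by simp [d12]), Finset.singleton_val]]
    simp [Multiset.insert_eq_cons]
  constructor
  · rw [hsum, hlcm]
    omega
  · intro hne
    by_contra hlt
    push_neg at hlt
    apply hne
    rw [hms]
    apply H2
    rw [hsum, hlcm] at hlt
    omega
end

section
/- Let α : V → ℕ be a WP-weight system on a finite set V with at least 4 elements, such that the associated coprimality graph is connected, no vertex of V is weak, and every vertex is incident to at least two edges of the coprimality graph. Then lcm_{v ∈ V} α(v) ≥ ∑_{v ∈ V} α(v). -/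
lemma key_pow_ineq {p q r : ℕ} (hp : p ≤ r) (hq : q ≤ r) (hr : r ≤ p + q) :
    2^p + 2^q ≤ 2^r + 2^(p + q - r) := by
  obtain ⟨s, rfl⟩ := Nat.exists_eq_add_of_le hp
  have hs : s ≤ q := by omega
  obtain ⟨t, rfl⟩ := Nat.exists_eq_add_of_le hs
  have ht : t ≤ p := by omega
  have h1 : p + (s+t) - (p+s) = t := by omega
  rw [h1, pow_add, pow_add]
  have hT : (2:ℕ)^t ≤ 2^p := Nat.pow_le_pow_right (by norm_num) ht
  have hB : (1:ℕ) ≤ 2^s := Nat.one_le_two_pow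
  nlinarith [hT, hB]

lemma sum_two_pow_le {ι : Type*} [DecidableEq ι] (s : Finset ι) (e : ι → ℕ) (C : ℕ)
    (h : ∀ i ∈ s, e i ≤ C) :
    ∑ i ∈ s, 2^(e i) ≤ 2^(min (∑ i ∈ s, e i) C) + 2^((∑ i ∈ s, e i) - C) + (s.card - 1) := by
  induction s using Finset.induction_on with
  | empty => simp
  | @insert a s' ha ih =>
    have hha : e a ≤ C := h a (Finset.mem_insert_self a s')
    have h' : ∀ i ∈ s', e i ≤ C := fun i hi => h i (Finset.mem_insert_of_mem hi)
    rw [Finset.sum_insert ha, Finset.sum_insert ha, Finset.card_insert_of_notMem ha]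
    rcases Finset.eq_empty_or_nonempty s' with rfl | hne
    · simp [Nat.min_eq_left hha, Nat.sub_eq_zero_of_le hha]
    · have hcard : 1 ≤ s'.card := Finset.card_pos.mpr hne
      set S := ∑ i ∈ s', e i with hS
      have key : 2^(e a) + 2^(min S C) + 2^(S - C) ≤
          2^(min (e a + S) C) + 2^((e a + S) - C) + 1 := by
        rcases le_or_gt C S with hCS | hSC
        · have h1 : min S C = C := min_eq_right hCS
          have h2 : min (e a + S) C = C := min_eq_right (by omega)
          rw [h1, h2]
          have := key_pow_ineq (p := e a) (q := S - C) (r := e a + (S - C))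
            (by omega) (by omega) (by omega)
          have he : e a + (S - C) - (e a + (S - C)) = 0 := by omega
          rw [he] at this
          have he2 : e a + S - C = e a + (S - C) := by omega
          rw [he2]
          omega
        · rcases le_or_gt C (e a + S) with hC2 | hC2
          · have h1 : min S C = S := min_eq_left (le_of_lt hSC)
            have h2 : min (e a + S) C = C := min_eq_right hC2
            have h3 : S - C = 0 := by omega
            rw [h1, h2, h3]
            have := key_pow_ineq (p := e a) (q := S) (r := C) hha (le_of_lt hSC) hC2
            omega
          · have h1 : min S C = S := min_eq_left (le_of_lt hSC)
            have h2 : min (e a + S) C = e a + S := min_eq_left (by omega)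
            have h3 : S - C = 0 := by omega
            have h4 : e a + S - C = 0 := by omega
            rw [h1, h2, h3, h4]
            have := key_pow_ineq (p := e a) (q := S) (r := e a + S) (by omega) (by omega) le_rfl
            have h5 : e a + S - (e a + S) = 0 := by omega
            rw [h5] at this
            omega
      have := ih h'
      omega

lemma aux_pow_lin (k : ℕ) : k + 4 ≤ 2^(k+2) := by
  induction k with
  | zero => norm_num
  | succ k ih =>
    have : (2:ℕ)^(k+1+2) = 2 * 2^(k+2) := by ring
    omega

lemma key_numeric {V : Type} [Fintype V] [DecidableEq V] (deg : V → ℕ) (m : ℕ)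
    (hm : 4 ≤ Fintype.card V)
    (hsum : ∑ v, deg v = 2 * m)
    (hlow : ∀ v, 2 ≤ deg v)
    (hhigh : ∀ v, deg v + 2 ≤ m) :
    ∑ v, 2^(deg v) ≤ 2^m := by
  set n := Fintype.card V with hn
  have hmn : n ≤ m := by
    have h1 : 2 * n ≤ ∑ v, deg v := by
      calc 2 * n = ∑ _v : V, 2 := by simp [hn, mul_comm, Finset.sum_const]
        _ ≤ ∑ v, deg v := Finset.sum_le_sum (fun v _ => hlow v)
    omega
  set e : V → ℕ := fun v => deg v - 2 with he
  have hse : ∑ v, e v = 2 * m - 2 * n := by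
    have := Finset.sum_tsub_distrib (s := (Finset.univ : Finset V)) (f := deg)
      (g := fun _ => 2) (fun v _ => hlow v)
    simp only [he]
    rw [this, hsum]
    simp [hn, mul_comm, Finset.sum_const]
  have hdeg_eq : ∀ v, deg v = e v + 2 := fun v => by have := hlow v; simp [he]; omega
  have hsplit : ∑ v, 2^(deg v) = 4 * ∑ v, 2^(e v) := by
    rw [Finset.mul_sum]
    refine Finset.sum_congr rfl (fun v _ => ?_)
    rw [hdeg_eq v, pow_add]
    ring
  rw [hsplit]
  rcases eq_or_lt_of_le (show 4 ≤ m by omega) with hEq | hlt'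
  · -- m = 4, so n = 4 and all degrees are 2
    have hn4 : n = 4 := by omega
    have hzero : ∑ v, e v = 0 := by omega
    have hez : ∀ v ∈ (Finset.univ : Finset V), e v = 0 :=
      Finset.sum_eq_zero_iff.mp hzero
    have : ∑ v, 2^(e v) = 4 := by
      calc ∑ v, 2^(e v) = ∑ _v : V, 1 :=
            Finset.sum_congr rfl (fun v hv => by rw [hez v hv]; norm_num)
        _ = n := by simp [hn]
        _ = 4 := hn4
    rw [this, ← hEq]
    norm_num
  · -- m ≥ 5
    have hbound := sum_two_pow_le (Finset.univ : Finset V) e (m - 4)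
      (fun v _ => by have := hhigh v; simp only [he]; omega)
    have h1 : (2:ℕ)^(min (∑ v, e v) (m-4)) ≤ 2^(m-4) :=
      Nat.pow_le_pow_right (by norm_num) (min_le_right _ _)
    have h2 : (2:ℕ)^((∑ v, e v) - (m-4)) ≤ 2^(m-4) :=
      Nat.pow_le_pow_right (by norm_num) (by omega)
    have hcardn : (Finset.univ : Finset V).card = n := by simp [hn]
    have h3 : ∑ v, 2^(e v) ≤ 2^(m-4) + 2^(m-4) + (m-1) := by
      have := hbound
      rw [hcardn] at this
      omega
    have h4 : m - 1 ≤ 2 * 2^(m-4) := by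
      have := aux_pow_lin (m - 5)
      have hexp : m - 5 + 2 = m - 3 := by omega
      rw [hexp] at this
      have : (2:ℕ)^(m-3) = 2 * 2^(m-4) := by
        rw [← pow_succ']
        congr 1
        omega
      omega
    have h5 : (2:ℕ)^m = 16 * 2^(m-4) := by
      have : (2:ℕ)^m = 2^(4 + (m-4)) := by congr 1; omega
      rw [this, pow_add]
      norm_num
    omega

lemma prod_dvd_of_pairwise_coprime {ι : Type*} [DecidableEq ι] (s : Finset ι) (f : ι → ℕ)
    (N : ℕ) (hcop : ∀ i ∈ s, ∀ j ∈ s, i ≠ j → Nat.Coprime (f i) (f j))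
    (hdvd : ∀ i ∈ s, f i ∣ N) : (∏ i ∈ s, f i) ∣ N := by
  induction s using Finset.induction_on with
  | empty => simpa using one_dvd N
  | @insert a s' ha ih =>
    rw [Finset.prod_insert ha]
    have hcopa : Nat.Coprime (f a) (∏ i ∈ s', f i) :=
      Nat.Coprime.prod_right (fun i hi =>
        hcop a (Finset.mem_insert_self a s') i (Finset.mem_insert_of_mem hi)
          (by rintro rfl; exact ha hi))
    exact hcopa.mul_dvd_of_dvd_of_dvd (hdvd a (Finset.mem_insert_self a s'))
      (ih (fun i hi j hj hij =>
            hcop i (Finset.mem_insert_of_mem hi) j (Finset.mem_insert_of_mem hj) hij)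
          (fun i hi => hdvd i (Finset.mem_insert_of_mem hi)))

/-- a WP-weight system on a set with at least `4` elements, with
connected coprimality graph, no weak vertex, and every vertex incident to at
least two edges, satisfies `lcm ≥ Σ`. -/
theorem stmt4 {V : Type} [Fintype V] [DecidableEq V] (α : V → ℕ)
    (hcard : 4 ≤ Fintype.card V)
    (hWP : WPSystem α)
    (hconn : (coprimeGraph α).Connected)
    (hweak : ∀ v : V, ¬ IsWeak α v)
    (hdeg : ∀ v : V,
      2 ≤ (Finset.univ.filter (fun w => w ≠ v ∧ 1 < Nat.gcd (α v) (α w))).card) :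
    ∑ v : V, α v ≤ Finset.univ.lcm α := by
  classical
  obtain ⟨hα2, h3wp⟩ := hWP
  set L := Finset.univ.lcm α with hL
  have hL0 : 0 < L := by
    rcases Nat.eq_zero_or_pos L with h0 | h
    · exfalso
      obtain ⟨v, _, hv⟩ := Finset.lcm_eq_zero_iff.mp h0
      have := hα2 v
      omega
    · exact h
  set ord : V → ℕ := fun v => ((Fintype.equivFin V) v : ℕ) with hordd
  have hord_inj : ∀ {a b : V}, ord a = ord b → a = b := by
    intro a b h
    exact (Fintype.equivFin V).injective (Fin.val_injective h)
  set E : Finset (V × V) := Finset.univ.filter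
      (fun p => 1 < Nat.gcd (α p.1) (α p.2) ∧ ord p.1 < ord p.2) with hE
  set d : V × V → ℕ := fun p => Nat.gcd (α p.1) (α p.2) with hd
  set m := E.card with hm
  have hmemE : ∀ p : V × V, p ∈ E ↔ 1 < d p ∧ ord p.1 < ord p.2 := by
    intro p
    simp [hE, hd]
  have hne : ∀ p ∈ E, p.1 ≠ p.2 := by
    intro p hp heq
    have := ((hmemE p).mp hp).2
    rw [heq] at this
    omega
  have hdvd1 : ∀ p : V × V, d p ∣ α p.1 := fun p => Nat.gcd_dvd_left _ _
  have hdvd2 : ∀ p : V × V, d p ∣ α p.2 := fun p => Nat.gcd_dvd_right _ _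
  have key3 : ∀ (k : ℕ) (x y z : V), x ≠ y → x ≠ z → y ≠ z →
      k ∣ α x → k ∣ α y → k ∣ α z → k = 1 := by
    intro k x y z hxy hxz hyz hx hy hz
    have hdv : k ∣ Nat.gcd (Nat.gcd (α x) (α y)) (α z) :=
      Nat.dvd_gcd (Nat.dvd_gcd hx hy) hz
    rw [h3wp x y z hxy hxz hyz] at hdv
    exact Nat.dvd_one.mp hdv
  have hcop : ∀ p ∈ E, ∀ q ∈ E, p ≠ q → Nat.Coprime (d p) (d q) := by
    intro p hp q hq hpq
    set k := Nat.gcd (d p) (d q) with hk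
    have hka : k ∣ α p.1 := (Nat.gcd_dvd_left _ _).trans (hdvd1 p)
    have hkb : k ∣ α p.2 := (Nat.gcd_dvd_left _ _).trans (hdvd2 p)
    have hkc : k ∣ α q.1 := (Nat.gcd_dvd_right _ _).trans (hdvd1 q)
    have hkd : k ∣ α q.2 := (Nat.gcd_dvd_right _ _).trans (hdvd2 q)
    have hab : p.1 ≠ p.2 := hne p hp
    have hcd : q.1 ≠ q.2 := hne q hq
    show k = 1
    by_cases h1 : p.1 = q.1
    · have hbd : p.2 ≠ q.2 := fun h2 => hpq (Prod.ext h1 h2)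
      exact key3 k p.1 p.2 q.2 hab (h1 ▸ hcd) hbd hka hkb hkd
    · by_cases h2 : p.2 = q.2
      · have hbc : p.2 ≠ q.1 := fun h => hcd (by rw [← h, h2])
        exact key3 k p.1 p.2 q.1 hab h1 hbc hka hkb hkc
      · by_cases h4 : p.1 = q.2
        · have hbc : p.2 ≠ q.1 := by
            intro h
            have o1 : ord p.1 < ord p.2 := ((hmemE p).mp hp).2
            have o2 : ord q.1 < ord q.2 := ((hmemE q).mp hq).2
            rw [h4, h] at o1
            omega
          exact key3 k p.1 p.2 q.1 hab h1 hbc hka hkb hkc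
        · exact key3 k p.1 q.1 q.2 h1 h4 hcd hka hkc hkd
  have hvcop : ∀ (v : V), ∀ p ∈ E, p.1 ≠ v → p.2 ≠ v → Nat.Coprime (α v) (d p) := by
    intro v p hp h1 h2
    set k := Nat.gcd (α v) (d p) with hk
    have hkv : k ∣ α v := Nat.gcd_dvd_left _ _
    have hk1 : k ∣ α p.1 := (Nat.gcd_dvd_right _ _).trans (hdvd1 p)
    have hk2 : k ∣ α p.2 := (Nat.gcd_dvd_right _ _).trans (hdvd2 p)
    exact key3 k v p.1 p.2 (Ne.symm h1) (Ne.symm h2) (hne p hp) hkv hk1 hk2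
  set degE : V → ℕ := fun v => (E.filter (fun p => p.1 = v ∨ p.2 = v)).card with hdegE
  set Cv : V → Finset (V × V) := fun v => E.filter (fun p => ¬(p.1 = v ∨ p.2 = v)) with hCv
  have hsplitv : ∀ v, degE v + (Cv v).card = m := by
    intro v
    simp only [hdegE, hCv, hm]
    exact Finset.card_filter_add_card_filter_not _
  -- the per-vertex divisibility bound
  have hstep : ∀ v, α v * 2^((Cv v).card) ≤ L := by
    intro v
    have hPdvd : (∏ p ∈ Cv v, d p) ∣ L := by
      refine prod_dvd_of_pairwise_coprime _ _ _ ?_ ?_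
      · intro p hp q hq hpq
        exact hcop p (Finset.filter_subset _ _ hp) q (Finset.filter_subset _ _ hq) hpq
      · intro p _
        exact (hdvd1 p).trans (Finset.dvd_lcm (Finset.mem_univ _))
    have hPcop : Nat.Coprime (α v) (∏ p ∈ Cv v, d p) := by
      refine Nat.Coprime.prod_right (fun p hp => ?_)
      obtain ⟨hpE, hnp⟩ := Finset.mem_filter.mp hp
      push_neg at hnp
      exact hvcop v p hpE hnp.1 hnp.2
    have hmul : α v * (∏ p ∈ Cv v, d p) ∣ L :=
      hPcop.mul_dvd_of_dvd_of_dvd (Finset.dvd_lcm (Finset.mem_univ _)) hPdvd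
    have hPge : 2^((Cv v).card) ≤ ∏ p ∈ Cv v, d p := by
      refine Finset.pow_card_le_prod _ _ _ (fun p hp => ?_)
      have := ((hmemE p).mp (Finset.filter_subset _ _ hp)).1
      omega
    calc α v * 2^((Cv v).card) ≤ α v * ∏ p ∈ Cv v, d p := Nat.mul_le_mul_left _ hPge
      _ ≤ L := Nat.le_of_dvd hL0 hmul
  -- minimum degree 2
  have hdeg2 : ∀ v, 2 ≤ degE v := by
    intro v
    refine le_trans (hdeg v) ?_
    refine Finset.card_le_card_of_injOn
      (fun w => if ord v < ord w then (v, w) else (w, v)) ?_ ?_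
    · intro w hw
      obtain ⟨-, hwv, hgcd⟩ :
          w ∈ Finset.univ ∧ w ≠ v ∧ 1 < Nat.gcd (α v) (α w) := by
        simpa using hw
      by_cases hlt : ord v < ord w
      · simp only [if_pos hlt]
        refine Finset.mem_filter.mpr ⟨(hmemE (v, w)).mpr ⟨?_, hlt⟩, Or.inl rfl⟩
        simpa [hd] using hgcd
      · have hlt' : ord w < ord v := by
          rcases lt_or_eq_of_le (not_lt.mp hlt) with h | h
          · exact h
          · exact absurd (hord_inj h) hwv
        simp only [if_neg hlt]
        refine Finset.mem_filter.mpr ⟨(hmemE (w, v)).mpr ⟨?_, hlt'⟩, Or.inr rfl⟩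
        simp only [hd]
        rw [Nat.gcd_comm]
        exact hgcd
    · intro w1 hw1 w2 hw2 heq
      have hv1 : w1 ≠ v := by simp at hw1; tauto
      have hv2 : w2 ≠ v := by simp at hw2; tauto
      simp only at heq
      by_cases ha : ord v < ord w1 <;> by_cases hb : ord v < ord w2
      · rw [if_pos ha, if_pos hb] at heq
        exact congrArg Prod.snd heq
      · rw [if_pos ha, if_neg hb] at heq
        exact absurd (congrArg Prod.fst heq).symm hv2
      · rw [if_neg ha, if_pos hb] at heq
        exact absurd (congrArg Prod.fst heq) hv1
      · rw [if_neg ha, if_neg hb] at heq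
        exact congrArg Prod.fst heq
  -- handshake: sum of degrees is 2m
  have hdouble : ∑ v, degE v = 2 * m := by
    have step1 : ∀ v, degE v = ∑ p ∈ E, if p.1 = v ∨ p.2 = v then 1 else 0 := by
      intro v
      simp only [hdegE]
      rw [Finset.card_filter]
    calc ∑ v, degE v = ∑ v, ∑ p ∈ E, if p.1 = v ∨ p.2 = v then 1 else 0 :=
          Finset.sum_congr rfl (fun v _ => step1 v)
      _ = ∑ p ∈ E, ∑ v, if p.1 = v ∨ p.2 = v then 1 else 0 := Finset.sum_comm
      _ = ∑ _p ∈ E, 2 := by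
          refine Finset.sum_congr rfl (fun p hp => ?_)
          rw [← Finset.card_filter]
          have hpair : Finset.univ.filter (fun v => p.1 = v ∨ p.2 = v) = {p.1, p.2} := by
            ext u
            simp [eq_comm, or_comm]
          rw [hpair]
          exact Finset.card_pair (hne p hp)
      _ = 2 * m := by
          rw [Finset.sum_const, hm]
          simp [mul_comm]
  -- at least two edges avoid each vertex
  have hedge_at : ∀ w v : V, w ≠ v → ∃ p, p ∈ E ∧ (p.1 = w ∨ p.2 = w) ∧ p.1 ≠ v ∧ p.2 ≠ v := by
    intro w v hwv
    by_contra hno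
    push_neg at hno
    have hall : ∀ p ∈ E.filter (fun p => p.1 = w ∨ p.2 = w),
        p = (if ord v < ord w then (v, w) else (w, v)) := by
      intro p hp
      obtain ⟨hpE, hpw⟩ := Finset.mem_filter.mp hp
      have hpv : p.1 = v ∨ p.2 = v := by
        have := hno p hpE hpw
        tauto
      have hordp : ord p.1 < ord p.2 := ((hmemE p).mp hpE).2
      rcases hpw with h | h <;> rcases hpv with h' | h'
      · exact absurd (h'.symm.trans h) (Ne.symm hwv)
      · have hpeq : p = (w, v) := Prod.ext h h'
        subst hpeq
        rw [if_neg (not_lt.mpr (le_of_lt hordp))]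
      · have hpeq : p = (v, w) := Prod.ext h' h
        subst hpeq
        rw [if_pos hordp]
      · exact absurd (h'.symm.trans h) (Ne.symm hwv)
    have hle1 : (E.filter (fun p => p.1 = w ∨ p.2 = w)).card ≤ 1 :=
      Finset.card_le_one.mpr (fun a ha b hb => (hall a ha).trans (hall b hb).symm)
    have := hdeg2 w
    simp only [hdegE] at this
    omega
  have hCv2 : ∀ v, 2 ≤ (Cv v).card := by
    intro v
    obtain ⟨w, hw⟩ : ∃ w : V, w ≠ v :=
      Fintype.exists_ne_of_one_lt_card (by omega) v
    obtain ⟨p1, hp1E, hp1w, hp11, hp12⟩ := hedge_at w v hw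
    have hu : ∃ u : V, u ≠ v ∧ u ≠ p1.1 ∧ u ≠ p1.2 := by
      by_contra hno
      push_neg at hno
      have hsub : (Finset.univ : Finset V) ⊆ {v, p1.1, p1.2} := by
        intro u _
        simp only [Finset.mem_insert, Finset.mem_singleton]
        by_cases h1 : u = v
        · exact Or.inl h1
        · by_cases h2 : u = p1.1
          · exact Or.inr (Or.inl h2)
          · exact Or.inr (Or.inr (hno u h1 h2))
      have hc1 := Finset.card_le_card hsub
      have hc2 : ({v, p1.1, p1.2} : Finset V).card ≤ 3 := by
        refine le_trans (Finset.card_insert_le _ _) ?_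
        refine le_trans (Nat.add_le_add_right (Finset.card_insert_le _ _) 1) ?_
        simp
      rw [Finset.card_univ] at hc1
      omega
    obtain ⟨u, huv, hu1, hu2⟩ := hu
    obtain ⟨p2, hp2E, hp2u, hp21, hp22⟩ := hedge_at u v huv
    have hne12 : p1 ≠ p2 := by
      rintro rfl
      rcases hp2u with h | h
      · exact hu1 h.symm
      · exact hu2 h.symm
    have h1m : p1 ∈ Cv v := by
      refine Finset.mem_filter.mpr ⟨hp1E, ?_⟩
      simp [hp11, hp12]
    have h2m : p2 ∈ Cv v := by
      refine Finset.mem_filter.mpr ⟨hp2E, ?_⟩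
      simp [hp21, hp22]
    have := Finset.one_lt_card.mpr ⟨p1, h1m, p2, h2m, hne12⟩
    omega
  have hdeghigh : ∀ v, degE v + 2 ≤ m := by
    intro v
    have := hsplitv v
    have := hCv2 v
    omega
  have hkey := key_numeric degE m hcard hdouble hdeg2 hdeghigh
  have hfin : (∑ v : V, α v) * 2^m ≤ L * 2^m := by
    rw [Finset.sum_mul]
    calc ∑ v : V, α v * 2^m
        = ∑ v : V, (α v * 2^((Cv v).card)) * 2^(degE v) := by
          refine Finset.sum_congr rfl (fun v _ => ?_)
          rw [mul_assoc, ← pow_add]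
          congr 2
          have := hsplitv v
          omega
      _ ≤ ∑ v : V, L * 2^(degE v) :=
          Finset.sum_le_sum (fun v _ => Nat.mul_le_mul_right _ (hstep v))
      _ = L * ∑ v : V, 2^(degE v) := by rw [Finset.mul_sum]
      _ ≤ L * 2^m := Nat.mul_le_mul_left _ hkey
  exact Nat.le_of_mul_le_mul_right hfin (by positivity)
end

section
/- Let α : V → ℕ be a WP-weight system on a finite set V such that the associated coprimality graph is connected and no vertex of V is weak. Suppose there is a vertex v ∈ V that is incident to exactly one edge of the coprimality graph, and let V′ = V \ {v} with the restricted weight function α′. If lcm_{w ∈ V′} α(w) ≥ (∑_{w ∈ V′} α(w)) − 1, then lcm_{w ∈ V} α(w) ≥ ∑_{w ∈ V} α(w). -/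
lemma coprime_finset_lcm {V : Type} [DecidableEq V] (k : ℕ) (t : Finset V) (f : V → ℕ)
    (h : ∀ w ∈ t, Nat.Coprime k (f w)) : Nat.Coprime k (t.lcm f) := by
  induction t using Finset.induction_on with
  | empty => simp [Nat.coprime_one_right]
  | @insert a s hx ih =>
    rw [Finset.lcm_insert]
    have h1 : Nat.Coprime k (f a) := h a (Finset.mem_insert_self a s)
    have h2 : Nat.Coprime k (s.lcm f) := ih (fun w hw => h w (Finset.mem_insert_of_mem hw))
    exact (h1.mul_right h2).coprime_dvd_right
      (lcm_dvd (dvd_mul_right _ _) (dvd_mul_left _ _))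


/-- a WP-weight system with connected coprimality graph and no
weak vertex, having a vertex `v` incident to exactly one edge; if the system
restricted to `V \ {v}` satisfies `lcm ≥ Σ − 1`, then `lcm ≥ Σ` for the whole
system. -/
theorem stmt5 {V : Type} [Fintype V] [DecidableEq V] (α : V → ℕ)
    (hWP : WPSystem α)
    (hconn : (coprimeGraph α).Connected)
    (hweak : ∀ w : V, ¬ IsWeak α w)
    (v : V)
    (hone : (Finset.univ.filter (fun w => w ≠ v ∧ 1 < Nat.gcd (α v) (α w))).card = 1)
    (hind : (∑ w ∈ Finset.univ.erase v, α w) - 1 ≤ (Finset.univ.erase v).lcm α) :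
    ∑ w : V, α w ≤ Finset.univ.lcm α := by
  obtain ⟨hα2, -⟩ := hWP
  obtain ⟨u, hu⟩ := Finset.card_eq_one.mp hone
  have huv : u ≠ v ∧ 1 < Nat.gcd (α v) (α u) := by
    have : u ∈ Finset.univ.filter (fun w => w ≠ v ∧ 1 < Nat.gcd (α v) (α w)) :=
      hu ▸ Finset.mem_singleton_self u
    simpa using this
  have huniq : ∀ w, w ≠ v → 1 < Nat.gcd (α v) (α w) → w = u := by
    intro w h1 h2
    have : w ∈ Finset.univ.filter (fun w => w ≠ v ∧ 1 < Nat.gcd (α v) (α w)) := by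
      simp [h1, h2]
    rw [hu] at this
    simpa using this
  set s := Finset.univ.erase v with hs
  set t := s.erase u with ht
  have hus : u ∈ s := Finset.mem_erase.mpr ⟨huv.1, Finset.mem_univ u⟩
  have hut : u ∉ t := Finset.notMem_erase u s
  have hst : s = insert u t := (Finset.insert_erase hus).symm
  set L' := s.lcm α with hL'
  set g := Nat.gcd (α v) (α u) with hg
  -- v is coprime to every vertex in t
  have hcop : ∀ w ∈ t, Nat.Coprime (α v) (α w) := by
    intro w hw
    rcases Finset.mem_erase.mp hw with ⟨hwu, hws⟩
    rcases Finset.mem_erase.mp hws with ⟨hwv, -⟩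
    by_contra h
    have hne : Nat.gcd (α v) (α w) ≠ 0 := by
      intro h0
      have := Nat.eq_zero_of_gcd_eq_zero_left h0
      have := hα2 v
      omega
    have hne1 : Nat.gcd (α v) (α w) ≠ 1 := h
    exact hwu (huniq w hwv (by omega))
  have hcopL : Nat.Coprime (α v) (t.lcm α) := coprime_finset_lcm _ _ _ hcop
  -- gcd (α v) L' = g
  have hdvd_b : Nat.gcd (α v) L' ∣ α u := by
    have h1 : Nat.gcd (α v) L' ∣ α u * t.lcm α := by
      have hL'dvd : L' ∣ α u * t.lcm α := by
        rw [hL', hst, Finset.lcm_insert]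
        exact lcm_dvd (dvd_mul_right _ _) (dvd_mul_left _ _)
      exact (Nat.gcd_dvd_right _ _).trans hL'dvd
    exact (Nat.Coprime.coprime_dvd_left (Nat.gcd_dvd_left _ _) hcopL).dvd_of_dvd_mul_right h1
  have hgeq : Nat.gcd (α v) L' = g :=
    Nat.dvd_antisymm (Nat.dvd_gcd (Nat.gcd_dvd_left _ _) hdvd_b)
      (Nat.dvd_gcd (Nat.gcd_dvd_left _ _) ((Nat.gcd_dvd_right _ _).trans (Finset.dvd_lcm hus)))
  have hL : Finset.univ.lcm α = Nat.lcm (α v) L' := by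
    conv_lhs => rw [← Finset.insert_erase (Finset.mem_univ v)]
    rw [Finset.lcm_insert]
    rfl
  have hkey : g * Finset.univ.lcm α = α v * L' := by
    rw [hL, ← hgeq, Nat.gcd_mul_lcm]
  -- non-weakness facts
  have hnv : ¬ α v ∣ α u := fun hdv => hweak v ⟨u, huv.1, huv.2, hdv⟩
  have hnu : ¬ α u ∣ α v := fun hdv =>
    hweak u ⟨v, Ne.symm huv.1, by rw [Nat.gcd_comm]; exact huv.2, hdv⟩
  have hgv : g ∣ α v := Nat.gcd_dvd_left _ _
  have hgu : g ∣ α u := Nat.gcd_dvd_right _ _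
  have hg1 : 1 < g := huv.2
  obtain ⟨m, hm⟩ := id hgv
  have hm2 : 2 ≤ m := by
    rcases Nat.lt_or_ge m 2 with h' | h'
    · interval_cases m
      · have := hα2 v; omega
      · exact absurd (hm ▸ (by simpa using hgu) : α v ∣ α u) hnv
    · exact h'
  have hb2g : 2 * g ≤ α u := by
    obtain ⟨k, hk⟩ := hgu
    have hk2 : 2 ≤ k := by
      rcases Nat.lt_or_ge k 2 with h' | h'
      · interval_cases k
        · have := hα2 u; omega
        · exact absurd (hk ▸ (by simpa using hgv) : α u ∣ α v) hnu
      · exact h'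
    calc 2 * g ≤ g * k := by nlinarith
    _ = α u := hk.symm
  have hL'0 : L' ≠ 0 := by
    intro h0
    rw [hL', Finset.lcm_eq_zero_iff] at h0
    obtain ⟨w, hw, hw0⟩ := h0
    have := hα2 w
    omega
  have hbL' : α u ≤ L' := Nat.le_of_dvd (Nat.pos_of_ne_zero hL'0) (Finset.dvd_lcm hus)
  have hgL' : g ≤ L' := Nat.le_of_dvd (Nat.pos_of_ne_zero hL'0)
    ((Nat.gcd_dvd_right _ _).trans (Finset.dvd_lcm hus))
  set S := ∑ w ∈ s, α w with hS
  have hsum : ∑ w : V, α w = α v + S := (Finset.add_sum_erase _ _ (Finset.mem_univ v)).symm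
  have hSu : S = α u + ∑ w ∈ t, α w := by
    rw [hS, hst, Finset.sum_insert hut]
  -- main claim : S + 2g ≤ 2 L'
  have hclaim : S + 2 * g ≤ 2 * L' := by
    rcases t.eq_empty_or_nonempty with h0 | ⟨x, hx⟩
    · rw [hSu, h0]
      simp only [Finset.sum_empty, add_zero]
      omega
    · have hbx : α x ≤ ∑ w ∈ t, α w :=
        Finset.single_le_sum (fun i _ => Nat.zero_le _) hx
      have := hα2 x
      have hbS : α u + 2 ≤ S := by omega
      omega
  -- finish
  have hLeq : Finset.univ.lcm α = m * L' := by
    have : g * Finset.univ.lcm α = g * (m * L') := by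
      rw [hkey, hm]; ring
    exact Nat.eq_of_mul_eq_mul_left (by omega) this
  rw [hsum, hLeq, hm]
  have h1 : m * (S + 2 * g) ≤ m * (2 * L') := Nat.mul_le_mul_left m hclaim
  have h2 : 2 * S ≤ m * S := Nat.mul_le_mul_right S hm2
  nlinarith [h1, h2]
end

section
/- Let α : V → ℕ be a WP-weight system on a finite nonempty set V such that the associated coprimality graph is connected and no vertex of V is weak. Then lcm_{v ∈ V} α(v) ≥ (∑_{v ∈ V} α(v)) − 1; moreover lcm_{v ∈ V} α(v) ≥ ∑_{v ∈ V} α(v) unless V has exactly three elements and the multiset of values {α(v) : v ∈ V} equals {6, 10, 15}. -/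
lemma stmt6_div_triple (x y z : ℕ) (h : Nat.gcd (Nat.gcd x y) z = 1) :
    x * y * z ∣ Nat.lcm x y * Nat.lcm y z := by
  have h1 : Nat.gcd x y * z ∣ Nat.lcm y z :=
    Nat.Coprime.mul_dvd_of_dvd_of_dvd h
      (dvd_trans (Nat.gcd_dvd_right x y) (Nat.dvd_lcm_left y z))
      (Nat.dvd_lcm_right y z)
  have e : x * y * z = Nat.lcm x y * (Nat.gcd x y * z) := by
    rw [← Nat.gcd_mul_lcm x y]; ring
  rw [e]
  exact mul_dvd_mul_left _ h1

lemma stmt6_fact_bound (S : Finset ℕ) :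
    (∀ x ∈ S, 2 ≤ x) → Nat.factorial (S.card + 1) ≤ ∏ x ∈ S, x := by
  induction S using Finset.induction_on_max with
  | empty => intro _; simp [Nat.factorial]
  | insert a s hlt ih =>
    intro h2
    have has : a ∉ s := fun hmem => lt_irrefl a (hlt a hmem)
    have h2s : ∀ x ∈ s, 2 ≤ x := fun x hx => h2 x (Finset.mem_insert_of_mem hx)
    have h2a : 2 ≤ a := h2 a (Finset.mem_insert_self a s)
    have hsub : s ⊆ Finset.Ioo 1 a := by
      intro x hx
      exact Finset.mem_Ioo.mpr ⟨by have := h2s x hx; omega, hlt x hx⟩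
    have hcard : s.card ≤ a - 2 := by
      have := Finset.card_le_card hsub
      rwa [Nat.card_Ioo] at this
    have ha : s.card + 2 ≤ a := by omega
    rw [Finset.card_insert_of_notMem has, Finset.prod_insert has]
    calc Nat.factorial (s.card + 1 + 1) = (s.card + 2) * Nat.factorial (s.card + 1) := by
          rw [Nat.factorial_succ]
      _ ≤ a * ∏ x ∈ s, x := Nat.mul_le_mul ha (ih h2s)

lemma stmt6_num_bound : ∀ n, 4 ≤ n → 3375 * (n - 2) ^ 3 ≤ 1331 * Nat.factorial n := by
  intro n hn
  induction n, hn using Nat.le_induction with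
  | base => norm_num [Nat.factorial]
  | succ n hn ih =>
    obtain ⟨k, rfl⟩ : ∃ k, n = k + 4 := ⟨n - 4, by omega⟩
    have h1 : (k + 4 + 1) - 2 = k + 3 := by omega
    have h2 : (k + 4) - 2 = k + 2 := by omega
    rw [h1, Nat.factorial_succ]
    rw [h2] at ih
    have key : 3375 * (k + 3) ^ 3 ≤ (k + 4 + 1) * (3375 * (k + 2) ^ 3) := by nlinarith [sq_nonneg k]
    calc 3375 * (k + 3) ^ 3 ≤ (k + 4 + 1) * (3375 * (k + 2) ^ 3) := key
      _ ≤ (k + 4 + 1) * (1331 * Nat.factorial (k + 4)) := Nat.mul_le_mul_left _ ih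
      _ = 1331 * ((k + 4 + 1) * Nat.factorial (k + 4)) := by ring

lemma stmt6_key3 (L a b c : ℕ)
    (hL0 : L ≠ 0)
    (hab : b ≤ a) (hbc : c ≤ b)
    (hba : ¬ b ∣ a) (hcb : ¬ c ∣ b) (hca : ¬ c ∣ a)
    (hda : a ∣ L) (hdb : b ∣ L) (hdc : c ∣ L)
    (hg : Nat.gcd (Nat.gcd a b) c = 1) :
    a + b + c ≤ L ∨ (a = 15 ∧ b = 10 ∧ c = 6) := by
  obtain ⟨p, hp⟩ := hda
  obtain ⟨q, hq⟩ := hdb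
  obtain ⟨r, hr⟩ := hdc
  have step : ∀ u v s t : ℕ, L = u * s → L = v * t → v ≤ u → ¬ v ∣ u →
      s < t ∧ ¬ s ∣ t := by
    intro u v s t hu hv huv hnd
    have hu0 : 0 < u := by
      rcases Nat.eq_zero_or_pos u with h | h
      · exfalso; apply hL0; rw [hu, h, zero_mul]
      · exact h
    have hs0 : 0 < s := by
      rcases Nat.eq_zero_or_pos s with h | h
      · exfalso; apply hL0; rw [hu, h, mul_zero]
      · exact h
    constructor
    · rcases lt_trichotomy s t with h | h | h
      · exact h
      · exfalso; apply hnd; subst h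
        have heq : u * s = v * s := hu.symm.trans hv
        have : u = v := Nat.eq_of_mul_eq_mul_right hs0 heq
        rw [this]
      · exfalso
        have h1 : v * t < u * s :=
          lt_of_le_of_lt (Nat.mul_le_mul_right t huv) (mul_lt_mul_of_pos_left h hu0)
        rw [← hu, ← hv] at h1; exact lt_irrefl L h1
    · rintro ⟨k, hk⟩
      apply hnd
      refine ⟨k, ?_⟩
      have h2 : u * s = v * k * s := by
        rw [hu.symm.trans hv, hk]; ring
      exact Nat.eq_of_mul_eq_mul_right hs0 h2
  obtain ⟨hpq, hnpq⟩ := step a b p q hp hq hab hba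
  obtain ⟨hqr, hnqr⟩ := step b c q r hq hr hbc hcb
  obtain ⟨hpr, hnpr⟩ := step a c p r hp hr (le_trans hbc hab) hca
  have hp0 : p ≠ 0 := by intro h; rw [h, mul_zero] at hp; exact hL0 hp
  have hp1 : p ≠ 1 := by
    intro h; apply hba
    have hbL : b ∣ L := ⟨q, hq⟩
    rw [hp, h, mul_one] at hbL; exact hbL
  by_cases hpe : p = 2
  · subst hpe
    have hqodd : ¬ 2 ∣ q := hnpq
    have hrodd : ¬ 2 ∣ r := hnpr
    by_cases hqe : q = 3
    · subst hqe
      have hr3 : ¬ 3 ∣ r := hnqr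
      by_cases hre : r = 5
      · subst hre
        right
        have h2 : 2 ∣ L := ⟨a, by rw [hp]; ring⟩
        have h3 : 3 ∣ L := ⟨b, by rw [hq]; ring⟩
        have h5 : 5 ∣ L := ⟨c, by rw [hr]; ring⟩
        have h6 : 6 ∣ L := Nat.Coprime.mul_dvd_of_dvd_of_dvd (by norm_num) h2 h3
        have h30 : 30 ∣ L := by
          have h' := Nat.Coprime.mul_dvd_of_dvd_of_dvd (show Nat.Coprime 6 5 by norm_num) h6 h5
          simpa using h'
        obtain ⟨t, ht⟩ := h30
        have hat : a = 15 * t := by omega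
        have hbt : b = 10 * t := by omega
        have hct : c = 6 * t := by omega
        rw [hat, hbt, hct, Nat.gcd_mul_right, Nat.gcd_mul_right] at hg
        norm_num at hg
        omega
      · left
        have hr7 : 7 ≤ r := by omega
        have b3 : c * 7 ≤ L := by
          calc c * 7 ≤ c * r := Nat.mul_le_mul_left c hr7
            _ = L := hr.symm
        omega
    · left
      have hq5 : 5 ≤ q := by omega
      have hr7 : 7 ≤ r := by omega
      have b2 : b * 5 ≤ L := by
        calc b * 5 ≤ b * q := Nat.mul_le_mul_left b hq5
          _ = L := hq.symm
      have b3 : c * 7 ≤ L := by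
        calc c * 7 ≤ c * r := Nat.mul_le_mul_left c hr7
          _ = L := hr.symm
      omega
  · left
    have hp3 : 3 ≤ p := by omega
    have hq4 : 4 ≤ q := by omega
    have hr5 : 5 ≤ r := by omega
    have b1 : a * 3 ≤ L := by
      calc a * 3 ≤ a * p := Nat.mul_le_mul_left a hp3
        _ = L := hp.symm
    have b2 : b * 4 ≤ L := by
      calc b * 4 ≤ b * q := Nat.mul_le_mul_left b hq4
        _ = L := hq.symm
    have b3 : c * 5 ≤ L := by
      calc c * 5 ≤ c * r := Nat.mul_le_mul_left c hr5
        _ = L := hr.symm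
    omega

/-- a WP-weight system on a finite nonempty set, with connected
coprimality graph and no weak vertex, satisfies `lcm ≥ Σ − 1`; moreover
`lcm ≥ Σ` unless `V` has exactly three elements with multiset of weights
`{6, 10, 15}`. -/
theorem stmt6 {V : Type} [Fintype V] [DecidableEq V] (α : V → ℕ)
    (hne : Nonempty V)
    (hWP : WPSystem α)
    (hconn : (coprimeGraph α).Connected)
    (hweak : ∀ v : V, ¬ IsWeak α v) :
    (∑ v : V, α v) - 1 ≤ Finset.univ.lcm α ∧
      (¬ (Fintype.card V = 3 ∧ Finset.univ.val.map α = ({6, 10, 15} : Multiset ℕ)) →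
        ∑ v : V, α v ≤ Finset.univ.lcm α) := by
  classical
  set L : ℕ := Finset.univ.lcm α with hLdef
  have hα2 : ∀ v, 2 ≤ α v := hWP.1
  have hdvdL : ∀ v, α v ∣ L := fun v => Finset.dvd_lcm (Finset.mem_univ v)
  have hL0 : L ≠ 0 := by
    intro h
    rw [hLdef, Finset.lcm_eq_zero_iff] at h
    obtain ⟨v, -, hv⟩ := h
    have := hα2 v
    omega
  have hnd : ∀ v w : V, v ≠ w → ¬ α v ∣ α w := by
    intro v w hvw hdvd
    apply hweak v
    refine ⟨w, hvw.symm, ?_, hdvd⟩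
    rw [Nat.gcd_eq_left hdvd]
    exact lt_of_lt_of_le one_lt_two (hα2 v)
  have main : (∑ v : V, α v ≤ L) ∨
      (Fintype.card V = 3 ∧ Finset.univ.val.map α = ({6, 10, 15} : Multiset ℕ)) := by
    have hn1 : 1 ≤ Fintype.card V := (@Fintype.card_pos_iff V _).mpr hne
    by_cases h1 : Fintype.card V = 1
    · left
      have hc : (Finset.univ : Finset V).card = 1 := by rw [Finset.card_univ]; exact h1
      obtain ⟨x, hU⟩ := Finset.card_eq_one.mp hc
      rw [hU, Finset.sum_singleton]
      exact Nat.le_of_dvd (Nat.pos_of_ne_zero hL0) (hdvdL x)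
    · by_cases h2 : Fintype.card V = 2
      · left
        have hc : (Finset.univ : Finset V).card = 2 := by rw [Finset.card_univ]; exact h2
        obtain ⟨x, y, hxy, hU⟩ := Finset.card_eq_two.mp hc
        rw [hU, Finset.sum_pair hxy]
        have hML : Nat.lcm (α x) (α y) ∣ L := Nat.lcm_dvd (hdvdL x) (hdvdL y)
        have hM0 : Nat.lcm (α x) (α y) ≠ 0 := by
          intro h; rw [h] at hML
          exact hL0 (Nat.eq_zero_of_zero_dvd hML)
        have hMx : 2 * α x ≤ Nat.lcm (α x) (α y) := by
          obtain ⟨k, hk⟩ := Nat.dvd_lcm_left (α x) (α y)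
          have hk1 : k ≠ 1 := by
            intro h; apply hnd y x hxy.symm
            have h2' : α y ∣ Nat.lcm (α x) (α y) := Nat.dvd_lcm_right _ _
            rwa [hk, h, mul_one] at h2'
          have hk0 : k ≠ 0 := by intro h; apply hM0; rw [hk, h, mul_zero]
          calc 2 * α x = α x * 2 := by ring
            _ ≤ α x * k := Nat.mul_le_mul_left _ (by omega)
            _ = Nat.lcm (α x) (α y) := hk.symm
        have hMy : 2 * α y ≤ Nat.lcm (α x) (α y) := by
          obtain ⟨k, hk⟩ := Nat.dvd_lcm_right (α x) (α y)
          have hk1 : k ≠ 1 := by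
            intro h; apply hnd x y hxy
            have h2' : α x ∣ Nat.lcm (α x) (α y) := Nat.dvd_lcm_left _ _
            rwa [hk, h, mul_one] at h2'
          have hk0 : k ≠ 0 := by intro h; apply hM0; rw [hk, h, mul_zero]
          calc 2 * α y = α y * 2 := by ring
            _ ≤ α y * k := Nat.mul_le_mul_left _ (by omega)
            _ = Nat.lcm (α x) (α y) := hk.symm
        have hMle : Nat.lcm (α x) (α y) ≤ L := Nat.le_of_dvd (Nat.pos_of_ne_zero hL0) hML
        omega
      · by_cases h3 : Fintype.card V = 3
        · -- three-element case
          have hc : (Finset.univ : Finset V).card = 3 := by rw [Finset.card_univ]; exact h3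
          obtain ⟨x, y, z, hxy, hxz, hyz, hU⟩ := Finset.card_eq_three.mp hc
          have hsum : ∑ v : V, α v = α x + α y + α z := by
            rw [hU, Finset.sum_insert (by simp [hxy, hxz]),
              Finset.sum_insert (by simp [hyz]), Finset.sum_singleton]
            ring
          have hval : Finset.univ.val.map α = {α x, α y, α z} := by
            rw [hU]
            simp [Finset.insert_val, Multiset.ndinsert_of_notMem, hxy, hxz, hyz]
          have handle : ∀ u v w : V, u ≠ v → u ≠ w → v ≠ w → α v ≤ α u → α w ≤ α v →
              (α u + α v + α w ≤ L) ∨ (α u = 15 ∧ α v = 10 ∧ α w = 6) :=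
            fun u v w h1 h2 h3' hle1 hle2 =>
              stmt6_key3 L (α u) (α v) (α w) hL0 hle1 hle2
                (hnd v u h1.symm) (hnd w v h3'.symm) (hnd w u h2.symm)
                (hdvdL u) (hdvdL v) (hdvdL w) (hWP.2 u v w h1 h2 h3')
          rcases le_total (α x) (α y) with c1 | c1 <;>
            rcases le_total (α x) (α z) with c2 | c2 <;>
              rcases le_total (α y) (α z) with c3 | c3
          · rcases handle z y x hyz.symm hxz.symm hxy.symm c3 c1 with h | h
            · left; omega
            · right; exact ⟨h3, by rw [hval, h.1, h.2.1, h.2.2]; all_goals decide⟩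
          · rcases handle y z x hyz hxy.symm hxz.symm c3 c2 with h | h
            · left; omega
            · right; exact ⟨h3, by rw [hval, h.1, h.2.1, h.2.2]; all_goals decide⟩
          · rcases handle y x z hxy.symm hyz hxz c1 c2 with h | h
            · left; omega
            · right; exact ⟨h3, by rw [hval, h.1, h.2.1, h.2.2]; all_goals decide⟩
          · rcases handle y x z hxy.symm hyz hxz c1 c2 with h | h
            · left; omega
            · right; exact ⟨h3, by rw [hval, h.1, h.2.1, h.2.2]; all_goals decide⟩
          · rcases handle z x y hxz.symm hyz.symm hxy c2 c1 with h | h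
            · left; omega
            · right; exact ⟨h3, by rw [hval, h.1, h.2.1, h.2.2]; all_goals decide⟩
          · rcases handle z x y hxz.symm hyz.symm hxy c2 c1 with h | h
            · left; omega
            · right; exact ⟨h3, by rw [hval, h.1, h.2.1, h.2.2]; all_goals decide⟩
          · rcases handle x z y hxz hxy hyz.symm c2 c3 with h | h
            · left; omega
            · right; exact ⟨h3, by rw [hval, h.1, h.2.1, h.2.2]; all_goals decide⟩
          · rcases handle x y z hxy hxz hyz c1 c3 with h | h
            · left; omega
            · right; exact ⟨h3, by rw [hval, h.1, h.2.1, h.2.2]; all_goals decide⟩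
        · -- n ≥ 4
          left
          have h4 : 4 ≤ Fintype.card V := by omega
          -- three distinct vertices different from any given one
          have three : ∀ i : V, ∃ j₁ j₂ j₃ : V, j₁ ≠ i ∧ j₂ ≠ i ∧ j₃ ≠ i ∧
              j₁ ≠ j₂ ∧ j₁ ≠ j₃ ∧ j₂ ≠ j₃ := by
            intro i
            have hcard : 3 ≤ (Finset.univ.erase i).card := by
              rw [Finset.card_erase_of_mem (Finset.mem_univ i), Finset.card_univ]; omega
            obtain ⟨j₁, hj1⟩ := Finset.card_pos.mp (show 0 < (Finset.univ.erase i).card by omega)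
            obtain ⟨j₂, hj2⟩ := Finset.card_pos.mp
              (show 0 < ((Finset.univ.erase i).erase j₁).card by
                rw [Finset.card_erase_of_mem hj1]; omega)
            obtain ⟨j₃, hj3⟩ := Finset.card_pos.mp
              (show 0 < (((Finset.univ.erase i).erase j₁).erase j₂).card by
                rw [Finset.card_erase_of_mem hj2, Finset.card_erase_of_mem hj1]; omega)
            simp only [Finset.mem_erase, Finset.mem_univ, and_true] at hj1 hj2 hj3
            exact ⟨j₁, j₂, j₃, hj1, hj2.2, hj3.2.2, (hj2.1).symm, (hj3.2.1).symm, (hj3.1).symm⟩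
          have lemP : ∀ (i : V) (pp k : ℕ), pp.Prime → L = α i * pp ^ k → False := by
            intro i pp k hpp hLi
            have hall : ∀ j : V, j ≠ i → pp ∣ α j := by
              intro j hj
              by_contra hnd'
              have hco : Nat.Coprime (α j) (pp ^ k) :=
                (((Nat.Prime.coprime_iff_not_dvd hpp).mpr hnd').symm).pow_right k
              have hdj : α j ∣ α i * pp ^ k := hLi ▸ hdvdL j
              exact hnd j i hj (Nat.Coprime.dvd_of_dvd_mul_right hco hdj)
            obtain ⟨j₁, j₂, j₃, hh1, hh2, hh3, h12, h13, h23⟩ := three i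
            have hg := hWP.2 j₁ j₂ j₃ h12 h13 h23
            have hdd : pp ∣ 1 :=
              hg ▸ Nat.dvd_gcd (Nat.dvd_gcd (hall j₁ hh1) (hall j₂ hh2)) (hall j₃ hh3)
            have := Nat.Prime.one_lt hpp
            have := Nat.dvd_one.mp hdd
            omega
          have lemZ : ∀ i : V, L ≠ α i := by
            intro i hLa
            obtain ⟨j, -, -, hj, -⟩ := three i
            exact hnd j i hj (hLa ▸ hdvdL j)
          have lem6 : ∀ i : V, 6 * α i ≤ L := by
            intro i
            obtain ⟨m, hm⟩ := hdvdL i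
            have hm0 : m ≠ 0 := by intro h; apply hL0; rw [hm, h, mul_zero]
            have hm1 : m ≠ 1 := by intro h; apply lemZ i; rw [hm, h, mul_one]
            have hm2 : m ≠ 2 := fun h => lemP i 2 1 Nat.prime_two (by rw [hm, h]; norm_num)
            have hm3 : m ≠ 3 := fun h => lemP i 3 1 Nat.prime_three (by rw [hm, h]; norm_num)
            have hm4 : m ≠ 4 := fun h => lemP i 2 2 Nat.prime_two (by rw [hm, h]; norm_num)
            have hm5 : m ≠ 5 := fun h => lemP i 5 1 (by norm_num) (by rw [hm, h]; norm_num)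
            have h6m : 6 ≤ m := by omega
            calc 6 * α i ≤ m * α i := Nat.mul_le_mul_right _ h6m
              _ = L := by rw [mul_comm, ← hm]
          obtain ⟨i₁, -, hmax1⟩ := Finset.exists_max_image Finset.univ α ⟨hne.some, Finset.mem_univ _⟩
          have hs2ne : (Finset.univ.erase i₁).Nonempty := by
            rw [← Finset.card_pos, Finset.card_erase_of_mem (Finset.mem_univ i₁),
              Finset.card_univ]
            omega
          obtain ⟨i₂, hi₂mem, hmax2⟩ := Finset.exists_max_image _ α hs2ne
          have hi21 : i₂ ≠ i₁ := (Finset.mem_erase.mp hi₂mem).1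
          have hmax1' : ∀ j, α j ≤ α i₁ := fun j => hmax1 j (Finset.mem_univ j)
          have hmax2' : ∀ j, j ≠ i₁ → α j ≤ α i₂ := fun j hj =>
            hmax2 j (Finset.mem_erase.mpr ⟨hj, Finset.mem_univ j⟩)
          have lem10 : 10 * α i₂ ≤ L := by
            obtain ⟨m, hm⟩ := hdvdL i₂
            have hα0 : 0 < α i₂ := by have := hα2 i₂; omega
            have h6m : 6 ≤ m := by
              have h1' : α i₂ * 6 ≤ α i₂ * m := by
                rw [← hm, mul_comm (α i₂) 6]; exact lem6 i₂
              exact Nat.le_of_mul_le_mul_left h1' hα0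
            have hm7 : m ≠ 7 := fun h => lemP i₂ 7 1 (by norm_num) (by rw [hm, h]; norm_num)
            have hm8 : m ≠ 8 := fun h => lemP i₂ 2 3 Nat.prime_two (by rw [hm, h]; norm_num)
            have hm9 : m ≠ 9 := fun h => lemP i₂ 3 2 Nat.prime_three (by rw [hm, h]; norm_num)
            have hm6 : m ≠ 6 := by
              intro h
              have hL6 : L = α i₂ * 6 := by rw [hm, h]
              have hle : α i₁ ≤ α i₂ := by have := lem6 i₁; omega
              have heq : α i₂ = α i₁ := le_antisymm (hmax1' i₂) hle
              exact hnd i₂ i₁ hi21 (heq ▸ dvd_refl _)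
            have h10m : 10 ≤ m := by omega
            calc 10 * α i₂ ≤ m * α i₂ := Nat.mul_le_mul_right _ h10m
              _ = L := by rw [mul_comm, ← hm]
          -- boundary edges from connectivity
          have boundary : ∀ S : Finset V, S.Nonempty → (∃ v, v ∉ S) →
              ∃ u ∈ S, ∃ v, v ∉ S ∧ (coprimeGraph α).Adj u v := by
            rintro S ⟨a, ha⟩ ⟨b, hb⟩
            have key : ∀ (a b : V), (coprimeGraph α).Walk a b → a ∈ S → b ∉ S →
                ∃ u ∈ S, ∃ v, v ∉ S ∧ (coprimeGraph α).Adj u v := by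
              intro a b w
              induction w with
              | nil => intro ha' hb'; exact absurd ha' hb'
              | @cons u v w hadj p ih =>
                intro ha' hb'
                by_cases hv : v ∈ S
                · exact ih hv hb'
                · exact ⟨u, ha', v, hv, hadj⟩
            exact key a b (hconn.preconnected a b).some ha hb
          -- grow a spanning set with distinct primes
          have grow : ∀ k, 1 ≤ k → k ≤ Fintype.card V → ∃ (S : Finset V) (P : Finset ℕ),
              S.card = k ∧ P.card = k - 1 ∧
              ∀ pp ∈ P, pp.Prime ∧ ∃ u ∈ S, ∃ v ∈ S, u ≠ v ∧ pp ∣ α u ∧ pp ∣ α v := by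
            intro k hk1
            induction k, hk1 using Nat.le_induction with
            | base => intro _; exact ⟨{hne.some}, ∅, by simp, by simp, by simp⟩
            | succ k hk ih =>
              intro hkn
              obtain ⟨S, P, hScard, hPcard, hPw⟩ := ih (by omega)
              have hSne : S.Nonempty := Finset.card_pos.mp (by omega)
              have hout : ∃ v, v ∉ S := by
                by_contra hall
                push_neg at hall
                have hsub : (Finset.univ : Finset V) ⊆ S := fun v _ => hall v
                have := Finset.card_le_card hsub
                rw [Finset.card_univ] at this
                omega
              obtain ⟨u, huS, v, hvS, hadj⟩ := boundary S hSne hout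
              have hadj' : u ≠ v ∧ 1 < Nat.gcd (α u) (α v) := hadj
              have hgcd : Nat.gcd (α u) (α v) ≠ 1 := by omega
              obtain ⟨pp, hpp, hppd⟩ := Nat.exists_prime_and_dvd hgcd
              have hpu : pp ∣ α u := hppd.trans (Nat.gcd_dvd_left _ _)
              have hpv : pp ∣ α v := hppd.trans (Nat.gcd_dvd_right _ _)
              have hpnew : pp ∉ P := by
                intro hmem
                obtain ⟨-, u', hu', v', hv', huv', hd1, hd2⟩ := hPw pp hmem
                have hh1 : u' ≠ v := fun h => hvS (h ▸ hu')
                have hh2 : v' ≠ v := fun h => hvS (h ▸ hv')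
                have hg := hWP.2 u' v' v huv' hh1 hh2
                have hdd : pp ∣ 1 :=
                  hg ▸ Nat.dvd_gcd (Nat.dvd_gcd hd1 hd2) hpv
                have := Nat.Prime.one_lt hpp
                have := Nat.dvd_one.mp hdd
                omega
              refine ⟨insert v S, insert pp P, ?_, ?_, ?_⟩
              · rw [Finset.card_insert_of_notMem hvS, hScard]
              · rw [Finset.card_insert_of_notMem hpnew, hPcard]; omega
              · intro p' hp'
                rcases Finset.mem_insert.mp hp' with h | h
                · subst h
                  exact ⟨hpp, u, Finset.mem_insert_of_mem huS, v, Finset.mem_insert_self v S,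
                    fun h => hvS (h ▸ huS), hpu, hpv⟩
                · obtain ⟨hpr, u', hu', v', hv', rest⟩ := hPw p' h
                  exact ⟨hpr, u', Finset.mem_insert_of_mem hu', v',
                    Finset.mem_insert_of_mem hv', rest⟩
          obtain ⟨S, P, hScard, hPcard, hPw⟩ :=
            grow (Fintype.card V) (by omega) (le_refl _)
          have hPsub : P ⊆ L.primeFactors := by
            intro pp hpp
            obtain ⟨hpr, u, -, -, -, -, hdvd, -⟩ := hPw pp hpp
            exact Nat.mem_primeFactors.mpr ⟨hpr, hdvd.trans (hdvdL u), hL0⟩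
          have hfac : Nat.factorial (Fintype.card V) ≤ L := by
            have hb1 : Nat.factorial (P.card + 1) ≤ ∏ x ∈ P, x :=
              stmt6_fact_bound P
                (fun x hx => (Nat.mem_primeFactors.mp (hPsub hx)).1.two_le)
            have hb2 : ∏ x ∈ P, x ≤ ∏ x ∈ L.primeFactors, x :=
              Finset.prod_le_prod_of_subset_of_one_le' hPsub
                (fun i hi _ => (Nat.mem_primeFactors.mp hi).1.one_lt.le)
            have hb3 : ∏ x ∈ L.primeFactors, x ≤ L :=
              Nat.le_of_dvd (Nat.pos_of_ne_zero hL0) (Nat.prod_primeFactors_dvd L)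
            have hPc : P.card + 1 = Fintype.card V := by omega
            rw [← hPc]
            exact le_trans hb1 (le_trans hb2 hb3)
          have hnum : 3375 * (Fintype.card V - 2) ^ 3 ≤ 1331 * L :=
            le_trans (stmt6_num_bound _ h4) (Nat.mul_le_mul_left 1331 hfac)
          have hrest : ∀ i : V, i ≠ i₁ → i ≠ i₂ → 15 * (Fintype.card V - 2) * α i ≤ 11 * L := by
            intro i hi1 hi2
            have hcube : (α i) ^ 3 ≤ L * L := by
              have t1 : α i ≤ α i₁ := hmax1' i
              have t2 : α i ≤ α i₂ := hmax2' i hi1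
              have hdvd3 : α i₁ * α i₂ * α i ∣ Nat.lcm (α i₁) (α i₂) * Nat.lcm (α i₂) (α i) :=
                stmt6_div_triple _ _ _ (hWP.2 i₁ i₂ i hi21.symm (Ne.symm hi1) (Ne.symm hi2))
              have hlcmpos : 0 < Nat.lcm (α i₁) (α i₂) * Nat.lcm (α i₂) (α i) := by
                apply Nat.pos_of_ne_zero
                apply Nat.mul_ne_zero
                · exact Nat.lcm_ne_zero (by have := hα2 i₁; omega) (by have := hα2 i₂; omega)
                · exact Nat.lcm_ne_zero (by have := hα2 i₂; omega) (by have := hα2 i; omega)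
              have hlcm1 : Nat.lcm (α i₁) (α i₂) ≤ L :=
                Nat.le_of_dvd (Nat.pos_of_ne_zero hL0) (Nat.lcm_dvd (hdvdL i₁) (hdvdL i₂))
              have hlcm2 : Nat.lcm (α i₂) (α i) ≤ L :=
                Nat.le_of_dvd (Nat.pos_of_ne_zero hL0) (Nat.lcm_dvd (hdvdL i₂) (hdvdL i))
              calc (α i) ^ 3 = α i * α i * α i := by ring
                _ ≤ α i₁ * α i₂ * α i := Nat.mul_le_mul (Nat.mul_le_mul t1 t2) (le_refl _)
                _ ≤ Nat.lcm (α i₁) (α i₂) * Nat.lcm (α i₂) (α i) :=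
                    Nat.le_of_dvd hlcmpos hdvd3
                _ ≤ L * L := Nat.mul_le_mul hlcm1 hlcm2
            have hc : (15 * (Fintype.card V - 2) * α i) ^ 3 ≤ (11 * L) ^ 3 := by
              have e1 : (15 * (Fintype.card V - 2) * α i) ^ 3
                  = 3375 * (Fintype.card V - 2) ^ 3 * (α i) ^ 3 := by ring
              have e2 : (11 * L) ^ 3 = 1331 * L * (L * L) := by ring
              rw [e1, e2]
              calc 3375 * (Fintype.card V - 2) ^ 3 * (α i) ^ 3
                  ≤ 3375 * (Fintype.card V - 2) ^ 3 * (L * L) := Nat.mul_le_mul_left _ hcube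
                _ ≤ 1331 * L * (L * L) := Nat.mul_le_mul_right _ hnum
            exact (Nat.pow_le_pow_iff_left (n := 3) (by norm_num)).mp hc
          have hpairsub : ({i₁, i₂} : Finset V) ⊆ Finset.univ := Finset.subset_univ _
          have hsplit := Finset.sum_sdiff (f := α) hpairsub
          have hpairsum : ∑ v ∈ ({i₁, i₂} : Finset V), α v = α i₁ + α i₂ :=
            Finset.sum_pair (Ne.symm hi21)
          have hcard2 : ({i₁, i₂} : Finset V).card = 2 := Finset.card_pair (Ne.symm hi21)
          have hSrest : (Finset.univ \ {i₁, i₂}).card = Fintype.card V - 2 := by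
            rw [Finset.card_sdiff_of_subset hpairsub, hcard2, Finset.card_univ]
          have hsum_rest : 15 * ∑ v ∈ Finset.univ \ {i₁, i₂}, α v ≤ 11 * L := by
            have hb : ∀ v ∈ Finset.univ \ ({i₁, i₂} : Finset V),
                15 * (Fintype.card V - 2) * α v ≤ 11 * L := by
              intro v hv
              simp only [Finset.mem_sdiff, Finset.mem_univ, Finset.mem_insert,
                Finset.mem_singleton, true_and] at hv
              push_neg at hv
              exact hrest v hv.1 hv.2
            have h1' := Finset.sum_le_card_nsmul _ _ _ hb
            rw [← Finset.mul_sum, hSrest, smul_eq_mul] at h1'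
            have hn2 : 0 < Fintype.card V - 2 := by omega
            have h2' : (Fintype.card V - 2) * (15 * ∑ v ∈ Finset.univ \ {i₁, i₂}, α v)
                ≤ (Fintype.card V - 2) * (11 * L) := by
              calc (Fintype.card V - 2) * (15 * ∑ v ∈ Finset.univ \ {i₁, i₂}, α v)
                  = 15 * (Fintype.card V - 2) * ∑ v ∈ Finset.univ \ {i₁, i₂}, α v := by ring
                _ ≤ (Fintype.card V - 2) * (11 * L) := h1'
            exact Nat.le_of_mul_le_mul_left h2' hn2
          have hsum_eq : ∑ v ∈ Finset.univ \ ({i₁, i₂} : Finset V), α v + (α i₁ + α i₂)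
              = ∑ v : V, α v := by
            rw [← hpairsum]; exact hsplit
          have l1 := lem6 i₁
          omega
  constructor
  · rcases main with h | ⟨h3, hm⟩
    · omega
    · have hsum : ∑ v : V, α v = 31 := by
        rw [Finset.sum_eq_multiset_sum, hm]; decide
      have h15 : ∃ v : V, α v = 15 := by
        have hmem : (15 : ℕ) ∈ Multiset.map α Finset.univ.val := by rw [hm]; decide
        obtain ⟨v, -, hv⟩ := Multiset.mem_map.mp hmem
        exact ⟨v, hv⟩
      have h10 : ∃ v : V, α v = 10 := by
        have hmem : (10 : ℕ) ∈ Multiset.map α Finset.univ.val := by rw [hm]; decide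
        obtain ⟨v, -, hv⟩ := Multiset.mem_map.mp hmem
        exact ⟨v, hv⟩
      obtain ⟨v1, hv1⟩ := h15
      obtain ⟨v2, hv2⟩ := h10
      have d15 : (15 : ℕ) ∣ L := hv1 ▸ hdvdL v1
      have d10 : (10 : ℕ) ∣ L := hv2 ▸ hdvdL v2
      have d30 : (30 : ℕ) ∣ L := by
        have hl := Nat.lcm_dvd d15 d10
        have e : Nat.lcm 15 10 = 30 := by decide
        rwa [e] at hl
      have h30 : 30 ≤ L := Nat.le_of_dvd (Nat.pos_of_ne_zero hL0) d30
      omega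
  · intro hnot
    rcases main with h | h
    · exact h
    · exact absurd h hnot
end

section
/- Let α : V → ℕ be a WP-weight system on a finite set V such that no vertex of V is weak. Suppose it is not the case that V has exactly three elements with multiset of values {α(v) : v ∈ V} equal to {6, 10, 15}. Then lcm_{v ∈ V} α(v) ≥ ∑_{v ∈ V} α(v). -/
lemma prod_ge_factorial : ∀ (n : ℕ) (T : Finset ℕ), T.card = n → (∀ x ∈ T, 2 ≤ x) →
    Nat.factorial (n + 1) ≤ T.prod id := by
  intro n
  induction n with
  | zero =>
    intro T hT _
    rw [Finset.card_eq_zero] at hT; subst hT; simp [Nat.factorial]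
  | succ k ih =>
    intro T hT h2
    have hne : T.Nonempty := Finset.card_pos.mp (by omega)
    have hMT : T.max' hne ∈ T := T.max'_mem hne
    have hsub : T ⊆ Finset.Icc 2 (T.max' hne) := by
      intro x hx; exact Finset.mem_Icc.mpr ⟨h2 x hx, T.le_max' x hx⟩
    have hcard : T.card ≤ T.max' hne - 1 := by
      have := Finset.card_le_card hsub
      simpa [Nat.card_Icc] using this
    have hM2 : k + 2 ≤ T.max' hne := by
      have := h2 _ hMT; omega
    have herase : (T.erase (T.max' hne)).card = k := by
      rw [Finset.card_erase_of_mem hMT, hT]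
      omega
    have ih' := ih (T.erase (T.max' hne)) herase
      (fun x hx => h2 x (Finset.mem_of_mem_erase hx))
    calc Nat.factorial (k + 1 + 1) = (k + 2) * Nat.factorial (k + 1) := rfl
    _ ≤ T.max' hne * (T.erase (T.max' hne)).prod id := Nat.mul_le_mul hM2 ih'
    _ = T.prod id := by
        have := Finset.mul_prod_erase T id hMT
        simpa using this

lemma two_mul_add_one_le_factorial : ∀ k, 2 ≤ k → 2 * k + 1 ≤ Nat.factorial (k + 1) := by
  intro k
  induction k with
  | zero => omega
  | succ m ih =>
    intro _
    by_cases hm : 2 ≤ m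
    · have := ih hm
      have h1 : Nat.factorial (m + 2) = (m + 2) * Nat.factorial (m + 1) := rfl
      have h2 : Nat.factorial (m+1) ≥ 1 := Nat.factorial_pos _
      nlinarith
    · interval_cases m
      · omega
      · decide

lemma prod_pairwise_coprime_dvd (T : Finset ℕ) (L : ℕ)
    (hcop : ∀ x ∈ T, ∀ y ∈ T, x ≠ y → Nat.Coprime x y)
    (hdvd : ∀ x ∈ T, x ∣ L) : T.prod id ∣ L := by
  induction T using Finset.induction_on with
  | empty => simpa using one_dvd L
  | insert _ _ haT =>
    rename_i a T ih
    rw [Finset.prod_insert haT]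
    have hc : Nat.Coprime a (T.prod id) := by
      apply Nat.Coprime.prod_right
      intro i hi
      exact hcop a (Finset.mem_insert_self a T) i (Finset.mem_insert_of_mem hi)
        (by rintro rfl; exact haT hi)
    exact hc.mul_dvd_of_dvd_of_dvd (hdvd a (Finset.mem_insert_self a T))
      (ih (fun x hx y hy hxy => hcop x (Finset.mem_insert_of_mem hx) y (Finset.mem_insert_of_mem hy) hxy)
          (fun x hx => hdvd x (Finset.mem_insert_of_mem hx)))

lemma tri_sorted (x y z : ℕ) (h2 : 2 ≤ x) (hxy : x < y) (hyz : y < z)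
    (cxy : Nat.Coprime x y) (cxz : Nat.Coprime x z)
    (h : x * y * z < x * y + y * z + x * z) : x = 2 ∧ y = 3 ∧ z = 5 := by
  by_cases hx3 : 3 ≤ x
  · exfalso
    have a1 : x * y ≤ y * z := by
      calc x * y = y * x := Nat.mul_comm _ _
      _ ≤ y * z := Nat.mul_le_mul_left y (by omega)
    have a2 : x * z ≤ y * z := Nat.mul_le_mul_right z (by omega)
    have a3 : 3 * (y * z) ≤ x * (y * z) := Nat.mul_le_mul_right _ hx3
    have a4 : x * y * z = x * (y * z) := Nat.mul_assoc _ _ _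
    omega
  have hx : x = 2 := by omega
  subst hx
  have hy2 : ¬ (2 ∣ y) := by
    intro hd
    have := Nat.gcd_eq_left hd
    rw [cxy] at this; omega
  have hz2 : ¬ (2 ∣ z) := by
    intro hd
    have := Nat.gcd_eq_left hd
    rw [cxz] at this; omega
  by_cases hy5 : 5 ≤ y
  · exfalso; nlinarith
  have hy : y = 3 := by omega
  subst hy
  have hz : z = 5 := by omega
  omega

lemma tri_except (x y z : ℕ) (h2x : 2 ≤ x) (h2y : 2 ≤ y) (h2z : 2 ≤ z)
    (cxy : Nat.Coprime x y) (cxz : Nat.Coprime x z) (cyz : Nat.Coprime y z)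
    (h : x * y * z < x * y + y * z + x * z) :
    ({x * y, x * z, y * z} : Multiset ℕ) = {6, 10, 15} := by
  have hne_xy : x ≠ y := by
    rintro rfl; rw [Nat.Coprime, Nat.gcd_self] at cxy; omega
  have hne_xz : x ≠ z := by
    rintro rfl; rw [Nat.Coprime, Nat.gcd_self] at cxz; omega
  have hne_yz : y ≠ z := by
    rintro rfl; rw [Nat.Coprime, Nat.gcd_self] at cyz; omega
  rcases Nat.lt_or_ge x y with h1 | h1 <;> rcases Nat.lt_or_ge x z with h2' | h2' <;>
    rcases Nat.lt_or_ge y z with h3 | h3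
  · obtain ⟨e1, e2, e3⟩ := tri_sorted x y z h2x h1 h3 cxy cxz (by nlinarith)
    subst e1; subst e2; subst e3; decide
  · obtain ⟨e1, e2, e3⟩ := tri_sorted x z y h2x (by omega) (by omega) cxz cxy (by nlinarith)
    subst e1; subst e2; subst e3; decide
  · omega
  · obtain ⟨e1, e2, e3⟩ := tri_sorted z x y h2z (by omega) (by omega) cxz.symm cyz.symm (by nlinarith)
    subst e1; subst e2; subst e3; decide
  · obtain ⟨e1, e2, e3⟩ := tri_sorted y x z h2y (by omega) (by omega) cxy.symm cyz (by nlinarith)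
    subst e1; subst e2; subst e3; decide
  · omega
  · obtain ⟨e1, e2, e3⟩ := tri_sorted y z x h2y (by omega) (by omega) cyz cxy.symm (by nlinarith)
    subst e1; subst e2; subst e3; decide
  · obtain ⟨e1, e2, e3⟩ := tri_sorted z y x h2z (by omega) (by omega) cyz.symm cxz.symm (by nlinarith)
    subst e1; subst e2; subst e3; decide


lemma two_mul_le_of_dvd_of_ne (a b : ℕ) (hb : b ≠ 0) (h : a ∣ b) (hne : a ≠ b) :
    2 * a ≤ b := by
  obtain ⟨c, rfl⟩ := h
  rcases c with _ | _ | c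
  · omega
  · omega
  · have h1 : a * 2 ≤ a * (c + 1 + 1) := Nat.mul_le_mul_left a (by omega)
    omega

lemma aux (n : ℕ) : ∀ {V : Type} [DecidableEq V] (α : V → ℕ) (s : Finset V),
    s.card ≤ n →
    (∀ v ∈ s, 2 ≤ α v) →
    (∀ v₁ ∈ s, ∀ v₂ ∈ s, ∀ v₃ ∈ s, v₁ ≠ v₂ → v₁ ≠ v₃ → v₂ ≠ v₃ →
      Nat.gcd (Nat.gcd (α v₁) (α v₂)) (α v₃) = 1) →
    (∀ v ∈ s, ¬ ∃ w ∈ s, w ≠ v ∧ 1 < Nat.gcd (α v) (α w) ∧ α v ∣ α w) →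
    ¬ (s.card = 3 ∧ s.val.map α = ({6, 10, 15} : Multiset ℕ)) →
    s.sum α ≤ s.lcm α := by
  induction n with
  | zero =>
    intro V _ α s hcard _ _ _ _
    have hs : s = ∅ := Finset.card_eq_zero.mp (by omega)
    subst hs; simp
  | succ n ih =>
    intro V _ α s hcard h2 h3 hw hnot5
    -- positivity of lcm over any subset
    have hlcmpos : ∀ t : Finset V, t ⊆ s → 0 < t.lcm α := by
      intro t hts
      rcases Nat.eq_zero_or_pos (t.lcm α) with h0 | h
      · exfalso
        rw [Finset.lcm_eq_zero_iff] at h0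
        obtain ⟨x, hx, hx0⟩ := h0
        have := h2 x (hts hx)
        omega
      · exact h
    have hLpos : 0 < s.lcm α := hlcmpos s (le_refl s)
    -- triple-divisor helper
    have htri : ∀ d : ℕ, ∀ a ∈ s, ∀ b ∈ s, ∀ c ∈ s, a ≠ b → a ≠ c → b ≠ c →
        d ∣ α a → d ∣ α b → d ∣ α c → d = 1 := by
      intro d a ha b hb c hc hab hac hbc d1 d2 d3
      have h := h3 a ha b hb c hc hab hac hbc
      exact Nat.dvd_one.mp (h ▸ Nat.dvd_gcd (Nat.dvd_gcd d1 d2) d3)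
    by_cases hc0 : s.card = 0
    · have hs : s = ∅ := Finset.card_eq_zero.mp hc0
      subst hs; simp
    by_cases hc1 : s.card = 1
    · obtain ⟨v, rfl⟩ := Finset.card_eq_one.mp hc1
      have := Nat.le_of_dvd hLpos (Finset.dvd_lcm (Finset.mem_singleton_self v))
      simpa [Finset.sum_singleton] using this
    have hbig : 2 ≤ s.card := by omega
    by_cases hsat : ∀ v ∈ s, α v ∣ (s.erase v).lcm α
    · -- SATURATED CASE
      -- every vertex has a neighbor avoiding any given other vertex
      have hnb : ∀ w ∈ s, ∀ v ∈ s, v ≠ w →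
          ∃ u, u ∈ s ∧ u ≠ w ∧ u ≠ v ∧ 1 < Nat.gcd (α w) (α u) := by
        intro w hws v hvs hvw
        by_contra hno
        push_neg at hno
        have hwpos : 2 ≤ α w := h2 w hws
        have hcopR : Nat.Coprime (α w) (((s.erase w).erase v).lcm α) := by
          have h1 : ((s.erase w).erase v).lcm α ∣ ((s.erase w).erase v).prod α :=
            Finset.lcm_dvd (fun b hb => Finset.dvd_prod_of_mem α hb)
          have h2p : Nat.Coprime (α w) (((s.erase w).erase v).prod α) := by
            apply Nat.Coprime.prod_right
            intro x hx
            have hx1 : x ≠ v := Finset.ne_of_mem_erase hx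
            have hx2 : x ∈ s.erase w := Finset.mem_of_mem_erase hx
            have hx3 : x ≠ w := Finset.ne_of_mem_erase hx2
            have hxs : x ∈ s := Finset.mem_of_mem_erase hx2
            have hle := hno x hxs hx3 hx1
            have hg0 : Nat.gcd (α w) (α x) ≠ 0 := by
              intro h0
              have := Nat.eq_zero_of_gcd_eq_zero_left h0
              omega
            have : Nat.gcd (α w) (α x) = 1 := by omega
            exact this
          exact Nat.Coprime.coprime_dvd_right h1 h2p
        have hsatw := hsat w hws
        have hdvd2 : (s.erase w).lcm α ∣
            Nat.lcm (α v) (((s.erase w).erase v).lcm α) := by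
          apply Finset.lcm_dvd
          intro b hb
          by_cases hbv : b = v
          · subst hbv; exact Nat.dvd_lcm_left _ _
          · have hbe : b ∈ (s.erase w).erase v := Finset.mem_erase.mpr ⟨hbv, hb⟩
            exact (Finset.dvd_lcm hbe).trans (Nat.dvd_lcm_right _ _)
        have hdvd3 : α w ∣ α v * ((s.erase w).erase v).lcm α :=
          (hsatw.trans hdvd2).trans (Nat.lcm_dvd_mul _ _)
        have hdvd4 : α w ∣ α v := hcopR.dvd_of_dvd_mul_right hdvd3
        exact hw w hws ⟨v, hvs, hvw, by rw [Nat.gcd_eq_left hdvd4]; omega, hdvd4⟩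
      rcases Nat.lt_or_ge s.card 4 with hc4 | hc4
      · rcases Nat.lt_or_ge s.card 3 with hc3 | hc3
        · -- card = 2 : impossible
          exfalso
          have hc2 : s.card = 2 := by omega
          obtain ⟨a, b, hab, rfl⟩ := Finset.card_eq_two.mp hc2
          obtain ⟨u, hus, hua, hub, _⟩ := hnb a (by simp) b (by simp) (Ne.symm hab)
          rcases Finset.mem_insert.mp hus with rfl | husb
          · exact hua rfl
          · exact hub (Finset.mem_singleton.mp husb)
        · -- card = 3
          have hc3' : s.card = 3 := by omega
          obtain ⟨a, b, c, hab, hac, hbc, rfl⟩ := Finset.card_eq_three.mp hc3'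
          have has : a ∈ ({a, b, c} : Finset V) := by simp
          have hbs : b ∈ ({a, b, c} : Finset V) := by simp
          have hcs : c ∈ ({a, b, c} : Finset V) := by simp
          have cop_ab_ac : Nat.Coprime (Nat.gcd (α a) (α b)) (Nat.gcd (α a) (α c)) :=
            htri _ a has b hbs c hcs hab hac hbc
              ((Nat.gcd_dvd_left _ _).trans (Nat.gcd_dvd_left _ _))
              ((Nat.gcd_dvd_left _ _).trans (Nat.gcd_dvd_right _ _))
              ((Nat.gcd_dvd_right _ _).trans (Nat.gcd_dvd_right _ _))
          have cop_ab_bc : Nat.Coprime (Nat.gcd (α a) (α b)) (Nat.gcd (α b) (α c)) :=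
            htri _ a has b hbs c hcs hab hac hbc
              ((Nat.gcd_dvd_left _ _).trans (Nat.gcd_dvd_left _ _))
              ((Nat.gcd_dvd_left _ _).trans (Nat.gcd_dvd_right _ _))
              ((Nat.gcd_dvd_right _ _).trans (Nat.gcd_dvd_right _ _))
          have cop_ac_bc : Nat.Coprime (Nat.gcd (α a) (α c)) (Nat.gcd (α b) (α c)) :=
            htri _ a has c hcs b hbs hac hab hbc.symm
              ((Nat.gcd_dvd_left _ _).trans (Nat.gcd_dvd_left _ _))
              ((Nat.gcd_dvd_left _ _).trans (Nat.gcd_dvd_right _ _))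
              ((Nat.gcd_dvd_right _ _).trans (Nat.gcd_dvd_left _ _))
          have hdvd_bc : (({a, b, c} : Finset V).erase a).lcm α ∣ Nat.lcm (α b) (α c) := by
            apply Finset.lcm_dvd
            intro x hx
            have hxne : x ≠ a := Finset.ne_of_mem_erase hx
            have hxm : x ∈ ({a, b, c} : Finset V) := Finset.mem_of_mem_erase hx
            rcases Finset.mem_insert.mp hxm with rfl | hx2
            · exact absurd rfl hxne
            rcases Finset.mem_insert.mp hx2 with rfl | hx3
            · exact Nat.dvd_lcm_left _ _
            · have := Finset.mem_singleton.mp hx3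
              subst this
              exact Nat.dvd_lcm_right _ _
          have hdvd_ac : (({a, b, c} : Finset V).erase b).lcm α ∣ Nat.lcm (α a) (α c) := by
            apply Finset.lcm_dvd
            intro x hx
            have hxne : x ≠ b := Finset.ne_of_mem_erase hx
            have hxm : x ∈ ({a, b, c} : Finset V) := Finset.mem_of_mem_erase hx
            rcases Finset.mem_insert.mp hxm with rfl | hx2
            · exact Nat.dvd_lcm_left _ _
            rcases Finset.mem_insert.mp hx2 with rfl | hx3
            · exact absurd rfl hxne
            · have := Finset.mem_singleton.mp hx3
              subst this
              exact Nat.dvd_lcm_right _ _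
          have hdvd_ab : (({a, b, c} : Finset V).erase c).lcm α ∣ Nat.lcm (α a) (α b) := by
            apply Finset.lcm_dvd
            intro x hx
            have hxne : x ≠ c := Finset.ne_of_mem_erase hx
            have hxm : x ∈ ({a, b, c} : Finset V) := Finset.mem_of_mem_erase hx
            rcases Finset.mem_insert.mp hxm with rfl | hx2
            · exact Nat.dvd_lcm_left _ _
            rcases Finset.mem_insert.mp hx2 with rfl | hx3
            · exact Nat.dvd_lcm_right _ _
            · have := Finset.mem_singleton.mp hx3
              subst this
              exact absurd rfl hxne
          have hsa : α a ∣ α b * α c :=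
            ((hsat a has).trans hdvd_bc).trans (Nat.lcm_dvd_mul _ _)
          have hsb : α b ∣ α a * α c :=
            ((hsat b hbs).trans hdvd_ac).trans (Nat.lcm_dvd_mul _ _)
          have hsc : α c ∣ α a * α b :=
            ((hsat c hcs).trans hdvd_ab).trans (Nat.lcm_dvd_mul _ _)
          have hsplit_a : α a = Nat.gcd (α a) (α b) * Nat.gcd (α a) (α c) := by
            apply Nat.dvd_antisymm
            · have h1 : Nat.gcd (α a) (α b * α c) = α a := Nat.gcd_eq_left hsa
              have hgm : Nat.gcd (α a) (α b * α c) ∣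
                  Nat.gcd (α a) (α b) * Nat.gcd (α a) (α c) :=
                gcd_mul_dvd_mul_gcd (α a) (α b) (α c)
              rwa [h1] at hgm
            · exact cop_ab_ac.mul_dvd_of_dvd_of_dvd (Nat.gcd_dvd_left _ _)
                (Nat.gcd_dvd_left _ _)
          have hsplit_b : α b = Nat.gcd (α a) (α b) * Nat.gcd (α b) (α c) := by
            apply Nat.dvd_antisymm
            · have h1 : Nat.gcd (α b) (α a * α c) = α b := Nat.gcd_eq_left hsb
              have hgm : Nat.gcd (α b) (α a * α c) ∣
                  Nat.gcd (α b) (α a) * Nat.gcd (α b) (α c) :=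
                gcd_mul_dvd_mul_gcd (α b) (α a) (α c)
              rw [h1, Nat.gcd_comm (α b) (α a)] at hgm
              exact hgm
            · exact cop_ab_bc.mul_dvd_of_dvd_of_dvd (Nat.gcd_dvd_right _ _)
                (Nat.gcd_dvd_left _ _)
          have hsplit_c : α c = Nat.gcd (α a) (α c) * Nat.gcd (α b) (α c) := by
            apply Nat.dvd_antisymm
            · have h1 : Nat.gcd (α c) (α a * α b) = α c := Nat.gcd_eq_left hsc
              have hgm : Nat.gcd (α c) (α a * α b) ∣
                  Nat.gcd (α c) (α a) * Nat.gcd (α c) (α b) :=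
                gcd_mul_dvd_mul_gcd (α c) (α a) (α b)
              rw [h1, Nat.gcd_comm (α c) (α a), Nat.gcd_comm (α c) (α b)] at hgm
              exact hgm
            · exact cop_ac_bc.mul_dvd_of_dvd_of_dvd (Nat.gcd_dvd_right _ _)
                (Nat.gcd_dvd_right _ _)
          have ha2 : 2 ≤ α a := h2 a has
          have hb2 : 2 ≤ α b := h2 b hbs
          have hgab_pos : 0 < Nat.gcd (α a) (α b) :=
            Nat.gcd_pos_of_pos_left _ (by omega)
          have hgac_pos : 0 < Nat.gcd (α a) (α c) :=
            Nat.gcd_pos_of_pos_left _ (by omega)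
          have hgbc_pos : 0 < Nat.gcd (α b) (α c) :=
            Nat.gcd_pos_of_pos_left _ (by omega)
          have h2ab : 2 ≤ Nat.gcd (α a) (α b) := by
            by_contra hlt
            push_neg at hlt
            have h1 : Nat.gcd (α a) (α b) = 1 := by omega
            rw [h1, one_mul] at hsplit_a
            refine hw a has ⟨c, hcs, Ne.symm hac, ?_, ?_⟩
            · rw [← hsplit_a]; omega
            · rw [hsplit_a]; exact Nat.gcd_dvd_right _ _
          have h2ac : 2 ≤ Nat.gcd (α a) (α c) := by
            by_contra hlt
            push_neg at hlt
            have h1 : Nat.gcd (α a) (α c) = 1 := by omega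
            rw [h1, mul_one] at hsplit_a
            refine hw a has ⟨b, hbs, Ne.symm hab, ?_, ?_⟩
            · rw [← hsplit_a]; omega
            · rw [hsplit_a]; exact Nat.gcd_dvd_right _ _
          have h2bc : 2 ≤ Nat.gcd (α b) (α c) := by
            by_contra hlt
            push_neg at hlt
            have h1 : Nat.gcd (α b) (α c) = 1 := by omega
            rw [h1, mul_one] at hsplit_b
            refine hw b hbs ⟨a, has, hab, ?_, ?_⟩
            · rw [Nat.gcd_comm (α b) (α a), ← hsplit_b]; omega
            · rw [hsplit_b]; exact Nat.gcd_dvd_left _ _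
          have hProd_dvd : Nat.gcd (α a) (α b) * Nat.gcd (α a) (α c) *
              Nat.gcd (α b) (α c) ∣ ({a, b, c} : Finset V).lcm α := by
            have hco : Nat.Coprime (Nat.gcd (α a) (α b) * Nat.gcd (α a) (α c))
                (Nat.gcd (α b) (α c)) := Nat.Coprime.mul cop_ab_bc cop_ac_bc
            apply hco.mul_dvd_of_dvd_of_dvd
            · rw [← hsplit_a]; exact Finset.dvd_lcm has
            · exact (Nat.gcd_dvd_left (α b) (α c)).trans (Finset.dvd_lcm hbs)
          have hsum3 : ({a, b, c} : Finset V).sum α = α a + (α b + α c) := by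
            rw [Finset.sum_insert (by simp [hab, hac]),
              Finset.sum_insert (by simp [hbc]), Finset.sum_singleton]
          by_cases hfin : Nat.gcd (α a) (α b) * Nat.gcd (α a) (α c) *
              Nat.gcd (α b) (α c) <
              Nat.gcd (α a) (α b) * Nat.gcd (α a) (α c) +
              Nat.gcd (α a) (α c) * Nat.gcd (α b) (α c) +
              Nat.gcd (α a) (α b) * Nat.gcd (α b) (α c)
          · exfalso
            have hms := tri_except _ _ _ h2ab h2ac h2bc cop_ab_ac cop_ab_bc
              cop_ac_bc hfin
            apply hnot5
            refine ⟨hc3', ?_⟩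
            have hval : ({a, b, c} : Finset V).val = a ::ₘ b ::ₘ c ::ₘ 0 := by
              rw [show ({a, b, c} : Finset V) = insert a (insert b {c}) from rfl]
              rw [Finset.insert_val_of_notMem (by simp [hab, hac]),
                Finset.insert_val_of_notMem (by simp [hbc])]
              rfl
            have hmap : (α a ::ₘ α b ::ₘ α c ::ₘ 0 : Multiset ℕ)
                = (Nat.gcd (α a) (α b) * Nat.gcd (α a) (α c)) ::ₘ
                  (Nat.gcd (α a) (α b) * Nat.gcd (α b) (α c)) ::ₘ
                  (Nat.gcd (α a) (α c) * Nat.gcd (α b) (α c)) ::ₘ 0 := by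
              rw [← hsplit_a, ← hsplit_b, ← hsplit_c]
            rw [hval]
            simp only [Multiset.map_cons, Multiset.map_zero]
            exact hmap.trans hms
          · have hle := Nat.le_of_not_lt hfin
            have hPL := Nat.le_of_dvd hLpos hProd_dvd
            omega
      · -- card ≥ 4
        have key : ∀ v ∈ s, s.card * α v ≤ s.lcm α := by
          intro v hvs
          have H : ∀ w : {x // x ∈ s.erase v}, ∃ u, u ∈ s ∧ u ≠ w.1 ∧ u ≠ v ∧
              1 < Nat.gcd (α w.1) (α u) := by
            rintro ⟨w, hwE⟩
            exact hnb w (Finset.mem_of_mem_erase hwE) v hvs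
              (Ne.symm (Finset.ne_of_mem_erase hwE))
          choose u hu1 hu2 hu3 hu4 using H
          set f : {x // x ∈ s.erase v} → ℕ :=
            fun w => Nat.gcd (α w.1) (α (u w)) with hf
          have hfdvd : ∀ w, f w ∣ α w.1 := fun w => Nat.gcd_dvd_left _ _
          have hfdvd2 : ∀ w, f w ∣ α (u w) := fun w => Nat.gcd_dvd_right _ _
          have hf2 : ∀ w, 2 ≤ f w := fun w => hu4 w
          have hwmem : ∀ w : {x // x ∈ s.erase v}, w.1 ∈ s :=
            fun w => Finset.mem_of_mem_erase w.2
          have hwnev : ∀ w : {x // x ∈ s.erase v}, w.1 ≠ v :=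
            fun w => Finset.ne_of_mem_erase w.2
          set T := (s.erase v).attach.image f with hT
          have hT2 : ∀ x ∈ T, 2 ≤ x := by
            intro x hx
            obtain ⟨w, -, rfl⟩ := Finset.mem_image.mp hx
            exact hf2 w
          have hTdvdL : ∀ x ∈ T, x ∣ s.lcm α := by
            intro x hx
            obtain ⟨w, -, rfl⟩ := Finset.mem_image.mp hx
            exact (hfdvd w).trans (Finset.dvd_lcm (hwmem w))
          have hTcop : ∀ x ∈ T, ∀ y ∈ T, x ≠ y → Nat.Coprime x y := by
            intro x hx y hy hxy
            obtain ⟨w1, -, rfl⟩ := Finset.mem_image.mp hx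
            obtain ⟨w2, -, rfl⟩ := Finset.mem_image.mp hy
            have hww : w1.1 ≠ w2.1 := by
              intro e
              exact hxy (congrArg f (Subtype.ext e))
            by_cases e1 : u w1 = w2.1
            · by_cases e2 : u w2 = w1.1
              · exfalso
                apply hxy
                have t1 : f w1 = Nat.gcd (α w1.1) (α w2.1) := by
                  simp only [hf]
                  rw [e1]
                have t2 : f w2 = Nat.gcd (α w2.1) (α w1.1) := by
                  simp only [hf]
                  rw [e2]
                rw [t1, t2, Nat.gcd_comm]
              · exact htri _ w1.1 (hwmem w1) w2.1 (hwmem w2) (u w2) (hu1 w2)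
                  hww (fun h => e2 h.symm) (Ne.symm (hu2 w2))
                  ((Nat.gcd_dvd_left _ _).trans (hfdvd w1))
                  ((Nat.gcd_dvd_right _ _).trans (hfdvd w2))
                  ((Nat.gcd_dvd_right _ _).trans (hfdvd2 w2))
            · exact htri _ w1.1 (hwmem w1) (u w1) (hu1 w1) w2.1 (hwmem w2)
                (Ne.symm (hu2 w1)) hww e1
                ((Nat.gcd_dvd_left _ _).trans (hfdvd w1))
                ((Nat.gcd_dvd_left _ _).trans (hfdvd2 w1))
                ((Nat.gcd_dvd_right _ _).trans (hfdvd w2))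
          have hcard2 : (s.erase v).card ≤ 2 * T.card := by
            have hb : ∀ b ∈ (s.erase v).attach.image f,
                ((s.erase v).attach.filter (fun x => f x = b)).card ≤ 2 := by
              intro b hbmem
              by_contra hgt
              push_neg at hgt
              obtain ⟨F, hFsub, hF3⟩ := Finset.exists_subset_card_eq
                (show 3 ≤ ((s.erase v).attach.filter (fun x => f x = b)).card by omega)
              obtain ⟨x, y, z, hxy, hxz, hyz, rfl⟩ := Finset.card_eq_three.mp hF3
              have hxf := Finset.mem_filter.mp (hFsub (Finset.mem_insert_self x {y, z}))
              have hyf := Finset.mem_filter.mp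
                (hFsub (Finset.mem_insert_of_mem (Finset.mem_insert_self y {z})))
              have hzf := Finset.mem_filter.mp
                (hFsub (Finset.mem_insert_of_mem
                  (Finset.mem_insert_of_mem (Finset.mem_singleton_self z))))
              have hb2 : 2 ≤ b := by rw [← hxf.2]; exact hf2 x
              have hd1 : b ∣ α x.1 := hxf.2 ▸ hfdvd x
              have hd2 : b ∣ α y.1 := hyf.2 ▸ hfdvd y
              have hd3 : b ∣ α z.1 := hzf.2 ▸ hfdvd z
              have := htri b x.1 (hwmem x) y.1 (hwmem y) z.1 (hwmem z)
                (fun h => hxy (Subtype.ext h)) (fun h => hxz (Subtype.ext h))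
                (fun h => hyz (Subtype.ext h)) hd1 hd2 hd3
              omega
            have hcc := Finset.card_le_mul_card_image ((s.erase v).attach) 2 hb
            rw [Finset.card_attach] at hcc
            exact hcc
          have hEcard : (s.erase v).card = s.card - 1 :=
            Finset.card_erase_of_mem hvs
          have hk2 : 2 ≤ T.card := by omega
          have hfact := prod_ge_factorial T.card T rfl hT2
          have hfact2 := two_mul_add_one_le_factorial T.card hk2
          have hscard_le : s.card ≤ T.prod id := by omega
          have hcopv : Nat.Coprime (α v) (T.prod id) := by
            apply Nat.Coprime.prod_right
            intro i hi
            obtain ⟨w, -, rfl⟩ := Finset.mem_image.mp hi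
            exact htri _ v hvs w.1 (hwmem w) (u w) (hu1 w)
              (Ne.symm (hwnev w)) (Ne.symm (hu3 w)) (Ne.symm (hu2 w))
              (Nat.gcd_dvd_left _ _)
              ((Nat.gcd_dvd_right _ _).trans (hfdvd w))
              ((Nat.gcd_dvd_right _ _).trans (hfdvd2 w))
          have hTprod : T.prod id ∣ s.lcm α :=
            prod_pairwise_coprime_dvd T _ hTcop hTdvdL
          have hmuldvd : α v * T.prod id ∣ s.lcm α :=
            hcopv.mul_dvd_of_dvd_of_dvd (Finset.dvd_lcm hvs) hTprod
          calc s.card * α v ≤ T.prod id * α v := Nat.mul_le_mul_right _ hscard_le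
          _ = α v * T.prod id := Nat.mul_comm _ _
          _ ≤ s.lcm α := Nat.le_of_dvd hLpos hmuldvd
        have hsum_le : s.card * s.sum α ≤ s.card * s.lcm α := by
          rw [Finset.mul_sum]
          calc ∑ v ∈ s, s.card * α v ≤ ∑ _v ∈ s, s.lcm α := Finset.sum_le_sum key
          _ = s.card * s.lcm α := by rw [Finset.sum_const, smul_eq_mul]
        exact Nat.le_of_mul_le_mul_left hsum_le (by omega)
    · -- NON-SATURATED CASE
      push_neg at hsat
      obtain ⟨v, hvs, hnd⟩ := hsat
      have hvpos : 2 ≤ α v := h2 v hvs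
      have hins : insert v (s.erase v) = s := Finset.insert_erase hvs
      have hlcm : s.lcm α = Nat.lcm (α v) ((s.erase v).lcm α) := by
        conv_lhs => rw [← hins]
        rw [Finset.lcm_insert]
        rfl
      have hkey : Nat.gcd (α v) ((s.erase v).lcm α) * s.lcm α
          = α v * (s.erase v).lcm α := by
        rw [hlcm]; exact Nat.gcd_mul_lcm _ _
      have hdpos : 0 < Nat.gcd (α v) ((s.erase v).lcm α) :=
        Nat.gcd_pos_of_pos_left _ (by omega)
      have hdv : Nat.gcd (α v) ((s.erase v).lcm α) ∣ α v := Nat.gcd_dvd_left _ _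
      have hdL' : Nat.gcd (α v) ((s.erase v).lcm α) ∣ (s.erase v).lcm α :=
        Nat.gcd_dvd_right _ _
      have hdnev : Nat.gcd (α v) ((s.erase v).lcm α) ≠ α v := by
        intro h
        exact hnd (h ▸ hdL')
      have h2dv : 2 * Nat.gcd (α v) ((s.erase v).lcm α) ≤ α v :=
        two_mul_le_of_dvd_of_ne _ _ (by omega) hdv hdnev
      have hL'pos : 0 < (s.erase v).lcm α := hlcmpos _ (Finset.erase_subset v s)
      have hne' : (s.erase v).Nonempty := by
        rw [← Finset.card_pos, Finset.card_erase_of_mem hvs]; omega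
      have hdneL' : Nat.gcd (α v) ((s.erase v).lcm α) ≠ (s.erase v).lcm α := by
        intro hdl
        obtain ⟨w, hws'⟩ := hne'
        have hws : w ∈ s := Finset.mem_of_mem_erase hws'
        have hwv : w ≠ v := Finset.ne_of_mem_erase hws'
        have hwd : α w ∣ α v := (Finset.dvd_lcm hws').trans (hdl ▸ hdv)
        have hw2 : 2 ≤ α w := h2 w hws
        exact hw w hws ⟨v, hvs, Ne.symm hwv,
          by rw [Nat.gcd_eq_left hwd]; omega, hwd⟩
      have h2dL' : 2 * Nat.gcd (α v) ((s.erase v).lcm α) ≤ (s.erase v).lcm α :=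
        two_mul_le_of_dvd_of_ne _ _ (by omega) hdL' hdneL'
      have hL2L' : 2 * (s.erase v).lcm α ≤ s.lcm α := by
        have h1 : Nat.gcd (α v) ((s.erase v).lcm α) * (2 * (s.erase v).lcm α)
            ≤ Nat.gcd (α v) ((s.erase v).lcm α) * s.lcm α := by
          calc Nat.gcd (α v) ((s.erase v).lcm α) * (2 * (s.erase v).lcm α)
              = (2 * Nat.gcd (α v) ((s.erase v).lcm α)) * (s.erase v).lcm α := by ring
          _ ≤ α v * (s.erase v).lcm α := Nat.mul_le_mul_right _ h2dv
          _ = Nat.gcd (α v) ((s.erase v).lcm α) * s.lcm α := hkey.symm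
        exact Nat.le_of_mul_le_mul_left h1 hdpos
      have hL2v : 2 * α v ≤ s.lcm α := by
        have h1 : Nat.gcd (α v) ((s.erase v).lcm α) * (2 * α v)
            ≤ Nat.gcd (α v) ((s.erase v).lcm α) * s.lcm α := by
          calc Nat.gcd (α v) ((s.erase v).lcm α) * (2 * α v)
              = α v * (2 * Nat.gcd (α v) ((s.erase v).lcm α)) := by ring
          _ ≤ α v * (s.erase v).lcm α := Nat.mul_le_mul_left _ h2dL'
          _ = Nat.gcd (α v) ((s.erase v).lcm α) * s.lcm α := hkey.symm
        exact Nat.le_of_mul_le_mul_left h1 hdpos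
      have hsum : α v + (s.erase v).sum α = s.sum α := Finset.add_sum_erase s α hvs
      have h2' : ∀ x ∈ s.erase v, 2 ≤ α x :=
        fun x hx => h2 x (Finset.mem_of_mem_erase hx)
      have h3' : ∀ v₁ ∈ s.erase v, ∀ v₂ ∈ s.erase v, ∀ v₃ ∈ s.erase v,
          v₁ ≠ v₂ → v₁ ≠ v₃ → v₂ ≠ v₃ →
          Nat.gcd (Nat.gcd (α v₁) (α v₂)) (α v₃) = 1 :=
        fun a ha b hb c hc => h3 a (Finset.mem_of_mem_erase ha)
          b (Finset.mem_of_mem_erase hb) c (Finset.mem_of_mem_erase hc)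
      have hw' : ∀ x ∈ s.erase v, ¬ ∃ w ∈ s.erase v,
          w ≠ x ∧ 1 < Nat.gcd (α x) (α w) ∧ α x ∣ α w := by
        rintro x hx ⟨w, hw1, hw2⟩
        exact hw x (Finset.mem_of_mem_erase hx)
          ⟨w, Finset.mem_of_mem_erase hw1, hw2⟩
      by_cases hexc : (s.erase v).card = 3 ∧
          (s.erase v).val.map α = ({6, 10, 15} : Multiset ℕ)
      · have hS' : (s.erase v).sum α = 31 := by
          have h0 : (s.erase v).sum α = ((s.erase v).val.map α).sum := rfl
          rw [h0, hexc.2]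
          decide
        have hL'30 : (s.erase v).lcm α = 30 := by
          have h0 : (s.erase v).lcm α = ((s.erase v).val.map α).lcm := rfl
          rw [h0, hexc.2]
          decide
        have hv30 : α v ≠ 30 := by
          intro hv30
          have h6 : (6 : ℕ) ∈ (s.erase v).val.map α := by rw [hexc.2]; decide
          obtain ⟨w, hwval, hw6⟩ := Multiset.mem_map.mp h6
          have hws' : w ∈ s.erase v := hwval
          have hws : w ∈ s := Finset.mem_of_mem_erase hws'
          refine hw w hws ⟨v, hvs, Ne.symm (Finset.ne_of_mem_erase hws'), ?_, ?_⟩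
          · rw [hw6, hv30]; decide
          · rw [hw6, hv30]; decide
        rw [hL'30] at hL2L'
        omega
      · have hIH : (s.erase v).sum α ≤ (s.erase v).lcm α :=
          ih α (s.erase v) (by rw [Finset.card_erase_of_mem hvs]; omega)
            h2' h3' hw' hexc
        omega


/-- a WP-weight system on a finite set, without weak vertices,
which is not a three-element set with multiset of weights `{6, 10, 15}`,
satisfies `lcm ≥ Σ`. -/
theorem stmt7 {V : Type} [Fintype V] [DecidableEq V] (α : V → ℕ)
    (hWP : WPSystem α)
    (hweak : ∀ v : V, ¬ IsWeak α v)
    (hnot : ¬ (Fintype.card V = 3 ∧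
      Finset.univ.val.map α = ({6, 10, 15} : Multiset ℕ))) :
    ∑ v : V, α v ≤ Finset.univ.lcm α := by
  obtain ⟨h2, h3⟩ := hWP
  apply aux (Fintype.card V) α Finset.univ (le_of_eq Finset.card_univ)
    (fun v _ => h2 v)
    (fun a _ b _ c _ => h3 a b c)
    (fun v _ h => hweak v (by obtain ⟨w, _, hw⟩ := h; exact ⟨w, hw⟩))
    (by rwa [Finset.card_univ])
end

section
/- Let α : V → ℕ be a WP-weight system on a finite set V and let d₁, d₂ be positive integers such that: (a) for every v ∈ V, α(v) divides d₁ or α(v) divides d₂; and (b) for any two distinct vertices v, w ∈ V with gcd(α(v), α(w)) > 1, the number gcd(α(v), α(w)) divides both d₁ and d₂. Then V is a disjoint union V = V₁ ⊔ V₂ such that, for each i ∈ {1, 2}: the restriction of α to V_i is a WP-weight system none of whose vertices is weak (with respect to the coprimality graph induced on V_i); no connected component of the coprimality graph induced on V_i consists of exactly three vertices whose multiset of weights is {6, 10, 15}; and lcm_{v ∈ V_i} α(v) divides d_i. -/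
/-- The restriction of `α` to `S` is a WP-weight system. -/
def WPOn {V : Type} (α : V → ℕ) (S : Finset V) : Prop :=
  (∀ v ∈ S, 2 ≤ α v) ∧
    ∀ v₁ ∈ S, ∀ v₂ ∈ S, ∀ v₃ ∈ S, v₁ ≠ v₂ → v₁ ≠ v₃ → v₂ ≠ v₃ →
      Nat.gcd (Nat.gcd (α v₁) (α v₂)) (α v₃) = 1

/-- `v` is a weak vertex of the coprimality graph induced on `S`. -/
def WeakOn {V : Type} (α : V → ℕ) (S : Finset V) (v : V) : Prop :=
  ∃ w ∈ S, w ≠ v ∧ 1 < Nat.gcd (α v) (α w) ∧ α v ∣ α w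

/-- No connected component of the coprimality graph induced on `S` consists of
exactly three vertices whose multiset of weights is `{6, 10, 15}`. -/
def NoBadComponent {V : Type} (α : V → ℕ) (S : Finset V) : Prop :=
  ¬ ∃ (c : ((coprimeGraph α).induce (S : Set V)).ConnectedComponent)
      (v₁ v₂ v₃ : (S : Set V)), v₁ ≠ v₂ ∧ v₁ ≠ v₃ ∧ v₂ ≠ v₃ ∧
      c.supp = {v₁, v₂, v₃} ∧
      ({α v₁.1, α v₂.1, α v₃.1} : Multiset ℕ) = ({6, 10, 15} : Multiset ℕ)

open Classical in
noncomputable def myBase {V : Type} (α : V → ℕ) (d₁ : ℕ) (v : V) : ℕ :=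
  if ((∃ a, α a = 6) ∧ (∃ b, α b = 10) ∧ (∃ c, α c = 15)) ∧ α v = 6 then 1
  else if ((∃ a, α a = 6) ∧ (∃ b, α b = 10) ∧ (∃ c, α c = 15)) ∧ (α v = 10 ∨ α v = 15) then 2
  else if α v ∣ d₁ then 1 else 2

open Classical in
noncomputable def mySide {V : Type} [Fintype V] (α : V → ℕ) (d₁ : ℕ) (v : V) : ℕ :=
  if h : IsWeak α v then
    if IsWeak α h.choose then
      (if (Fintype.equivFin V v : ℕ) < (Fintype.equivFin V h.choose : ℕ) then 1 else 2)
    else 3 - myBase α d₁ h.choose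
  else myBase α d₁ v

set_option maxHeartbeats 1000000 in
/-- a WCI-graph of codimension `2` and bidegree `(d₁, d₂)` splits
into two parts `V₁ ⊔ V₂` such that each part carries a WP-weight system with no
weak vertices, no connected component of the induced coprimality graph is a
`{6, 10, 15}`-triangle, and `lcm` of the weights on `Vᵢ` divides `dᵢ`. -/
theorem stmt8 {V : Type} [Fintype V] [DecidableEq V] (α : V → ℕ)
    (hWP : WPSystem α) (d₁ d₂ : ℕ) (hd₁ : 0 < d₁) (hd₂ : 0 < d₂)
    (ha : ∀ v : V, α v ∣ d₁ ∨ α v ∣ d₂)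
    (hb : ∀ v w : V, v ≠ w → 1 < Nat.gcd (α v) (α w) →
      Nat.gcd (α v) (α w) ∣ d₁ ∧ Nat.gcd (α v) (α w) ∣ d₂) :
    ∃ V₁ V₂ : Finset V, Disjoint V₁ V₂ ∧ V₁ ∪ V₂ = Finset.univ ∧
      (WPOn α V₁ ∧ (∀ v ∈ V₁, ¬ WeakOn α V₁ v) ∧ NoBadComponent α V₁ ∧
        V₁.lcm α ∣ d₁) ∧
      (WPOn α V₂ ∧ (∀ v ∈ V₂, ¬ WeakOn α V₂ v) ∧ NoBadComponent α V₂ ∧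
        V₂.lcm α ∣ d₂) := by
  classical
  obtain ⟨hge, hcop⟩ := hWP
  -- three distinct vertices cannot share a common factor q > 1
  have triple : ∀ (v p u : V) (q : ℕ), v ≠ p → v ≠ u → p ≠ u → 1 < q →
      q ∣ α v → q ∣ α p → q ∣ α u → False := by
    intro v p u q h1 h2 h3 hq hv hp hu
    have hc := hcop v p u h1 h2 h3
    have hdq : q ∣ 1 := hc ▸ Nat.dvd_gcd (Nat.dvd_gcd hv hp) hu
    have := Nat.le_of_dvd one_pos hdq
    omega
  -- uniqueness of the neighbor of a weak vertex
  have key : ∀ v w u : V, w ≠ v → u ≠ v → α v ∣ α w →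
      1 < Nat.gcd (α v) (α u) → u = w := by
    intro v w u hw hu hdvd hgu
    by_contra hne
    obtain ⟨p, hp, hpd⟩ := Nat.exists_prime_and_dvd
      (n := Nat.gcd (α v) (α u)) (by omega)
    have h1 : p ∣ α v := hpd.trans (Nat.gcd_dvd_left _ _)
    have h2 : p ∣ α u := hpd.trans (Nat.gcd_dvd_right _ _)
    have h3 : p ∣ α w := h1.trans hdvd
    exact triple v w u p hw.symm hu.symm (fun h => hne (h ▸ rfl)) hp.one_lt h1 h3 h2
  set T : Prop := (∃ a, α a = 6) ∧ (∃ b, α b = 10) ∧ (∃ c, α c = 15) with hTdef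
  -- a weak vertex's weight divides both degrees
  have weak_dvd : ∀ v, (h : IsWeak α v) → α v ∣ d₁ ∧ α v ∣ d₂ := by
    intro v h
    obtain ⟨hne, hgcd, hdvd⟩ := h.choose_spec
    have := hb v h.choose (Ne.symm hne) hgcd
    rwa [Nat.gcd_eq_left hdvd] at this
  -- divisibility facts for T-triangle weights
  have Tdvd6 : T → ∀ v, α v = 6 → α v ∣ d₁ := by
    rintro ⟨⟨a, ha6⟩, ⟨b, hb10⟩, ⟨c, hc15⟩⟩ v hv
    have hvb : v ≠ b := by rintro rfl; omega
    have hvc : v ≠ c := by rintro rfl; omega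
    have h2 : (2 : ℕ) ∣ d₁ := by
      have := (hb v b hvb (by rw [hv, hb10]; norm_num)).1
      rw [hv, hb10] at this; norm_num at this; exact this
    have h3 : (3 : ℕ) ∣ d₁ := by
      have := (hb v c hvc (by rw [hv, hc15]; norm_num)).1
      rw [hv, hc15] at this; norm_num at this; exact this
    have h6 : (2 * 3 : ℕ) ∣ d₁ :=
      Nat.Coprime.mul_dvd_of_dvd_of_dvd (by norm_num) h2 h3
    rw [hv]; norm_num at h6; exact h6
  have Tdvd10 : T → ∀ v, α v = 10 → α v ∣ d₂ := by
    rintro ⟨⟨a, ha6⟩, ⟨b, hb10⟩, ⟨c, hc15⟩⟩ v hv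
    have hva : v ≠ a := by rintro rfl; omega
    have hvc : v ≠ c := by rintro rfl; omega
    have h2 : (2 : ℕ) ∣ d₂ := by
      have := (hb v a hva (by rw [hv, ha6]; norm_num)).2
      rw [hv, ha6] at this; norm_num at this; exact this
    have h5 : (5 : ℕ) ∣ d₂ := by
      have := (hb v c hvc (by rw [hv, hc15]; norm_num)).2
      rw [hv, hc15] at this; norm_num at this; exact this
    have h10 : (2 * 5 : ℕ) ∣ d₂ :=
      Nat.Coprime.mul_dvd_of_dvd_of_dvd (by norm_num) h2 h5
    rw [hv]; norm_num at h10; exact h10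
  have Tdvd15 : T → ∀ v, α v = 15 → α v ∣ d₂ := by
    rintro ⟨⟨a, ha6⟩, ⟨b, hb10⟩, ⟨c, hc15⟩⟩ v hv
    have hva : v ≠ a := by rintro rfl; omega
    have hvb : v ≠ b := by rintro rfl; omega
    have h3 : (3 : ℕ) ∣ d₂ := by
      have := (hb v a hva (by rw [hv, ha6]; norm_num)).2
      rw [hv, ha6] at this; norm_num at this; exact this
    have h5 : (5 : ℕ) ∣ d₂ := by
      have := (hb v b hvb (by rw [hv, hb10]; norm_num)).2
      rw [hv, hb10] at this; norm_num at this; exact this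
    have h15 : (3 * 5 : ℕ) ∣ d₂ :=
      Nat.Coprime.mul_dvd_of_dvd_of_dvd (by norm_num) h3 h5
    rw [hv]; norm_num at h15; exact h15
  -- under T, triangle-weight vertices are not weak
  have Tnw : T → ∀ v, α v = 6 ∨ α v = 10 ∨ α v = 15 → ¬ IsWeak α v := by
    rintro ⟨⟨a, ha6⟩, ⟨b, hb10⟩, ⟨c, hc15⟩⟩ v hv hw
    obtain ⟨p, hpv, hgcd, hdvd⟩ := hw
    rcases hv with hv | hv | hv
    · -- use the 10-vertex b and prime 2
      have hvb : v ≠ b := by rintro rfl; omega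
      have hpb : p ≠ b := by
        rintro rfl
        rw [hv, hb10] at hdvd; omega
      exact triple v p b 2 (Ne.symm hpv) hvb hpb (by norm_num)
        (by rw [hv]; norm_num) (dvd_trans (by rw [hv]; norm_num) hdvd)
        (by rw [hb10]; norm_num)
    · -- use the 6-vertex a and prime 2
      have hva : v ≠ a := by rintro rfl; omega
      have hpa : p ≠ a := by
        rintro rfl
        rw [hv, ha6] at hdvd; omega
      exact triple v p a 2 (Ne.symm hpv) hva hpa (by norm_num)
        (by rw [hv]; norm_num) (dvd_trans (by rw [hv]; norm_num) hdvd)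
        (by rw [ha6]; norm_num)
    · -- use the 6-vertex a and prime 3
      have hva : v ≠ a := by rintro rfl; omega
      have hpa : p ≠ a := by
        rintro rfl
        rw [hv, ha6] at hdvd; omega
      exact triple v p a 3 (Ne.symm hpv) hva hpa (by norm_num)
        (by rw [hv]; norm_num) (dvd_trans (by rw [hv]; norm_num) hdvd)
        (by rw [ha6]; norm_num)
  have base_cases : ∀ v, myBase α d₁ v = 1 ∨ myBase α d₁ v = 2 := by
    intro v
    simp only [myBase]
    split_ifs <;> simp
  have side_cases : ∀ v, mySide α d₁ v = 1 ∨ mySide α d₁ v = 2 := by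
    intro v
    simp only [mySide]
    split_ifs with h h1 h2
    · simp
    · simp
    · rcases base_cases h.choose with hc | hc <;> rw [hc] <;> simp
    · exact base_cases v
  -- a weak vertex and its chosen partner are on different sides
  have side_partner : ∀ v, (h : IsWeak α v) →
      mySide α d₁ v ≠ mySide α d₁ h.choose := by
    intro v h
    obtain ⟨hpv, hgcd, hdvd⟩ := h.choose_spec
    by_cases hp : IsWeak α h.choose
    · have hcv : v = hp.choose := by
        refine key h.choose hp.choose v hp.choose_spec.1 (Ne.symm hpv)
          hp.choose_spec.2.2 ?_
        rw [Nat.gcd_comm]; exact hgcd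
      have hev : (Fintype.equivFin V v : ℕ) ≠ (Fintype.equivFin V h.choose : ℕ) := by
        intro hc
        exact hpv (((Fintype.equivFin V).injective (Fin.val_injective hc)).symm)
      simp only [mySide, dif_pos h, dif_pos hp]
      rw [← hcv, if_pos h]
      split_ifs <;> omega
    · simp only [mySide, dif_pos h, if_neg hp, dif_neg hp]
      rcases base_cases h.choose with hc | hc <;> rw [hc] <;> norm_num
  -- base values under T for triangle weights
  have base6 : T → ∀ u, α u = 6 → myBase α d₁ u = 1 := by
    intro hTT u hu
    simp only [myBase]
    rw [if_pos ⟨hTT, hu⟩]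
  have base1015 : T → ∀ u, α u = 10 ∨ α u = 15 → myBase α d₁ u = 2 := by
    intro hTT u hu
    have hn : ¬ (((∃ a, α a = 6) ∧ (∃ b, α b = 10) ∧ (∃ c, α c = 15)) ∧ α u = 6) := by
      rintro ⟨-, h6⟩; omega
    simp only [myBase]
    rw [if_neg hn, if_pos ⟨hTT, hu⟩]
  -- vertices on side i have weight dividing dᵢ
  have mem_dvd1 : ∀ v, mySide α d₁ v = 1 → α v ∣ d₁ := by
    intro v hs
    by_cases hw : IsWeak α v
    · exact (weak_dvd v hw).1
    · simp only [mySide, dif_neg hw, myBase] at hs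
      split_ifs at hs with h1 h2 h3
      · exact Tdvd6 h1.1 v h1.2
      · omega
      · exact h3
      · omega
  have mem_dvd2 : ∀ v, mySide α d₁ v = 2 → α v ∣ d₂ := by
    intro v hs
    by_cases hw : IsWeak α v
    · exact (weak_dvd v hw).2
    · simp only [mySide, dif_neg hw, myBase] at hs
      split_ifs at hs with h1 h2 h3
      · omega
      · rcases h2.2 with h | h
        · exact Tdvd10 h2.1 v h
        · exact Tdvd15 h2.1 v h
      · omega
      · exact (ha v).resolve_left h3
  refine ⟨Finset.univ.filter (fun v => mySide α d₁ v = 1),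
    Finset.univ.filter (fun v => ¬ (mySide α d₁ v = 1)), ?_, ?_, ?_, ?_⟩
  · exact Finset.disjoint_filter_filter_not Finset.univ Finset.univ
      (fun v => mySide α d₁ v = 1)
  · exact Finset.filter_union_filter_not_eq (fun v => mySide α d₁ v = 1) Finset.univ
  · refine ⟨⟨fun v _ => hge v, fun a _ b _ c _ => hcop a b c⟩, ?_, ?_, ?_⟩
    · -- no weak vertices on V₁
      rintro v hv ⟨w, hwS, hwv, hg, hd⟩
      have h : IsWeak α v := ⟨w, hwv, hg, hd⟩
      have hwc : w = h.choose := key v h.choose w h.choose_spec.1 hwv h.choose_spec.2.2 hg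
      have hsp := side_partner v h
      simp only [Finset.mem_filter, Finset.mem_univ, true_and] at hv hwS
      rw [hwc] at hwS
      rw [hv, hwS] at hsp
      exact hsp rfl
    · -- no bad component on V₁
      rintro ⟨c, v₁, v₂, v₃, h12, h13, h23, hsupp, hmul⟩
      have m6 : α v₁.1 = 6 ∨ α v₂.1 = 6 ∨ α v₃.1 = 6 := by
        have h6 : (6 : ℕ) ∈ ({α v₁.1, α v₂.1, α v₃.1} : Multiset ℕ) := by rw [hmul]; simp
        simp only [Multiset.insert_eq_cons, Multiset.mem_cons, Multiset.mem_singleton] at h6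
        omega
      have m10 : α v₁.1 = 10 ∨ α v₂.1 = 10 ∨ α v₃.1 = 10 := by
        have h10 : (10 : ℕ) ∈ ({α v₁.1, α v₂.1, α v₃.1} : Multiset ℕ) := by rw [hmul]; simp
        simp only [Multiset.insert_eq_cons, Multiset.mem_cons, Multiset.mem_singleton] at h10
        omega
      have m15 : α v₁.1 = 15 ∨ α v₂.1 = 15 ∨ α v₃.1 = 15 := by
        have h15 : (15 : ℕ) ∈ ({α v₁.1, α v₂.1, α v₃.1} : Multiset ℕ) := by rw [hmul]; simp
        simp only [Multiset.insert_eq_cons, Multiset.mem_cons, Multiset.mem_singleton] at h15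
        omega
      have hT : T := by
        refine ⟨?_, ?_, ?_⟩
        · rcases m6 with h | h | h
          exacts [⟨_, h⟩, ⟨_, h⟩, ⟨_, h⟩]
        · rcases m10 with h | h | h
          exacts [⟨_, h⟩, ⟨_, h⟩, ⟨_, h⟩]
        · rcases m15 with h | h | h
          exacts [⟨_, h⟩, ⟨_, h⟩, ⟨_, h⟩]
      have contra10 : ∀ u : V, α u = 10 → mySide α d₁ u ≠ 1 := by
        intro u hu
        have hnw := Tnw hT u (Or.inr (Or.inl hu))
        simp only [mySide, dif_neg hnw]
        rw [base1015 hT u (Or.inl hu)]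
        omega
      have hmem : ∀ u : (((Finset.univ.filter
          (fun v => mySide α d₁ v = 1)) : Finset V) : Set V), mySide α d₁ u.1 = 1 := by
        intro u
        have := Finset.mem_coe.mp u.2
        simp only [Finset.mem_filter, Finset.mem_univ, true_and] at this
        exact this
      rcases m10 with h | h | h
      · exact contra10 v₁.1 h (hmem v₁)
      · exact contra10 v₂.1 h (hmem v₂)
      · exact contra10 v₃.1 h (hmem v₃)
    · -- lcm divides d₁
      refine Finset.lcm_dvd ?_
      intro b hbmem
      simp only [Finset.mem_filter, Finset.mem_univ, true_and] at hbmem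
      exact mem_dvd1 b hbmem
  · refine ⟨⟨fun v _ => hge v, fun a _ b _ c _ => hcop a b c⟩, ?_, ?_, ?_⟩
    · -- no weak vertices on V₂
      rintro v hv ⟨w, hwS, hwv, hg, hd⟩
      have h : IsWeak α v := ⟨w, hwv, hg, hd⟩
      have hwc : w = h.choose := key v h.choose w h.choose_spec.1 hwv h.choose_spec.2.2 hg
      have hsp := side_partner v h
      simp only [Finset.mem_filter, Finset.mem_univ, true_and] at hv hwS
      rw [hwc] at hwS
      have hv2 := (side_cases v).resolve_left hv
      have hw2 := (side_cases h.choose).resolve_left hwS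
      rw [hv2, hw2] at hsp
      exact hsp rfl
    · -- no bad component on V₂
      rintro ⟨c, v₁, v₂, v₃, h12, h13, h23, hsupp, hmul⟩
      have m6 : α v₁.1 = 6 ∨ α v₂.1 = 6 ∨ α v₃.1 = 6 := by
        have h6 : (6 : ℕ) ∈ ({α v₁.1, α v₂.1, α v₃.1} : Multiset ℕ) := by rw [hmul]; simp
        simp only [Multiset.insert_eq_cons, Multiset.mem_cons, Multiset.mem_singleton] at h6
        omega
      have m10 : α v₁.1 = 10 ∨ α v₂.1 = 10 ∨ α v₃.1 = 10 := by
        have h10 : (10 : ℕ) ∈ ({α v₁.1, α v₂.1, α v₃.1} : Multiset ℕ) := by rw [hmul]; simp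
        simp only [Multiset.insert_eq_cons, Multiset.mem_cons, Multiset.mem_singleton] at h10
        omega
      have m15 : α v₁.1 = 15 ∨ α v₂.1 = 15 ∨ α v₃.1 = 15 := by
        have h15 : (15 : ℕ) ∈ ({α v₁.1, α v₂.1, α v₃.1} : Multiset ℕ) := by rw [hmul]; simp
        simp only [Multiset.insert_eq_cons, Multiset.mem_cons, Multiset.mem_singleton] at h15
        omega
      have hT : T := by
        refine ⟨?_, ?_, ?_⟩
        · rcases m6 with h | h | h
          exacts [⟨_, h⟩, ⟨_, h⟩, ⟨_, h⟩]
        · rcases m10 with h | h | h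
          exacts [⟨_, h⟩, ⟨_, h⟩, ⟨_, h⟩]
        · rcases m15 with h | h | h
          exacts [⟨_, h⟩, ⟨_, h⟩, ⟨_, h⟩]
      have contra6 : ∀ u : V, α u = 6 → mySide α d₁ u = 1 := by
        intro u hu
        have hnw := Tnw hT u (Or.inl hu)
        simp only [mySide, dif_neg hnw]
        exact base6 hT u hu
      have hmem : ∀ u : (((Finset.univ.filter
          (fun v => ¬ (mySide α d₁ v = 1))) : Finset V) : Set V),
          ¬ (mySide α d₁ u.1 = 1) := by
        intro u
        have := Finset.mem_coe.mp u.2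
        simp only [Finset.mem_filter, Finset.mem_univ, true_and] at this
        exact this
      rcases m6 with h | h | h
      · exact hmem v₁ (contra6 v₁.1 h)
      · exact hmem v₂ (contra6 v₂.1 h)
      · exact hmem v₃ (contra6 v₃.1 h)
    · -- lcm divides d₂
      refine Finset.lcm_dvd ?_
      intro b hbmem
      simp only [Finset.mem_filter, Finset.mem_univ, true_and] at hbmem
      exact mem_dvd2 b ((side_cases b).resolve_left hbmem)
end

section
/- Let α : V → ℕ be a WP-weight system on a finite set V and let d₁, d₂ be positive integers such that: (a) for every v ∈ V, α(v) divides d₁ or α(v) divides d₂; and (b) for any two distinct vertices v, w ∈ V with gcd(α(v), α(w)) > 1, the number gcd(α(v), α(w)) divides both d₁ and d₂. Then V is a disjoint union V = V₁ ⊔ V₂ such that ∑_{v ∈ V₁} α(v) ≤ d₁ and ∑_{v ∈ V₂} α(v) ≤ d₂. -/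
section Aux

variable {V : Type} [DecidableEq V] (α : V → ℕ)

/-- Pairwise coprimality of the gcds at a common vertex, from the WP property. -/
lemma gcd_gcd_coprime (hWP : WPSystem α) {v w u : V} (hw : w ≠ v) (hu : u ≠ v)
    (hwu : w ≠ u) : Nat.Coprime (Nat.gcd (α v) (α w)) (Nat.gcd (α v) (α u)) := by
  have h3 := hWP.2 v w u hw.symm hu.symm hwu
  have hdvd : Nat.gcd (Nat.gcd (α v) (α w)) (Nat.gcd (α v) (α u)) ∣
      Nat.gcd (Nat.gcd (α v) (α w)) (α u) :=
    Nat.dvd_gcd (Nat.gcd_dvd_left _ _)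
      ((Nat.gcd_dvd_right _ _).trans (Nat.gcd_dvd_right _ _))
  rw [h3] at hdvd
  exact Nat.dvd_one.mp hdvd

/-- The product of the gcds at `v` over a set avoiding `v` divides anything
each gcd divides. -/
lemma prod_gcd_dvd (hWP : WPSystem α) {v : V} (F : Finset V) (hv : v ∉ F) {m : ℕ}
    (hm : ∀ u ∈ F, Nat.gcd (α v) (α u) ∣ m) :
    (∏ u ∈ F, Nat.gcd (α v) (α u)) ∣ m := by
  induction F using Finset.induction_on with
  | empty => simpa using one_dvd m
  | @insert w F hwF ih =>
    rw [Finset.prod_insert hwF]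
    have hwv : w ≠ v := by rintro rfl; exact hv (Finset.mem_insert_self _ _)
    have hcop : Nat.Coprime (Nat.gcd (α v) (α w)) (∏ u ∈ F, Nat.gcd (α v) (α u)) :=
      Nat.Coprime.prod_right fun u hu => by
        refine gcd_gcd_coprime α hWP hwv ?_ ?_
        · rintro rfl; exact hv (Finset.mem_insert_of_mem hu)
        · rintro rfl; exact hwF hu
    exact hcop.mul_dvd_of_dvd_of_dvd (hm w (Finset.mem_insert_self _ _))
      (ih (fun h => hv (Finset.mem_insert_of_mem h))
        (fun u hu => hm u (Finset.mem_insert_of_mem hu)))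

/-- `gcd a (lcm F α)` divides the product of the pairwise gcds. -/
lemma gcd_lcm_dvd_prod (a : ℕ) (F : Finset V) :
    Nat.gcd a (F.lcm α) ∣ ∏ u ∈ F, Nat.gcd a (α u) := by
  induction F using Finset.induction_on with
  | empty => simp
  | @insert w F hwF ih =>
    rw [Finset.lcm_insert, Finset.prod_insert hwF]
    have h1 : lcm (α w) (F.lcm α) ∣ α w * F.lcm α :=
      lcm_dvd (dvd_mul_right _ _) (dvd_mul_left _ _)
    have h2 : Nat.gcd a (lcm (α w) (F.lcm α)) ∣ Nat.gcd a (α w * F.lcm α) :=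
      Nat.gcd_dvd_gcd_of_dvd_right _ h1
    refine h2.trans ((Nat.gcd_mul_right_dvd_mul_gcd a (α w) (F.lcm α)).trans ?_)
    exact mul_dvd_mul_left _ ih

/-- A proper divisor of a positive number is at most half of it. -/
lemma two_mul_le_of_proper_dvd {a b : ℕ} (h : a ∣ b) (hne : a ≠ b) (hb : 0 < b) :
    2 * a ≤ b := by
  obtain ⟨k, rfl⟩ := h
  have hk0 : k ≠ 0 := by rintro rfl; simp at hb
  have hk1 : k ≠ 1 := by rintro rfl; simp at hne
  have : 2 ≤ k := by omega
  calc 2 * a = a * 2 := by ring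
    _ ≤ a * k := Nat.mul_le_mul_left a this

lemma lcm_pos_of_pos (F : Finset V) (h : ∀ v ∈ F, 0 < α v) : 0 < F.lcm α := by
  induction F using Finset.induction_on with
  | empty => simp
  | @insert w F hwF ih =>
    rw [Finset.lcm_insert]
    have h1 : α w ≠ 0 := by have := h w (Finset.mem_insert_self _ _); omega
    have h2 : F.lcm α ≠ 0 := by
      have := ih fun v hv => h v (Finset.mem_insert_of_mem hv); omega
    exact Nat.pos_of_ne_zero (Nat.lcm_ne_zero h1 h2)

/-- Key numerical lemma: if every element of `F` has weight `≥ 2` and the gcd of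
each weight with the lcm of the others is a proper divisor (at most half), then
the sum is bounded by the lcm. -/
lemma sum_le_lcm (F : Finset V) (h2 : ∀ v ∈ F, 2 ≤ α v)
    (hkey : ∀ v ∈ F, 2 * Nat.gcd (α v) ((F.erase v).lcm α) ≤ α v) :
    (∑ v ∈ F, α v) ≤ F.lcm α := by
  induction F using Finset.induction_on with
  | empty => simp
  | @insert a s has ih =>
    rw [Finset.lcm_insert, Finset.sum_insert has]
    have h2' : ∀ v ∈ s, 2 ≤ α v := fun v hv => h2 v (Finset.mem_insert_of_mem hv)
    have hkey' : ∀ v ∈ s, 2 * Nat.gcd (α v) ((s.erase v).lcm α) ≤ α v := by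
      intro v hv
      have hsub : s.erase v ⊆ (insert a s).erase v :=
        Finset.erase_subset_erase v (Finset.subset_insert a s)
      have hdvd : (s.erase v).lcm α ∣ ((insert a s).erase v).lcm α :=
        Finset.lcm_dvd fun b hb => Finset.dvd_lcm (hsub hb)
      have hg : Nat.gcd (α v) ((s.erase v).lcm α) ≤
          Nat.gcd (α v) (((insert a s).erase v).lcm α) := by
        refine Nat.le_of_dvd ?_ (Nat.gcd_dvd_gcd_of_dvd_right _ hdvd)
        exact Nat.gcd_pos_of_pos_left _ (by have := h2' v hv; omega)
      have := hkey v (Finset.mem_insert_of_mem hv)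
      omega
    have hsum : (∑ v ∈ s, α v) ≤ s.lcm α := ih h2' hkey'
    set A := α a with hA
    set N := s.lcm α with hN
    have hA2 : 2 ≤ A := h2 a (Finset.mem_insert_self _ _)
    have hkeya : 2 * Nat.gcd A N ≤ A := by
      have := hkey a (Finset.mem_insert_self _ _)
      rwa [Finset.erase_insert has] at this
    set c := Nat.gcd A N with hc
    rcases s.eq_empty_or_nonempty with rfl | ⟨v, hv⟩
    · simp [hN]
    · have hNpos : 0 < N := lcm_pos_of_pos α s (fun v hv => by have := h2' v hv; omega)
      have hcN : c ∣ N := Nat.gcd_dvd_right _ _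
      have hcA : c ∣ A := Nat.gcd_dvd_left _ _
      have hcpos : 0 < c := Nat.gcd_pos_of_pos_left _ (by omega)
      by_cases hcn : c = N
      · -- then N ∣ A, contradiction with hkey at v
        exfalso
        have hNA : N ∣ A := hcn ▸ hcA
        have hva : α v ∣ A := (Finset.dvd_lcm hv).trans hNA
        have hav : v ≠ a := by rintro rfl; exact has hv
        have hmem : a ∈ (insert a s).erase v :=
          Finset.mem_erase.mpr ⟨hav.symm, Finset.mem_insert_self _ _⟩
        have hdvd : α v ∣ ((insert a s).erase v).lcm α :=
          hva.trans (Finset.dvd_lcm hmem)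
        have := hkey v (Finset.mem_insert_of_mem hv)
        rw [Nat.gcd_eq_left hdvd] at this
        have := h2' v hv
        omega
      · have h2cN : 2 * c ≤ N := two_mul_le_of_proper_dvd hcN hcn hNpos
        obtain ⟨x, hAx, hx2⟩ : ∃ x, c * x = A ∧ 2 ≤ x := by
          refine ⟨A / c, Nat.mul_div_cancel' hcA, ?_⟩
          have h' : c * (A / c) = A := Nat.mul_div_cancel' hcA
          nlinarith
        have hlcm : lcm A N = x * N := by
          have ha1 : c * lcm A N = A * N := Nat.gcd_mul_lcm A N
          have ha2 : c * (x * N) = A * N := by rw [← hAx]; ring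
          exact Nat.eq_of_mul_eq_mul_left hcpos (ha1.trans ha2.symm)
        rw [hlcm]
        have hfinal : c * x + N ≤ x * N := by nlinarith
        calc A + ∑ v ∈ s, α v ≤ A + N := by omega
          _ = c * x + N := by rw [hAx]
          _ ≤ x * N := hfinal

end Aux

section Main

variable {V : Type} [Fintype V] [DecidableEq V]

/-- A vertex is *tight* if its weight equals the product of the gcds with all
other weights. -/
def TightP (α : V → ℕ) (v : V) : Prop :=
  (∏ u ∈ Finset.univ.erase v, Nat.gcd (α v) (α u)) = α v

lemma tight_dvd (α : V → ℕ) (hWP : WPSystem α) (v : V) (h : TightP α v) {m : ℕ}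
    (hm : ∀ u, u ≠ v → 1 < Nat.gcd (α v) (α u) → Nat.gcd (α v) (α u) ∣ m) :
    α v ∣ m := by
  rw [← h]
  refine prod_gcd_dvd α hWP _ (Finset.notMem_erase v _) ?_
  intro u hu
  have huv : u ≠ v := (Finset.mem_erase.mp hu).1
  rcases Nat.lt_or_ge 1 (Nat.gcd (α v) (α u)) with hg | hg
  · exact hm u huv hg
  · have hpos : 0 < Nat.gcd (α v) (α u) :=
      Nat.gcd_pos_of_pos_left _ (by have := hWP.1 v; omega)
    have hh : Nat.gcd (α v) (α u) = 1 := by omega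
    rw [hh]; exact one_dvd _

lemma tight_nbr (α : V → ℕ) (hWP : WPSystem α) (v : V) (h : TightP α v) :
    ∃ w, w ≠ v ∧ 1 < Nat.gcd (α v) (α w) := by
  by_contra hcon
  push_neg at hcon
  have hone : (∏ u ∈ Finset.univ.erase v, Nat.gcd (α v) (α u)) = 1 :=
    Finset.prod_eq_one fun u hu => by
      have huv : u ≠ v := (Finset.mem_erase.mp hu).1
      have h1 := hcon u huv
      have hpos : 0 < Nat.gcd (α v) (α u) :=
        Nat.gcd_pos_of_pos_left _ (by have := hWP.1 v; omega)
      omega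
  have := hWP.1 v
  rw [TightP, hone] at h
  omega

/-- Max-cut style coloring: there is a two-coloring agreeing with `base` on
non-tight vertices such that every tight vertex has a neighbor of the
opposite color. -/
lemma coloring_exists (α : V → ℕ) (hWP : WPSystem α) (base : V → Bool) :
    ∃ c : V → Bool, (∀ v, ¬ TightP α v → c v = base v) ∧
      ∀ v, TightP α v → ∃ w, w ≠ v ∧ 1 < Nat.gcd (α v) (α w) ∧ c w ≠ c v := by
  classical
  obtain ⟨c, hcmem, hcmax⟩ := Finset.exists_max_image
    (Finset.univ.filter fun c : V → Bool => ∀ v, ¬ TightP α v → c v = base v)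
    (fun c => (Finset.univ.filter (fun p : V × V =>
      p.1 ≠ p.2 ∧ 1 < Nat.gcd (α p.1) (α p.2) ∧ c p.1 ≠ c p.2)).card)
    ⟨base, by simp⟩
  have hcOk : ∀ v, ¬ TightP α v → c v = base v := (Finset.mem_filter.mp hcmem).2
  refine ⟨c, hcOk, ?_⟩
  intro v hv
  by_contra hcon
  push_neg at hcon
  -- hcon : ∀ w, w ≠ v → 1 < gcd (α v) (α w) → c w = c v
  set c' : V → Bool := Function.update c v (!(c v)) with hc'
  have hc'mem : c' ∈ Finset.univ.filter
      fun c : V → Bool => ∀ v, ¬ TightP α v → c v = base v := by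
    refine Finset.mem_filter.mpr ⟨Finset.mem_univ _, fun u hu => ?_⟩
    have huv : u ≠ v := by rintro rfl; exact hu hv
    rw [hc', Function.update_of_ne huv]
    exact hcOk u hu
  have hsub : (Finset.univ.filter (fun p : V × V =>
        p.1 ≠ p.2 ∧ 1 < Nat.gcd (α p.1) (α p.2) ∧ c p.1 ≠ c p.2)) ⊆
      (Finset.univ.filter (fun p : V × V =>
        p.1 ≠ p.2 ∧ 1 < Nat.gcd (α p.1) (α p.2) ∧ c' p.1 ≠ c' p.2)) := by
    intro p hp
    obtain ⟨-, hne, hg, hcc⟩ := Finset.mem_filter.mp hp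
    refine Finset.mem_filter.mpr ⟨Finset.mem_univ _, hne, hg, ?_⟩
    by_cases h1 : p.1 = v
    · exfalso
      have h2v : p.2 ≠ v := by rw [← h1]; exact hne.symm
      have := hcon p.2 h2v (h1 ▸ hg)
      rw [h1] at hcc
      exact hcc this.symm
    · by_cases h2 : p.2 = v
      · exfalso
        have h1v : p.1 ≠ v := by rw [← h2]; exact hne
        have hg' : 1 < Nat.gcd (α v) (α p.1) := by
          rw [Nat.gcd_comm]; rw [h2] at hg; exact hg
        have := hcon p.1 h1v hg'
        rw [h2] at hcc
        exact hcc this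
      · rw [hc', Function.update_of_ne h1, Function.update_of_ne h2]
        exact hcc
  obtain ⟨w, hwv, hgw⟩ := tight_nbr α hWP v hv
  have hnew : (v, w) ∈ Finset.univ.filter (fun p : V × V =>
      p.1 ≠ p.2 ∧ 1 < Nat.gcd (α p.1) (α p.2) ∧ c' p.1 ≠ c' p.2) := by
    refine Finset.mem_filter.mpr ⟨Finset.mem_univ _, hwv.symm, hgw, ?_⟩
    have h1 : c' v = !(c v) := by rw [hc', Function.update_self]
    have h2 : c' w = c w := by rw [hc', Function.update_of_ne hwv]
    have h3 : c w = c v := hcon w hwv hgw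
    rw [h1, h2, h3]
    simp
  have hold : (v, w) ∉ Finset.univ.filter (fun p : V × V =>
      p.1 ≠ p.2 ∧ 1 < Nat.gcd (α p.1) (α p.2) ∧ c p.1 ≠ c p.2) := by
    intro hmem
    obtain ⟨-, -, -, hcc⟩ := Finset.mem_filter.mp hmem
    exact hcc (hcon w hwv hgw).symm
  have hss := Finset.card_lt_card
    ((Finset.ssubset_iff_of_subset hsub).mpr ⟨(v, w), hnew, hold⟩)
  have := hcmax c' hc'mem
  omega

/-- The key property of a part of the coloring. -/
lemma part_key (α : V → ℕ) (hWP : WPSystem α) (c : V → Bool)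
    (hopp : ∀ v, TightP α v → ∃ w, w ≠ v ∧ 1 < Nat.gcd (α v) (α w) ∧ c w ≠ c v)
    (b : Bool) :
    ∀ v ∈ Finset.univ.filter (fun u => c u = b),
      2 * Nat.gcd (α v)
        (((Finset.univ.filter (fun u => c u = b)).erase v).lcm α) ≤ α v := by
  intro v hv
  set F := (Finset.univ.filter (fun u => c u = b)).erase v with hF
  have hvF : v ∉ F := Finset.notMem_erase _ _
  have hgdvd : Nat.gcd (α v) (F.lcm α) ∣ α v := Nat.gcd_dvd_left _ _
  refine two_mul_le_of_proper_dvd hgdvd ?_ (by have := hWP.1 v; omega)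
  intro heq
  have hPdvd : (∏ u ∈ F, Nat.gcd (α v) (α u)) ∣ α v :=
    prod_gcd_dvd α hWP F hvF (fun u _ => Nat.gcd_dvd_left _ _)
  have hP : (∏ u ∈ F, Nat.gcd (α v) (α u)) = α v := by
    have h1 : α v ∣ ∏ u ∈ F, Nat.gcd (α v) (α u) :=
      (dvd_of_eq heq.symm).trans (gcd_lcm_dvd_prod α (α v) F)
    exact Nat.dvd_antisymm hPdvd h1
  by_cases ht : TightP α v
  · obtain ⟨w, hwv, hgw, hcw⟩ := hopp v ht
    have hcv : c v = b := (Finset.mem_filter.mp hv).2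
    have hwF : w ∉ F := by
      intro hw
      have hcwb : c w = b := (Finset.mem_filter.mp (Finset.mem_of_mem_erase hw)).2
      exact hcw (hcwb.trans hcv.symm)
    have hcop : Nat.Coprime (Nat.gcd (α v) (α w)) (∏ u ∈ F, Nat.gcd (α v) (α u)) :=
      Nat.Coprime.prod_right fun u hu =>
        gcd_gcd_coprime α hWP hwv (Finset.mem_erase.mp hu).1
          (fun h => hwF (h ▸ hu))
    have hdvd : Nat.gcd (α v) (α w) * (∏ u ∈ F, Nat.gcd (α v) (α u)) ∣ α v :=
      hcop.mul_dvd_of_dvd_of_dvd (Nat.gcd_dvd_left _ _) hPdvd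
    rw [hP] at hdvd
    have hle := Nat.le_of_dvd (by have := hWP.1 v; omega) hdvd
    nlinarith [hWP.1 v]
  · have hQdvd : (∏ u ∈ Finset.univ.erase v, Nat.gcd (α v) (α u)) ∣ α v :=
      prod_gcd_dvd α hWP _ (Finset.notMem_erase _ _) (fun u _ => Nat.gcd_dvd_left _ _)
    have hPQ : (∏ u ∈ F, Nat.gcd (α v) (α u)) ∣
        ∏ u ∈ Finset.univ.erase v, Nat.gcd (α v) (α u) :=
      Finset.prod_dvd_prod_of_subset _ _ _
        (Finset.erase_subset_erase _ (Finset.subset_univ _))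
    exact ht (Nat.dvd_antisymm hQdvd ((dvd_of_eq hP.symm).trans hPQ))

end Main

/-- a WCI-graph of codimension `2` and bidegree `(d₁, d₂)` splits
into two parts `V₁ ⊔ V₂` with `Σ_{V₁} α ≤ d₁` and `Σ_{V₂} α ≤ d₂`. -/
theorem stmt9 {V : Type} [Fintype V] [DecidableEq V] (α : V → ℕ)
    (hWP : WPSystem α) (d₁ d₂ : ℕ) (hd₁ : 0 < d₁) (hd₂ : 0 < d₂)
    (ha : ∀ v : V, α v ∣ d₁ ∨ α v ∣ d₂)
    (hb : ∀ v w : V, v ≠ w → 1 < Nat.gcd (α v) (α w) →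
      Nat.gcd (α v) (α w) ∣ d₁ ∧ Nat.gcd (α v) (α w) ∣ d₂) :
    ∃ V₁ V₂ : Finset V, Disjoint V₁ V₂ ∧ V₁ ∪ V₂ = Finset.univ ∧
      (∑ v ∈ V₁, α v) ≤ d₁ ∧ (∑ v ∈ V₂, α v) ≤ d₂ := by
  classical
  obtain ⟨c, hcbase, hcopp⟩ := coloring_exists α hWP (fun v => decide (α v ∣ d₁))
  have hdvd1 : ∀ v, c v = true → α v ∣ d₁ := by
    intro v hcv
    by_cases ht : TightP α v
    · exact tight_dvd α hWP v ht (fun u hu hg => (hb v u (Ne.symm hu) hg).1)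
    · have h := hcbase v ht
      rw [hcv] at h
      exact of_decide_eq_true h.symm
  have hdvd2 : ∀ v, c v = false → α v ∣ d₂ := by
    intro v hcv
    by_cases ht : TightP α v
    · exact tight_dvd α hWP v ht (fun u hu hg => (hb v u (Ne.symm hu) hg).2)
    · have h := hcbase v ht
      rw [hcv] at h
      have hnd : ¬ (α v ∣ d₁) := of_decide_eq_false h.symm
      exact (ha v).resolve_left hnd
  refine ⟨Finset.univ.filter (fun v => c v = true),
    Finset.univ.filter (fun v => c v = false), ?_, ?_, ?_, ?_⟩
  · rw [Finset.disjoint_left]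
    intro a ha1 ha2
    have h1 := (Finset.mem_filter.mp ha1).2
    have h2 := (Finset.mem_filter.mp ha2).2
    rw [h1] at h2
    exact Bool.noConfusion h2
  · ext v
    simp only [Finset.mem_union, Finset.mem_filter, Finset.mem_univ, true_and]
    cases hc : c v <;> simp
  · refine le_trans (sum_le_lcm α _ (fun v _ => hWP.1 v)
      (part_key α hWP c hcopp true)) ?_
    exact Nat.le_of_dvd hd₁ (Finset.lcm_dvd fun v hv =>
      hdvd1 v (Finset.mem_filter.mp hv).2)
  · refine le_trans (sum_le_lcm α _ (fun v _ => hWP.1 v)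
      (part_key α hWP c hcopp false)) ?_
    exact Nat.le_of_dvd hd₂ (Finset.lcm_dvd fun v hv =>
      hdvd2 v (Finset.mem_filter.mp hv).2)
end

section
/- Let a_0, …, a_n and d₁, d₂ be positive integers such that: (1) for any three distinct indices i₁, i₂, i₃, gcd(a_{i₁}, a_{i₂}, a_{i₃}) = 1; (2) for every index i with a_i > 1, a_i divides d₁ or a_i divides d₂; (3) for any two distinct indices i, j with gcd(a_i, a_j) > 1, the number gcd(a_i, a_j) divides both d₁ and d₂; and (4) a_0 + a_1 + … + a_n > d₁ + d₂. Then there is a partition {0, 1, …, n} = S₀ ⊔ S₁ ⊔ S₂ into pairwise disjoint subsets such that ∑_{j ∈ S₁} a_j = d₁, ∑_{j ∈ S₂} a_j = d₂, S₀ is nonempty, and a_j = 1 for every j ∈ S₀. -/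
private lemma triple_gcd_eq_one {X Y Z : ℕ}
    (h : ∀ p : ℕ, p.Prime → p ∣ X → p ∣ Y → p ∣ Z → False) :
    Nat.gcd (Nat.gcd X Y) Z = 1 := by
  by_contra hg
  obtain ⟨p, pp, hpd⟩ := Nat.exists_prime_and_dvd hg
  exact h p pp ((hpd.trans (Nat.gcd_dvd_left _ _)).trans (Nat.gcd_dvd_left _ _))
    ((hpd.trans (Nat.gcd_dvd_left _ _)).trans (Nat.gcd_dvd_right _ _))
    (hpd.trans (Nat.gcd_dvd_right _ _))

private lemma prime_form {n : ℕ} (a : Fin (n+1) → ℕ)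
    (h1 : ∀ i j k : Fin (n + 1), i ≠ j → i ≠ k → j ≠ k →
      Nat.gcd (Nat.gcd (a i) (a j)) (a k) = 1) :
    ∀ p : ℕ, p.Prime → ∀ u v w : Fin (n+1), u ≠ v → u ≠ w → v ≠ w →
      p ∣ a u → p ∣ a v → p ∣ a w → False := by
  intro p pp u v w huv huw hvw pu pv pw
  have hd : p ∣ Nat.gcd (Nat.gcd (a u) (a v)) (a w) :=
    Nat.dvd_gcd (Nat.dvd_gcd pu pv) pw
  rw [h1 u v w huv huw hvw] at hd
  have := Nat.le_of_dvd one_pos hd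
  have := pp.two_le
  omega

private lemma add_le_lcm {x y : ℕ} (hx : 0 < x) (hy : 0 < y)
    (hxy : ¬ x ∣ y) (hyx : ¬ y ∣ x) : x + y ≤ Nat.lcm x y := by
  set g := Nat.gcd x y with hg
  have hg0 : 0 < g := Nat.gcd_pos_of_pos_left _ hx
  obtain ⟨u, hu⟩ : g ∣ x := Nat.gcd_dvd_left x y
  obtain ⟨v, hv⟩ : g ∣ y := Nat.gcd_dvd_right x y
  have hu2 : 2 ≤ u := by
    have h0 : u ≠ 0 := by rintro rfl; rw [mul_zero] at hu; omega
    have h1 : u ≠ 1 := by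
      rintro rfl; rw [mul_one] at hu
      exact hxy (hu ▸ Nat.gcd_dvd_right x y)
    omega
  have hv2 : 2 ≤ v := by
    have h0 : v ≠ 0 := by rintro rfl; rw [mul_zero] at hv; omega
    have h1 : v ≠ 1 := by
      rintro rfl; rw [mul_one] at hv
      exact hyx (hv ▸ Nat.gcd_dvd_left x y)
    omega
  have hlcm : g * Nat.lcm x y = g * (g * (u * v)) := by
    rw [Nat.gcd_mul_lcm, hu, hv]; ring
  have hlcm' : Nat.lcm x y = g * (u * v) := Nat.eq_of_mul_eq_mul_left hg0 hlcm
  rw [hlcm', hu, hv]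
  calc g * u + g * v = g * (u + v) := by ring
    _ ≤ g * (u * v) := Nat.mul_le_mul_left g (Nat.add_le_mul hu2 hv2)

private lemma sum_le_of_pairwise_coprime {n : ℕ} (d : ℕ) (hd : 0 < d)
    (a : Fin (n+1) → ℕ) (S : Finset (Fin (n+1)))
    (h2 : ∀ i ∈ S, 2 ≤ a i) (hdvd : ∀ i ∈ S, a i ∣ d)
    (hcop : ∀ i ∈ S, ∀ j ∈ S, i ≠ j → Nat.gcd (a i) (a j) = 1) :
    ∑ i ∈ S, a i ≤ d := by
  classical
  have key : ∀ S : Finset (Fin (n+1)), (∀ i ∈ S, 2 ≤ a i) → (∀ i ∈ S, a i ∣ d) →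
      (∀ i ∈ S, ∀ j ∈ S, i ≠ j → Nat.gcd (a i) (a j) = 1) →
      (∑ i ∈ S, a i ≤ ∏ i ∈ S, a i) ∧ (∏ i ∈ S, a i) ∣ d := by
    intro S
    induction S using Finset.induction with
    | empty => intro _ _ _; simp
    | @insert x s hx ih =>
      intro h2 hdvd hcop
      have ih' := ih (fun i hi => h2 i (Finset.mem_insert_of_mem hi))
        (fun i hi => hdvd i (Finset.mem_insert_of_mem hi))
        (fun i hi j hj hij => hcop i (Finset.mem_insert_of_mem hi) j
          (Finset.mem_insert_of_mem hj) hij)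
      have hxs2 : 2 ≤ a x := h2 x (Finset.mem_insert_self _ _)
      constructor
      · rw [Finset.sum_insert hx, Finset.prod_insert hx]
        rcases s.eq_empty_or_nonempty with rfl | ⟨e, he⟩
        · simp
        · have h2p : 2 ≤ ∏ i ∈ s, a i := by
            have h1 := Finset.single_le_prod' (f := a)
              (fun i hi => by have := h2 i (Finset.mem_insert_of_mem hi); omega) he
            have := h2 e (Finset.mem_insert_of_mem he)
            omega
          calc a x + ∑ i ∈ s, a i ≤ a x + ∏ i ∈ s, a i := by omega
            _ ≤ a x * ∏ i ∈ s, a i := Nat.add_le_mul hxs2 h2p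
      · rw [Finset.prod_insert hx]
        have hcopx : Nat.Coprime (a x) (∏ i ∈ s, a i) :=
          Nat.Coprime.prod_right (fun i hi => hcop x (Finset.mem_insert_self _ _) i
            (Finset.mem_insert_of_mem hi) (by rintro rfl; exact hx hi))
        exact Nat.Coprime.mul_dvd_of_dvd_of_dvd hcopx
          (hdvd x (Finset.mem_insert_self _ _)) ih'.2
  obtain ⟨hsp, hpd⟩ := key S h2 hdvd hcop
  exact hsp.trans (Nat.le_of_dvd hd hpd)

private lemma core_merged (n d₁ d₂ : ℕ) (hd₁ : 0 < d₁) (hd₂ : 0 < d₂)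
    (a : Fin (n+1) → ℕ) (hpos : ∀ i, 0 < a i)
    (h1 : ∀ i j k : Fin (n + 1), i ≠ j → i ≠ k → j ≠ k →
      Nat.gcd (Nat.gcd (a i) (a j)) (a k) = 1)
    (h2 : ∀ i, 1 < a i → a i ∣ d₁ ∨ a i ∣ d₂)
    (h3 : ∀ i j : Fin (n + 1), i ≠ j → 1 < Nat.gcd (a i) (a j) →
      Nat.gcd (a i) (a j) ∣ d₁ ∧ Nat.gcd (a i) (a j) ∣ d₂)
    (M : ∀ x y : Fin (n+1), x ≠ y → 1 < Nat.gcd (a x) (a y) →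
      ((a x ∣ d₁ ∧ a y ∣ d₁) ∨ (a x ∣ d₂ ∧ a y ∣ d₂)) → a x ∣ a y ∨ a y ∣ a x) :
    ∃ T₁ T₂ : Finset (Fin (n+1)), Disjoint T₁ T₂ ∧
      T₁ ∪ T₂ = Finset.univ.filter (fun i => 1 < a i) ∧
      (∑ i ∈ T₁, a i) ≤ d₁ ∧ (∑ i ∈ T₂, a i) ≤ d₂ := by
  classical
  have hp1 := prime_form a h1
  set Big := Finset.univ.filter (fun i => 1 < a i) with hBigdef
  set Q : Fin (n+1) → Prop := fun i =>
    ¬ a i ∣ d₁ ∨ (a i ∣ d₂ ∧ ∃ j, j ≠ i ∧ a i ∣ a j ∧ a j ∣ d₁ ∧ 1 < a j ∧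
      (a i < a j ∨ j < i)) with hQdef
  set T₂ := Big.filter Q with hT₂def
  set T₁ := Big \ T₂ with hT₁def
  have hT₂ : ∀ i, i ∈ T₂ ↔ (1 < a i ∧ Q i) := by
    intro i; simp [hT₂def, hBigdef]
  have hT₁ : ∀ i, i ∈ T₁ ↔ (1 < a i ∧ ¬ Q i) := by
    intro i; simp [hT₁def, hT₂def, hBigdef]; tauto
  have c1 : ∀ i ∈ T₁, a i ∣ d₁ := by
    intro i hi
    obtain ⟨hbi, hQi⟩ := (hT₁ i).1 hi
    by_contra hnd
    exact hQi (Or.inl hnd)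
  have c2 : ∀ i ∈ T₂, a i ∣ d₂ := by
    intro i hi
    obtain ⟨hbi, hQi⟩ := (hT₂ i).1 hi
    rcases hQi with h | h
    · rcases h2 i hbi with h' | h'
      · exact absurd h' h
      · exact h'
    · exact h.1
  have keyT₁ : ∀ i j, i ∈ T₁ → j ∈ T₁ → i ≠ j → a i ∣ a j → False := by
    intro i j hi hj hij hdvd
    obtain ⟨hbi, hQi⟩ := (hT₁ i).1 hi
    obtain ⟨hbj, hQj⟩ := (hT₁ j).1 hj
    have hid₁ : a i ∣ d₁ := c1 i hi
    have hjd₁ : a j ∣ d₁ := c1 j hj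
    have hgcd : Nat.gcd (a i) (a j) = a i := Nat.gcd_eq_left hdvd
    have hid₂ : a i ∣ d₂ := by
      have := (h3 i j hij (by rw [hgcd]; exact hbi)).2
      rwa [hgcd] at this
    rcases Nat.lt_or_ge (a i) (a j) with hlt | hge
    · exact hQi (Or.inr ⟨hid₂, j, hij.symm, hdvd, hjd₁, hbj, Or.inl hlt⟩)
    · have heq : a i = a j := le_antisymm (Nat.le_of_dvd (hpos j) hdvd) hge
      rcases lt_trichotomy i j with h | h | h
      · refine hQj (Or.inr ⟨by rw [← heq]; exact hid₂, i, hij, by rw [heq], hid₁, hbi, Or.inr h⟩)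
      · exact hij h
      · exact hQi (Or.inr ⟨hid₂, j, hij.symm, hdvd, hjd₁, hbj, Or.inr h⟩)
  have keyT₂ : ∀ i j, i ∈ T₂ → j ∈ T₂ → i ≠ j → a i ∣ a j → False := by
    intro i j hi hj hij hdvd
    obtain ⟨hbi, hQi⟩ := (hT₂ i).1 hi
    obtain ⟨hbj, hQj⟩ := (hT₂ j).1 hj
    have hgcd : Nat.gcd (a i) (a j) = a i := Nat.gcd_eq_left hdvd
    have hid₁ : a i ∣ d₁ := by
      have := (h3 i j hij (by rw [hgcd]; exact hbi)).1
      rwa [hgcd] at this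
    have hQi' : ∃ k, k ≠ i ∧ a i ∣ a k ∧ a k ∣ d₁ ∧ 1 < a k ∧ (a i < a k ∨ k < i) := by
      rcases hQi with h | h
      · exact absurd hid₁ h
      · exact h.2
    obtain ⟨k, hki, hik, hkd₁, hbk, hlt⟩ := hQi'
    obtain ⟨p, pp, hpi⟩ := Nat.exists_prime_and_dvd (show a i ≠ 1 by omega)
    by_cases hkj : k = j
    · rw [hkj] at hik hkd₁ hbk hlt
      have hQj' : ∃ m, m ≠ j ∧ a j ∣ a m ∧ a m ∣ d₁ ∧ 1 < a m ∧ (a j < a m ∨ m < j) := by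
        rcases hQj with h | h
        · exact absurd hkd₁ h
        · exact h.2
      obtain ⟨m, hmj, hjm, hmd₁, hbm, hlt'⟩ := hQj'
      by_cases hmi : m = i
      · rw [hmi] at hjm hmd₁ hbm hlt'
        have heq : a i = a j := Nat.dvd_antisymm hdvd hjm
        have h1' : j < i := by
          rcases hlt with h | h
          · omega
          · exact h
        have h2' : i < j := by
          rcases hlt' with h | h
          · omega
          · exact h
        exact absurd h2' (not_lt.mpr h1'.le)
      · exact hp1 p pp i j m hij (Ne.symm hmi) (Ne.symm hmj) hpi (hpi.trans hdvd)
          (hpi.trans (hdvd.trans hjm))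
    · exact hp1 p pp i j k hij (Ne.symm hki) (Ne.symm hkj) hpi (hpi.trans hdvd)
        (hpi.trans hik)
  have gcdpos : ∀ i j : Fin (n+1), 0 < Nat.gcd (a i) (a j) :=
    fun i j => Nat.gcd_pos_of_pos_left _ (hpos i)
  have copT₁ : ∀ i ∈ T₁, ∀ j ∈ T₁, i ≠ j → Nat.gcd (a i) (a j) = 1 := by
    intro i hi j hj hij
    by_contra hg
    have hg1 : 1 < Nat.gcd (a i) (a j) := by have := gcdpos i j; omega
    rcases M i j hij hg1 (Or.inl ⟨c1 i hi, c1 j hj⟩) with h | h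
    · exact keyT₁ i j hi hj hij h
    · exact keyT₁ j i hj hi hij.symm h
  have copT₂ : ∀ i ∈ T₂, ∀ j ∈ T₂, i ≠ j → Nat.gcd (a i) (a j) = 1 := by
    intro i hi j hj hij
    by_contra hg
    have hg1 : 1 < Nat.gcd (a i) (a j) := by have := gcdpos i j; omega
    rcases M i j hij hg1 (Or.inr ⟨c2 i hi, c2 j hj⟩) with h | h
    · exact keyT₂ i j hi hj hij h
    · exact keyT₂ j i hj hi hij.symm h
  refine ⟨T₁, T₂, Finset.sdiff_disjoint, Finset.sdiff_union_of_subset (Finset.filter_subset _ _),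
    ?_, ?_⟩
  · exact sum_le_of_pairwise_coprime d₁ hd₁ a T₁
      (fun i hi => by have := ((hT₁ i).1 hi).1; omega) c1 copT₁
  · exact sum_le_of_pairwise_coprime d₂ hd₂ a T₂
      (fun i hi => by have := ((hT₂ i).1 hi).1; omega) c2 copT₂

private lemma core (n d₁ d₂ : ℕ) (hd₁ : 0 < d₁) (hd₂ : 0 < d₂) (N : ℕ)
    (a : Fin (n+1) → ℕ)
    (hcard : (Finset.univ.filter (fun i => 1 < a i)).card ≤ N)
    (hpos : ∀ i, 0 < a i)
    (h1 : ∀ i j k : Fin (n + 1), i ≠ j → i ≠ k → j ≠ k →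
      Nat.gcd (Nat.gcd (a i) (a j)) (a k) = 1)
    (h2 : ∀ i, 1 < a i → a i ∣ d₁ ∨ a i ∣ d₂)
    (h3 : ∀ i j : Fin (n + 1), i ≠ j → 1 < Nat.gcd (a i) (a j) →
      Nat.gcd (a i) (a j) ∣ d₁ ∧ Nat.gcd (a i) (a j) ∣ d₂) :
    ∃ T₁ T₂ : Finset (Fin (n+1)), Disjoint T₁ T₂ ∧
      T₁ ∪ T₂ = Finset.univ.filter (fun i => 1 < a i) ∧
      (∑ i ∈ T₁, a i) ≤ d₁ ∧ (∑ i ∈ T₂, a i) ≤ d₂ := by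
  classical
  induction N generalizing a with
  | zero =>
    apply core_merged n d₁ d₂ hd₁ hd₂ a hpos h1 h2 h3
    intro x y hxy hg _
    exfalso
    have hx : 1 < a x := lt_of_lt_of_le hg (Nat.le_of_dvd (hpos x) (Nat.gcd_dvd_left _ _))
    have hmem : x ∈ Finset.univ.filter (fun i => 1 < a i) := by simp [hx]
    have := Finset.card_pos.mpr ⟨x, hmem⟩
    omega
  | succ N ih =>
    by_cases hEx : ∃ x y : Fin (n+1), x ≠ y ∧ 1 < Nat.gcd (a x) (a y) ∧
        ((a x ∣ d₁ ∧ a y ∣ d₁) ∨ (a x ∣ d₂ ∧ a y ∣ d₂)) ∧ ¬ a x ∣ a y ∧ ¬ a y ∣ a x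
    · obtain ⟨x, y, hxy, hg, hside, hnd₁, hnd₂⟩ := hEx
      set L := Nat.lcm (a x) (a y) with hLdef
      have hax : 1 < a x := lt_of_lt_of_le hg (Nat.le_of_dvd (hpos x) (Nat.gcd_dvd_left _ _))
      have hay : 1 < a y := lt_of_lt_of_le hg (Nat.le_of_dvd (hpos y) (Nat.gcd_dvd_right _ _))
      have hL0 : 0 < L := Nat.pos_of_ne_zero (Nat.lcm_ne_zero (by omega) (by omega))
      have haxL : a x ∣ L := Nat.dvd_lcm_left _ _
      have hayL : a y ∣ L := Nat.dvd_lcm_right _ _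
      have hLbig : 1 < L := lt_of_lt_of_le hax (Nat.le_of_dvd hL0 haxL)
      have hLxy : L ∣ a x * a y := Nat.lcm_dvd (dvd_mul_right _ _) (dvd_mul_left _ _)
      have hsumL : a x + a y ≤ L := add_le_lcm (hpos x) (hpos y) hnd₁ hnd₂
      set a' : Fin (n+1) → ℕ :=
        fun u => if u = x then L else if u = y then 1 else a u with ha'def
      have ha'x : a' x = L := by simp [ha'def]
      have ha'y : a' y = 1 := by simp [ha'def, Ne.symm hxy]
      have ha'o : ∀ u, u ≠ x → u ≠ y → a' u = a u := by
        intro u h h'; simp [ha'def, h, h']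
      have hpos' : ∀ u, 0 < a' u := by
        intro u
        by_cases h : u = x
        · rw [h, ha'x]; exact hL0
        · by_cases h' : u = y
          · rw [h', ha'y]; omega
          · rw [ha'o u h h']; exact hpos u
      have hp1 := prime_form a h1
      have horig : ∀ p : ℕ, p.Prime → ∀ t, t ≠ y → p ∣ a' t →
          (p ∣ a t ∨ (t = x ∧ p ∣ a y)) := by
        intro p pp t hty hpt
        by_cases htx : t = x
        · rw [htx, ha'x] at hpt
          rcases (Nat.Prime.dvd_mul pp).mp (hpt.trans hLxy) with h | h
          · exact Or.inl (htx ▸ h)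
          · exact Or.inr ⟨htx, h⟩
        · rw [ha'o t htx hty] at hpt; exact Or.inl hpt
      have h1' : ∀ i j k : Fin (n+1), i ≠ j → i ≠ k → j ≠ k →
          Nat.gcd (Nat.gcd (a' i) (a' j)) (a' k) = 1 := by
        intro i j k hij hik hjk
        by_cases hiy : i = y
        · rw [hiy, ha'y]; simp
        by_cases hjy : j = y
        · rw [hjy, ha'y]; simp
        by_cases hky : k = y
        · rw [hky, ha'y]; simp
        apply triple_gcd_eq_one
        intro p pp pi pj pk
        rcases horig p pp i hiy pi with hi' | ⟨hix, hi'⟩ <;>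
          rcases horig p pp j hjy pj with hj' | ⟨hjx, hj'⟩ <;>
          rcases horig p pp k hky pk with hk' | ⟨hkx, hk'⟩
        · exact hp1 p pp i j k hij hik hjk hi' hj' hk'
        · exact hp1 p pp i j y hij hiy hjy hi' hj' hk'
        · exact hp1 p pp i y k hiy hik (Ne.symm hky) hi' hj' hk'
        · exact absurd (hjx.trans hkx.symm) hjk
        · exact hp1 p pp y j k (Ne.symm hjy) (Ne.symm hky) hjk hi' hj' hk'
        · exact absurd (hix.trans hkx.symm) hik
        · exact absurd (hix.trans hjx.symm) hij
        · exact absurd (hix.trans hjx.symm) hij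
      have h2' : ∀ u, 1 < a' u → a' u ∣ d₁ ∨ a' u ∣ d₂ := by
        intro u hu
        by_cases h : u = x
        · rw [h, ha'x] at *
          rcases hside with hs | hs
          · exact Or.inl (Nat.lcm_dvd hs.1 hs.2)
          · exact Or.inr (Nat.lcm_dvd hs.1 hs.2)
        · by_cases h' : u = y
          · rw [h', ha'y] at hu; omega
          · rw [ha'o u h h'] at *; exact h2 u hu
      have hnew : ∀ c : Fin (n+1), c ≠ x → c ≠ y →
          Nat.gcd L (a c) ∣ d₁ ∧ Nat.gcd L (a c) ∣ d₂ := by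
        intro c hcx hcy
        have hd : Nat.gcd L (a c) ∣ Nat.gcd (a x) (a c) * Nat.gcd (a y) (a c) := by
          have h1'' : Nat.gcd L (a c) ∣ Nat.gcd (a x * a y) (a c) :=
            Nat.dvd_gcd ((Nat.gcd_dvd_left _ _).trans hLxy) (Nat.gcd_dvd_right _ _)
          refine h1''.trans ?_
          have hmul := Nat.gcd_mul_right_dvd_mul_gcd (a c) (a x) (a y)
          rwa [Nat.gcd_comm (a c) (a x * a y), Nat.gcd_comm (a c) (a x),
            Nat.gcd_comm (a c) (a y)] at hmul
        have hcop : Nat.Coprime (Nat.gcd (a x) (a c)) (Nat.gcd (a y) (a c)) := by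
          by_contra h
          obtain ⟨p, pp, hpu, hpv⟩ := Nat.Prime.not_coprime_iff_dvd.mp h
          exact hp1 p pp x y c hxy (Ne.symm hcx) (Ne.symm hcy)
            (hpu.trans (Nat.gcd_dvd_left _ _)) (hpv.trans (Nat.gcd_dvd_left _ _))
            (hpu.trans (Nat.gcd_dvd_right _ _))
        have hg₁ : Nat.gcd (a x) (a c) ∣ d₁ ∧ Nat.gcd (a x) (a c) ∣ d₂ := by
          by_cases h : 1 < Nat.gcd (a x) (a c)
          · exact h3 x c (Ne.symm hcx) h
          · have hpos'' : 0 < Nat.gcd (a x) (a c) := Nat.gcd_pos_of_pos_left _ (hpos x)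
            have : Nat.gcd (a x) (a c) = 1 := by omega
            rw [this]; exact ⟨one_dvd _, one_dvd _⟩
        have hg₂ : Nat.gcd (a y) (a c) ∣ d₁ ∧ Nat.gcd (a y) (a c) ∣ d₂ := by
          by_cases h : 1 < Nat.gcd (a y) (a c)
          · exact h3 y c (Ne.symm hcy) h
          · have hpos'' : 0 < Nat.gcd (a y) (a c) := Nat.gcd_pos_of_pos_left _ (hpos y)
            have : Nat.gcd (a y) (a c) = 1 := by omega
            rw [this]; exact ⟨one_dvd _, one_dvd _⟩
        exact ⟨hd.trans (Nat.Coprime.mul_dvd_of_dvd_of_dvd hcop hg₁.1 hg₂.1),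
          hd.trans (Nat.Coprime.mul_dvd_of_dvd_of_dvd hcop hg₁.2 hg₂.2)⟩
      have h3' : ∀ u v : Fin (n+1), u ≠ v → 1 < Nat.gcd (a' u) (a' v) →
          Nat.gcd (a' u) (a' v) ∣ d₁ ∧ Nat.gcd (a' u) (a' v) ∣ d₂ := by
        intro u v huv hguv
        by_cases huy : u = y
        · rw [huy, ha'y] at hguv; simp at hguv
        by_cases hvy : v = y
        · rw [hvy, ha'y] at hguv; simp at hguv
        by_cases hux : u = x
        · by_cases hvx : v = x
          · exact absurd (hux.trans hvx.symm) huv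
          · rw [hux, ha'x, ha'o v hvx hvy]
            exact hnew v hvx hvy
        · by_cases hvx : v = x
          · rw [hvx, ha'x, ha'o u hux huy, Nat.gcd_comm]
            exact hnew u hux huy
          · rw [ha'o u hux huy, ha'o v hvx hvy] at *
            exact h3 u v huv hguv
      have hymem : y ∈ Finset.univ.filter (fun u => 1 < a u) := by simp [hay]
      have hBig' : Finset.univ.filter (fun u => 1 < a' u) =
          (Finset.univ.filter (fun u => 1 < a u)).erase y := by
        ext u
        simp only [Finset.mem_filter, Finset.mem_erase, Finset.mem_univ, true_and]
        by_cases hux : u = x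
        · rw [hux, ha'x]
          exact ⟨fun _ => ⟨hxy, hax⟩, fun _ => hLbig⟩
        · by_cases huy : u = y
          · rw [huy, ha'y]; simp
          · rw [ha'o u hux huy]; tauto
      have hcard' : (Finset.univ.filter (fun u => 1 < a' u)).card ≤ N := by
        rw [hBig', Finset.card_erase_of_mem hymem]
        omega
      obtain ⟨T₁', T₂', hdisj, hcover, hs₁, hs₂⟩ := ih a' hcard' hpos' h1' h2' h3'
      have hyT : y ∉ T₁' ∪ T₂' := by
        rw [hcover, hBig']; exact Finset.notMem_erase _ _
      have hyT₁ : y ∉ T₁' := fun h => hyT (Finset.mem_union_left _ h)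
      have hyT₂ : y ∉ T₂' := fun h => hyT (Finset.mem_union_right _ h)
      have hxT : x ∈ T₁' ∪ T₂' := by
        rw [hcover, hBig']
        exact Finset.mem_erase.mpr ⟨hxy, by simp [hax]⟩
      rcases Finset.mem_union.mp hxT with hxT₁ | hxT₂
      · refine ⟨insert y T₁', T₂', ?_, ?_, ?_, ?_⟩
        · rw [Finset.disjoint_left]
          intro u hu hu'
          rcases Finset.mem_insert.mp hu with rfl | hu''
          · exact hyT₂ hu'
          · exact Finset.disjoint_left.mp hdisj hu'' hu'
        · rw [Finset.insert_union, hcover, hBig', Finset.insert_erase hymem]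
        · have hxnot : x ∉ T₁'.erase x := Finset.notMem_erase _ _
          have hT₁'eq : T₁' = insert x (T₁'.erase x) := (Finset.insert_erase hxT₁).symm
          have hsum_a : ∑ u ∈ T₁', a u = a x + ∑ u ∈ T₁'.erase x, a u := by
            conv_lhs => rw [hT₁'eq]
            rw [Finset.sum_insert hxnot]
          have hsum_a' : ∑ u ∈ T₁', a' u = L + ∑ u ∈ T₁'.erase x, a' u := by
            conv_lhs => rw [hT₁'eq]
            rw [Finset.sum_insert hxnot, ha'x]
          have hcongr : ∑ u ∈ T₁'.erase x, a' u = ∑ u ∈ T₁'.erase x, a u := by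
            apply Finset.sum_congr rfl
            intro u hu
            have hux : u ≠ x := Finset.ne_of_mem_erase hu
            have huy : u ≠ y := by rintro rfl; exact hyT₁ (Finset.mem_of_mem_erase hu)
            exact ha'o u hux huy
          rw [Finset.sum_insert hyT₁, hsum_a]
          rw [hsum_a', hcongr] at hs₁
          omega
        · have hcongr : ∑ u ∈ T₂', a u = ∑ u ∈ T₂', a' u := by
            apply Finset.sum_congr rfl
            intro u hu
            have hux : u ≠ x := by rintro rfl; exact Finset.disjoint_left.mp hdisj hxT₁ hu
            have huy : u ≠ y := by rintro rfl; exact hyT₂ hu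
            exact (ha'o u hux huy).symm
          rw [hcongr]; exact hs₂
      · refine ⟨T₁', insert y T₂', ?_, ?_, ?_, ?_⟩
        · rw [Finset.disjoint_right]
          intro u hu hu'
          rcases Finset.mem_insert.mp hu with rfl | hu''
          · exact hyT₁ hu'
          · exact Finset.disjoint_left.mp hdisj hu' hu''
        · rw [Finset.union_insert, hcover, hBig', Finset.insert_erase hymem]
        · have hcongr : ∑ u ∈ T₁', a u = ∑ u ∈ T₁', a' u := by
            apply Finset.sum_congr rfl
            intro u hu
            have hux : u ≠ x := by rintro rfl; exact Finset.disjoint_left.mp hdisj hu hxT₂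
            have huy : u ≠ y := by rintro rfl; exact hyT₁ hu
            exact (ha'o u hux huy).symm
          rw [hcongr]; exact hs₁
        · have hxnot : x ∉ T₂'.erase x := Finset.notMem_erase _ _
          have hT₂'eq : T₂' = insert x (T₂'.erase x) := (Finset.insert_erase hxT₂).symm
          have hsum_a : ∑ u ∈ T₂', a u = a x + ∑ u ∈ T₂'.erase x, a u := by
            conv_lhs => rw [hT₂'eq]
            rw [Finset.sum_insert hxnot]
          have hsum_a' : ∑ u ∈ T₂', a' u = L + ∑ u ∈ T₂'.erase x, a' u := by
            conv_lhs => rw [hT₂'eq]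
            rw [Finset.sum_insert hxnot, ha'x]
          have hcongr : ∑ u ∈ T₂'.erase x, a' u = ∑ u ∈ T₂'.erase x, a u := by
            apply Finset.sum_congr rfl
            intro u hu
            have hux : u ≠ x := Finset.ne_of_mem_erase hu
            have huy : u ≠ y := by rintro rfl; exact hyT₂ (Finset.mem_of_mem_erase hu)
            exact ha'o u hux huy
          rw [Finset.sum_insert hyT₂, hsum_a]
          rw [hsum_a', hcongr] at hs₂
          omega
    · apply core_merged n d₁ d₂ hd₁ hd₂ a hpos h1 h2 h3
      intro u v huv hg hside
      by_contra hM
      push_neg at hM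
      exact hEx ⟨u, v, huv, hg, hside, hM.1, hM.2⟩

/-- arithmetic core of the main theorem. Given positive integers
`a₀, …, aₙ, d₁, d₂` with (1) any three of the `aᵢ` coprime, (2) every `aᵢ > 1`
dividing `d₁` or `d₂`, (3) `gcd(aᵢ, aⱼ) > 1` dividing both `d₁` and `d₂`, and
(4) `Σ aᵢ > d₁ + d₂`, there is a nice nef partition `S₀ ⊔ S₁ ⊔ S₂`. -/
theorem stmt10 (n : ℕ) (a : Fin (n + 1) → ℕ) (d₁ d₂ : ℕ)
    (hapos : ∀ i, 0 < a i) (hd₁ : 0 < d₁) (hd₂ : 0 < d₂)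
    (h1 : ∀ i j k : Fin (n + 1), i ≠ j → i ≠ k → j ≠ k →
      Nat.gcd (Nat.gcd (a i) (a j)) (a k) = 1)
    (h2 : ∀ i, 1 < a i → a i ∣ d₁ ∨ a i ∣ d₂)
    (h3 : ∀ i j : Fin (n + 1), i ≠ j → 1 < Nat.gcd (a i) (a j) →
      Nat.gcd (a i) (a j) ∣ d₁ ∧ Nat.gcd (a i) (a j) ∣ d₂)
    (h4 : d₁ + d₂ < ∑ i, a i) :
    ∃ S₀ S₁ S₂ : Finset (Fin (n + 1)),
      Disjoint S₀ S₁ ∧ Disjoint S₀ S₂ ∧ Disjoint S₁ S₂ ∧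
      S₀ ∪ S₁ ∪ S₂ = Finset.univ ∧
      (∑ j ∈ S₁, a j) = d₁ ∧ (∑ j ∈ S₂, a j) = d₂ ∧
      S₀.Nonempty ∧ ∀ j ∈ S₀, a j = 1 := by
  classical
  obtain ⟨T₁, T₂, hdisj, hcover, hs₁, hs₂⟩ :=
    core n d₁ d₂ hd₁ hd₂ (Finset.univ.filter (fun i => 1 < a i)).card a le_rfl hapos h1 h2 h3
  set Big := Finset.univ.filter (fun i => 1 < a i) with hBig
  set Ones := Finset.univ.filter (fun i => a i = 1) with hOnes
  have hsplit : (Finset.univ : Finset (Fin (n+1))) = Big ∪ Ones := by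
    ext u
    have hu := hapos u
    simp only [hBig, hOnes, Finset.mem_union, Finset.mem_filter, Finset.mem_univ, true_and,
      true_iff]
    omega
  have hdisjBO : Disjoint Big Ones := by
    rw [Finset.disjoint_left]
    intro u hu hu'
    simp only [hBig, Finset.mem_filter, Finset.mem_univ, true_and] at hu
    simp only [hOnes, Finset.mem_filter, Finset.mem_univ, true_and] at hu'
    omega
  have hOnesMem : ∀ i ∈ Ones, a i = 1 := by
    intro i hi
    simpa [hOnes] using hi
  have hOnesSum : ∀ O : Finset (Fin (n+1)), O ⊆ Ones → ∑ i ∈ O, a i = O.card := by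
    intro O hO
    rw [Finset.sum_congr rfl (fun i hi => hOnesMem i (hO hi))]
    simp
  have hT₁Big : T₁ ⊆ Big := hcover ▸ Finset.subset_union_left
  have hT₂Big : T₂ ⊆ Big := hcover ▸ Finset.subset_union_right
  have e1 : ∑ i ∈ Finset.univ, a i = ∑ i ∈ Big, a i + ∑ i ∈ Ones, a i := by
    rw [hsplit, Finset.sum_union hdisjBO]
  have e2 : ∑ i ∈ Big, a i = ∑ i ∈ T₁, a i + ∑ i ∈ T₂, a i := by
    rw [← hcover, Finset.sum_union hdisj]
  have e3 : ∑ i ∈ Ones, a i = Ones.card := hOnesSum Ones (subset_refl _)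
  have h4' : d₁ + d₂ < (∑ i ∈ T₁, a i) + (∑ i ∈ T₂, a i) + Ones.card := by
    have h4'' : d₁ + d₂ < ∑ i ∈ Finset.univ, a i := h4
    omega
  obtain ⟨O₁, hO₁sub, hO₁card⟩ :=
    Finset.exists_subset_card_eq (s := Ones) (n := d₁ - ∑ i ∈ T₁, a i) (by omega)
  obtain ⟨O₂, hO₂sub, hO₂card⟩ :=
    Finset.exists_subset_card_eq (s := Ones \ O₁) (n := d₂ - ∑ i ∈ T₂, a i)
      (by rw [Finset.card_sdiff_of_subset hO₁sub]; omega)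
  have hO₂Ones : O₂ ⊆ Ones := hO₂sub.trans (Finset.sdiff_subset)
  have hdT₁O₁ : Disjoint T₁ O₁ :=
    Finset.disjoint_of_subset_left hT₁Big (Finset.disjoint_of_subset_right hO₁sub hdisjBO)
  have hdT₂O₂ : Disjoint T₂ O₂ :=
    Finset.disjoint_of_subset_left hT₂Big (Finset.disjoint_of_subset_right hO₂Ones hdisjBO)
  refine ⟨Finset.univ \ ((T₁ ∪ O₁) ∪ (T₂ ∪ O₂)), T₁ ∪ O₁, T₂ ∪ O₂, ?_, ?_, ?_, ?_, ?_, ?_, ?_, ?_⟩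
  · exact Finset.disjoint_of_subset_right Finset.subset_union_left Finset.sdiff_disjoint
  · exact Finset.disjoint_of_subset_right Finset.subset_union_right Finset.sdiff_disjoint
  · rw [Finset.disjoint_left]
    intro u hu hu'
    rcases Finset.mem_union.mp hu with h | h <;> rcases Finset.mem_union.mp hu' with h' | h'
    · exact Finset.disjoint_left.mp hdisj h h'
    · exact Finset.disjoint_left.mp hdisjBO (hT₁Big h) (hO₂Ones h')
    · exact Finset.disjoint_left.mp hdisjBO (hT₂Big h') (hO₁sub h)
    · exact (Finset.mem_sdiff.mp (hO₂sub h')).2 h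
  · rw [Finset.union_assoc]
    exact Finset.sdiff_union_of_subset (Finset.subset_univ _)
  · rw [Finset.sum_union hdT₁O₁, hOnesSum O₁ hO₁sub, hO₁card]
    omega
  · rw [Finset.sum_union hdT₂O₂, hOnesSum O₂ hO₂Ones, hO₂card]
    omega
  · have hcard : 0 < (Ones \ (O₁ ∪ O₂)).card := by
      have hle := Finset.le_card_sdiff (O₁ ∪ O₂) Ones
      have hcu := Finset.card_union_le O₁ O₂
      omega
    obtain ⟨e, he⟩ := Finset.card_pos.mp hcard
    obtain ⟨heOnes, heNot⟩ := Finset.mem_sdiff.mp he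
    refine ⟨e, Finset.mem_sdiff.mpr ⟨Finset.mem_univ _, ?_⟩⟩
    intro hmem
    rcases Finset.mem_union.mp hmem with h | h
    · rcases Finset.mem_union.mp h with h' | h'
      · exact Finset.disjoint_left.mp hdisjBO (hT₁Big h') heOnes
      · exact heNot (Finset.mem_union_left _ h')
    · rcases Finset.mem_union.mp h with h' | h'
      · exact Finset.disjoint_left.mp hdisjBO (hT₂Big h') heOnes
      · exact heNot (Finset.mem_union_right _ h')
  · intro j hj
    obtain ⟨-, hjnot⟩ := Finset.mem_sdiff.mp hj
    have hjBig : j ∉ Big := by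
      intro h
      rw [← hcover] at h
      rcases Finset.mem_union.mp h with h' | h'
      · exact hjnot (Finset.mem_union_left _ (Finset.mem_union_left _ h'))
      · exact hjnot (Finset.mem_union_right _ (Finset.mem_union_left _ h'))
    simp only [hBig, Finset.mem_filter, Finset.mem_univ, true_and, not_lt] at hjBig
    have := hapos j
    omega
end

section
/- Let a_0, …, a_n and d be positive integers such that: (1) for any two distinct indices i, j with a_i > 1 and a_j > 1, gcd(a_i, a_j) = 1; (2) for every index i with a_i > 1, a_i divides d; and (3) a_0 + a_1 + … + a_n > d. Then there is a partition {0, 1, …, n} = S₀ ⊔ S₁ into disjoint subsets such that ∑_{j ∈ S₁} a_j = d, S₀ is nonempty, and a_j = 1 for every j ∈ S₀. -/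
private lemma sum_le_prod_of_two_le {ι : Type*} [DecidableEq ι] (s : Finset ι) (f : ι → ℕ)
    (hf : ∀ i ∈ s, 2 ≤ f i) : ∑ i ∈ s, f i ≤ ∏ i ∈ s, f i := by
  induction s using Finset.induction_on with
  | empty => simp
  | @insert i s hx ih =>
    rw [Finset.sum_insert hx, Finset.prod_insert hx]
    rcases s.eq_empty_or_nonempty with rfl | ⟨j, hj⟩
    · simp
    · have hP : 2 ≤ ∏ k ∈ s, f k :=
        le_trans (hf j (Finset.mem_insert_of_mem hj))
          (Finset.single_le_prod' (fun k hk =>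
            le_trans one_le_two (hf k (Finset.mem_insert_of_mem hk))) hj)
      have hS := ih (fun k hk => hf k (Finset.mem_insert_of_mem hk))
      have hi : 2 ≤ f i := hf i (Finset.mem_insert_self i s)
      nlinarith

private lemma prod_dvd_nat {ι : Type*} [DecidableEq ι] (s : Finset ι) (f : ι → ℕ) (d : ℕ)
    (hcop : ∀ i ∈ s, ∀ j ∈ s, i ≠ j → Nat.Coprime (f i) (f j))
    (hdvd : ∀ i ∈ s, f i ∣ d) : ∏ i ∈ s, f i ∣ d := by
  induction s using Finset.induction_on with
  | empty => simpa using Nat.one_dvd d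
  | @insert i s hx ih =>
    rw [Finset.prod_insert hx]
    have hc : Nat.Coprime (f i) (∏ j ∈ s, f j) :=
      Nat.Coprime.prod_right fun j hj =>
        hcop i (Finset.mem_insert_self i s) j (Finset.mem_insert_of_mem hj)
          (by rintro rfl; exact hx hj)
    exact Nat.Coprime.mul_dvd_of_dvd_of_dvd hc (hdvd i (Finset.mem_insert_self i s))
      (ih (fun a ha b hb hab => hcop a (Finset.mem_insert_of_mem ha) b (Finset.mem_insert_of_mem hb) hab)
        (fun a ha => hdvd a (Finset.mem_insert_of_mem ha)))

/-- arithmetic core of the hypersurface case. Given positive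
integers `a₀, …, aₙ, d` with (1) nontrivial weights pairwise coprime, (2) every
`aᵢ > 1` dividing `d`, and (3) `Σ aᵢ > d`, there is a nice nef partition
`S₀ ⊔ S₁`. -/
theorem stmt11 (n : ℕ) (a : Fin (n + 1) → ℕ) (d : ℕ)
    (hapos : ∀ i, 0 < a i) (hd : 0 < d)
    (h1 : ∀ i j : Fin (n + 1), i ≠ j → 1 < a i → 1 < a j →
      Nat.gcd (a i) (a j) = 1)
    (h2 : ∀ i, 1 < a i → a i ∣ d)
    (h3 : d < ∑ i, a i) :
    ∃ S₀ S₁ : Finset (Fin (n + 1)),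
      Disjoint S₀ S₁ ∧ S₀ ∪ S₁ = Finset.univ ∧
      (∑ j ∈ S₁, a j) = d ∧
      S₀.Nonempty ∧ ∀ j ∈ S₀, a j = 1 := by
  classical
  set T : Finset (Fin (n + 1)) := Finset.univ.filter (fun i => 1 < a i) with hT
  have hTmem : ∀ i, i ∈ T ↔ 1 < a i := by intro i; simp [hT]
  have hprod : ∏ i ∈ T, a i ∣ d :=
    prod_dvd_nat T a d
      (fun i hi j hj hij => h1 i j hij ((hTmem i).1 hi) ((hTmem j).1 hj))
      (fun i hi => h2 i ((hTmem i).1 hi))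
  have hsumT : ∑ i ∈ T, a i ≤ d :=
    le_trans (sum_le_prod_of_two_le T a (fun i hi => (hTmem i).1 hi))
      (Nat.le_of_dvd hd hprod)
  set U : Finset (Fin (n + 1)) := Tᶜ with hU
  have hone : ∀ j ∈ U, a j = 1 := by
    intro j hj
    have h1' : ¬ 1 < a j := by simpa [hU, hTmem] using hj
    have := hapos j
    omega
  have hsumU : ∑ j ∈ U, a j = U.card := by
    rw [Finset.card_eq_sum_ones]
    exact Finset.sum_congr rfl hone
  have hdisjTU : Disjoint T U := by
    rw [hU]; exact disjoint_compl_right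
  have hsplit : ∑ i ∈ T, a i + ∑ j ∈ U, a j = ∑ i, a i := by
    rw [← Finset.sum_union hdisjTU]
    congr 1
    rw [hU]
    exact Finset.union_compl T
  have hmlt : d - ∑ i ∈ T, a i < U.card := by omega
  obtain ⟨V, hVU, hVcard⟩ := Finset.exists_subset_card_eq (s := U)
      (n := d - ∑ i ∈ T, a i) (by omega)
  refine ⟨U \ V, T ∪ V, ?_, ?_, ?_, ?_, fun j hj => hone j (Finset.mem_sdiff.1 hj).1⟩
  · rw [Finset.disjoint_union_right]
    exact ⟨(hdisjTU.symm.mono_left Finset.sdiff_subset), Finset.sdiff_disjoint⟩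
  · rw [Finset.union_comm T V, ← Finset.union_assoc,
      Finset.sdiff_union_of_subset hVU, hU]
    ext x; simp; tauto
  · have hdisj : Disjoint T V := hdisjTU.mono_right hVU
    rw [Finset.sum_union hdisj]
    have hV : ∑ j ∈ V, a j = V.card := by
      rw [Finset.card_eq_sum_ones]
      exact Finset.sum_congr rfl (fun j hj => hone j (hVU hj))
    omega
  · rw [← Finset.card_pos, Finset.card_sdiff_of_subset hVU]
    omega
end
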